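/- arXiv:1711.11218 — 7 statements merged into one kernel-verified Lean document; each statement's English description precedes it below -/
import Mathlib

section
/- Define g : ℝ → ℝ by g(s) = (1/s) ∫_{ℝⁿ} 1{x₁ + ⋯ + xₙ ≤ s} (⟨x, ∇f(x)⟩ + n·f(x)) dx for s ≠ 0, and g(0) = 0. Then g is a probability density of the sum S = X₁ + ⋯ + Xₙ: for every s ∈ ℝ, μ({x ∈ ℝⁿ : x₁ + ⋯ + xₙ ≤ s}) = ∫_{−∞}^{s} g(t) dt. -/
open MeasureTheory

set_option maxHeartbeats 1000000

private lemma aux_null {n : ℕ} (hn : 1 ≤ n) (c : ℝ) :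
    volume {x : EuclideanSpace ℝ (Fin n) | ∑ i, x i = c} = 0 := by
  classical
  set Sl : EuclideanSpace ℝ (Fin n) →ₗ[ℝ] ℝ :=
    { toFun := fun x => ∑ i, x i
      map_add' := by intro x y; simp [Finset.sum_add_distrib]
      map_smul' := by intro c x; simp [Finset.mul_sum] } with hSl
  have i0 : Fin n := ⟨0, hn⟩
  have hker : LinearMap.ker Sl ≠ ⊤ := by
    intro h
    have h1 : EuclideanSpace.single i0 (1:ℝ) ∈ LinearMap.ker Sl := by
      rw [h]; exact Submodule.mem_top
    rw [LinearMap.mem_ker] at h1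
    simp [hSl, EuclideanSpace.single_apply] at h1
  set x₀ : EuclideanSpace ℝ (Fin n) := EuclideanSpace.single i0 c with hx₀
  have hSx₀ : Sl x₀ = c := by simp [hSl, hx₀, EuclideanSpace.single_apply]
  have hset : {x : EuclideanSpace ℝ (Fin n) | ∑ i, x i = c}
      = (fun z => (-x₀) + z) ⁻¹' ((LinearMap.ker Sl : Submodule ℝ _) : Set (EuclideanSpace ℝ (Fin n))) := by
    ext z
    simp only [Set.mem_setOf_eq, Set.mem_preimage, SetLike.mem_coe, LinearMap.mem_ker, map_add,
      map_neg, hSx₀]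
    constructor
    · intro hz; have : Sl z = c := hz; rw [this]; ring
    · intro hz; have : -c + Sl z = 0 := hz
      have : Sl z = c := by linarith
      exact this
  rw [hset, measure_preimage_add]
  exact Measure.addHaar_submodule _ _ hker

private lemma aux_meas {n : ℕ} (t : ℝ) :
    MeasurableSet {y : EuclideanSpace ℝ (Fin n) | ∑ i, y i ≤ t} := by
  have hc : Continuous (fun y : EuclideanSpace ℝ (Fin n) => ∑ i, y i) := by fun_prop
  exact measurableSet_le hc.measurable measurable_const

private lemma aux_cont {n : ℕ} (hn : 1 ≤ n) (h : EuclideanSpace ℝ (Fin n) → ℝ)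
    (hh : Integrable h)
    (hnull : ∀ c : ℝ, volume {x : EuclideanSpace ℝ (Fin n) | ∑ i, x i = c} = 0) :
    Continuous (fun t : ℝ => ∫ x in {y : EuclideanSpace ℝ (Fin n) | ∑ i, y i ≤ t}, h x) := by
  rw [continuous_iff_continuousAt]
  intro t₀
  have hrw : ∀ t : ℝ, ∫ x in {y : EuclideanSpace ℝ (Fin n) | ∑ i, y i ≤ t}, h x
      = ∫ x, Set.indicator {y : EuclideanSpace ℝ (Fin n) | ∑ i, y i ≤ t} h x := fun t =>
    (integral_indicator (aux_meas t)).symm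
  simp only [hrw]
  apply continuousAt_of_dominated (bound := fun x => ‖h x‖)
  · exact Filter.Eventually.of_forall fun t =>
      (hh.aestronglyMeasurable.indicator (aux_meas t))
  · exact Filter.Eventually.of_forall fun t =>
      Filter.Eventually.of_forall fun x => norm_indicator_le_norm_self _ _
  · exact hh.norm
  · have hne : ∀ᵐ x : EuclideanSpace ℝ (Fin n), ∑ i, x i ≠ t₀ := by
      have := hnull t₀
      rw [ae_iff]
      simpa using this
    filter_upwards [hne] with x hx
    rcases lt_or_gt_of_ne hx with hlt | hgt
    · have hev : (fun t => Set.indicator {y : EuclideanSpace ℝ (Fin n) | ∑ i, y i ≤ t} h x)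
          =ᶠ[nhds t₀] fun _ => h x := by
        filter_upwards [Ioi_mem_nhds hlt] with t ht
        exact Set.indicator_of_mem (show x ∈ {y : EuclideanSpace ℝ (Fin n) | ∑ i, y i ≤ t} from by simp only [Set.mem_setOf_eq]; exact le_of_lt ht) h
      exact continuousAt_const.congr hev.symm
    · have hev : (fun t => Set.indicator {y : EuclideanSpace ℝ (Fin n) | ∑ i, y i ≤ t} h x)
          =ᶠ[nhds t₀] fun _ => (0:ℝ) := by
        filter_upwards [Iio_mem_nhds hgt] with t ht
        exact Set.indicator_of_notMem (show x ∉ {y : EuclideanSpace ℝ (Fin n) | ∑ i, y i ≤ t} from by simp only [Set.mem_setOf_eq]; exact not_le.mpr ht) h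
      exact continuousAt_const.congr hev.symm

private lemma aux_atBot {n : ℕ} (h : EuclideanSpace ℝ (Fin n) → ℝ) (hh : Integrable h) :
    Filter.Tendsto (fun t : ℝ => ∫ x in {y : EuclideanSpace ℝ (Fin n) | ∑ i, y i ≤ t}, h x)
      Filter.atBot (nhds 0) := by
  have hrw : ∀ t : ℝ, ∫ x in {y : EuclideanSpace ℝ (Fin n) | ∑ i, y i ≤ t}, h x
      = ∫ x, Set.indicator {y : EuclideanSpace ℝ (Fin n) | ∑ i, y i ≤ t} h x := fun t =>
    (integral_indicator (aux_meas t)).symm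
  simp only [hrw]
  have h0 : (0:ℝ) = ∫ x : EuclideanSpace ℝ (Fin n), (0:ℝ) := by simp
  rw [h0]
  apply tendsto_integral_filter_of_dominated_convergence (bound := fun x => ‖h x‖)
  · exact Filter.Eventually.of_forall fun t =>
      (hh.aestronglyMeasurable.indicator (aux_meas t))
  · exact Filter.Eventually.of_forall fun t =>
      Filter.Eventually.of_forall fun x => norm_indicator_le_norm_self _ _
  · exact hh.norm
  · apply Filter.Eventually.of_forall
    intro x
    apply Filter.Tendsto.congr' _ tendsto_const_nhds
    filter_upwards [Filter.Iio_mem_atBot (∑ i, x i)] with t ht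
    exact (Set.indicator_of_notMem (show x ∉ {y : EuclideanSpace ℝ (Fin n) | ∑ i, y i ≤ t} from by simp only [Set.mem_setOf_eq]; exact not_le.mpr ht) h).symm
private lemma aux_scale {n : ℕ} (h : EuclideanSpace ℝ (Fin n) → ℝ) {c : ℝ} (hc : 0 < c) (s : ℝ) :
    ∫ x in {y : EuclideanSpace ℝ (Fin n) | ∑ i, y i ≤ s}, h (c • x)
      = (c^n)⁻¹ * ∫ x in {y : EuclideanSpace ℝ (Fin n) | ∑ i, y i ≤ c * s}, h x := by
  rw [← integral_indicator (aux_meas s), ← integral_indicator (aux_meas (c*s))]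
  have hfold : ∀ x : EuclideanSpace ℝ (Fin n),
      Set.indicator {y : EuclideanSpace ℝ (Fin n) | ∑ i, y i ≤ s} (fun z => h (c • z)) x
      = Set.indicator {y : EuclideanSpace ℝ (Fin n) | ∑ i, y i ≤ c * s} h (c • x) := by
    intro x
    by_cases hx : ∑ i, x i ≤ s
    · rw [Set.indicator_of_mem (show x ∈ {y : EuclideanSpace ℝ (Fin n) | ∑ i, y i ≤ s} from hx),
        Set.indicator_of_mem]
      show ∑ i, (c • x) i ≤ c * s
      simp only [PiLp.smul_apply, smul_eq_mul, ← Finset.mul_sum]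
      exact mul_le_mul_of_nonneg_left hx hc.le
    · rw [Set.indicator_of_notMem
        (show x ∉ {y : EuclideanSpace ℝ (Fin n) | ∑ i, y i ≤ s} from hx),
        Set.indicator_of_notMem]
      show ¬ ∑ i, (c • x) i ≤ c * s
      simp only [PiLp.smul_apply, smul_eq_mul, ← Finset.mul_sum]
      intro hcon
      exact hx (le_of_mul_le_mul_left hcon hc)
  simp only [hfold]
  rw [MeasureTheory.Measure.integral_comp_smul volume
    (Set.indicator {y : EuclideanSpace ℝ (Fin n) | ∑ i, y i ≤ c * s} h) c,
    finrank_euclideanSpace_fin, smul_eq_mul, abs_of_nonneg (by positivity)]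

private lemma aux_key {n : ℕ} (hn : 1 ≤ n)
    (f D : EuclideanSpace ℝ (Fin n) → ℝ)
    (hf_diff : ContDiff ℝ 1 f)
    (hf_int : Integrable f) (hD_int : Integrable D) (hD_cont : Continuous D)
    (hD : ∀ y, D y = fderiv ℝ f y y + n * f y)
    {a b : ℝ} (s : ℝ) (ha : 0 < a) (hab : a ≤ b) :
    (∫ x in {y : EuclideanSpace ℝ (Fin n) | ∑ i, y i ≤ b * s}, f x)
      - (∫ x in {y : EuclideanSpace ℝ (Fin n) | ∑ i, y i ≤ a * s}, f x)
    = ∫ τ in Set.Ioc a b,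
        τ⁻¹ * (∫ x in {y : EuclideanSpace ℝ (Fin n) | ∑ i, y i ≤ τ * s}, D x) := by
  have hb : 0 < b := lt_of_lt_of_le ha hab
  set A : Set (EuclideanSpace ℝ (Fin n)) := {y | ∑ i, y i ≤ s} with hA
  have hAmeas : MeasurableSet A := aux_meas s
  have hpinv : ∀ {τ : ℝ}, τ ≠ 0 → τ^(n-1) * (τ^n)⁻¹ = τ⁻¹ := by
    intro τ hτ
    rw [show n = (n-1)+1 by omega, pow_succ]
    field_simp
    rw [Nat.add_sub_cancel]
  -- pointwise FTC in the scaling parameter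
  have ftc : ∀ x : EuclideanSpace ℝ (Fin n),
      (∫ τ in Set.Ioc a b, τ^(n-1) * D (τ • x)) = b^n * f (b • x) - a^n * f (a • x) := by
    intro x
    have h1 : ∀ τ : ℝ, HasDerivAt (fun u : ℝ => u^n * f (u • x)) (τ^(n-1) * D (τ • x)) τ := by
      intro τ
      have hfd : HasFDerivAt f (fderiv ℝ f (τ • x)) (τ • x) :=
        ((hf_diff.differentiable one_ne_zero) (τ • x)).hasFDerivAt
      have hsm : HasDerivAt (fun u : ℝ => u • x) x τ := by
        simpa using (hasDerivAt_id τ).smul_const x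
      have hcomp : HasDerivAt (fun u : ℝ => f (u • x)) (fderiv ℝ f (τ • x) x) τ :=
        hfd.comp_hasDerivAt τ hsm
      have hpow : HasDerivAt (fun u : ℝ => u ^ n) ((n:ℝ) * τ ^ (n-1)) τ := hasDerivAt_pow n τ
      have hmul : HasDerivAt (fun u : ℝ => u^n * f (u • x))
          ((n:ℝ) * τ ^ (n-1) * f (τ • x) + τ ^ n * fderiv ℝ f (τ • x) x) τ := hpow.mul hcomp
      convert hmul using 1
      rw [hD]
      have hτ' : fderiv ℝ f (τ • x) (τ • x) = τ * fderiv ℝ f (τ • x) x := by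
        rw [(fderiv ℝ f (τ • x)).map_smul, smul_eq_mul]
      rw [hτ']
      have hps : τ ^ (n-1) * τ = τ ^ n := by
        rw [← pow_succ]; congr 1; omega
      linear_combination (fderiv ℝ f (τ • x) x) * hps
    have h2 : Continuous (fun τ : ℝ => τ^(n-1) * D (τ • x)) :=
      (continuous_pow _).mul (hD_cont.comp (continuous_id.smul continuous_const))
    have h3 := intervalIntegral.integral_eq_sub_of_hasDerivAt
      (f := fun u : ℝ => u^n * f (u • x)) (f' := fun τ => τ^(n-1) * D (τ • x))
      (fun τ _ => h1 τ) (h2.intervalIntegrable a b)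
    rw [intervalIntegral.integral_of_le hab] at h3
    exact h3
  -- the product-measure integrand
  set ψ : ℝ × EuclideanSpace ℝ (Fin n) → ℝ := fun p => p.1^(n-1) * D (p.1 • p.2) with hψ
  have hψ_cont : Continuous ψ :=
    (continuous_fst.pow _).mul (hD_cont.comp (continuous_fst.smul continuous_snd))
  have hmeas_prod : AEStronglyMeasurable ψ
      ((volume.restrict (Set.Ioc a b)).prod (volume.restrict A)) :=
    hψ_cont.aestronglyMeasurable
  have hscale_norm : ∀ {c : ℝ}, 0 < c → ∫ x, ‖D (c • x)‖ = (c^n)⁻¹ * ∫ x, ‖D x‖ := by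
    intro c hc
    rw [MeasureTheory.Measure.integral_comp_smul volume (fun y => ‖D y‖) c,
      finrank_euclideanSpace_fin, smul_eq_mul, abs_of_nonneg (by positivity)]
  have hsec : ∀ᵐ τ ∂(volume.restrict (Set.Ioc a b)),
      Integrable (fun x => ψ (τ, x)) (volume.restrict A) := by
    rw [ae_restrict_iff' measurableSet_Ioc]
    refine Filter.Eventually.of_forall fun τ hτ => ?_
    have hτ0 : τ ≠ 0 := (lt_of_lt_of_le ha hτ.1.le).ne'
    have : Integrable (fun x : EuclideanSpace ℝ (Fin n) => τ^(n-1) * D (τ • x))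
        (volume.restrict A) := ((hD_int.comp_smul hτ0).const_mul _).integrableOn
    exact this.congr (Filter.Eventually.of_forall fun x => rfl)
  have hDnn : (0:ℝ) ≤ ∫ x, ‖D x‖ := integral_nonneg fun x => norm_nonneg _
  have hnormint : Integrable (fun τ => ∫ x, ‖ψ (τ, x)‖ ∂(volume.restrict A))
      (volume.restrict (Set.Ioc a b)) := by
    have hC : ∀ᵐ τ ∂(volume.restrict (Set.Ioc a b)),
        ‖∫ x, ‖ψ (τ, x)‖ ∂(volume.restrict A)‖ ≤ b^(n-1) * ((a^n)⁻¹ * ∫ x, ‖D x‖) := by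
      rw [ae_restrict_iff' measurableSet_Ioc]
      refine Filter.Eventually.of_forall fun τ hτ => ?_
      have hτ0 : 0 < τ := lt_of_lt_of_le ha hτ.1.le
      have hint : Integrable (fun x => ‖D (τ • x)‖) := (hD_int.comp_smul hτ0.ne').norm
      have e1 : ∫ x, ‖ψ (τ, x)‖ ∂(volume.restrict A)
          = |τ^(n-1)| * ∫ x in A, ‖D (τ • x)‖ := by
        simp only [hψ, norm_mul]
        rw [integral_const_mul, Real.norm_eq_abs]
      have e2 : ∫ x in A, ‖D (τ • x)‖ ≤ ∫ x, ‖D (τ • x)‖ :=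
        setIntegral_le_integral hint (Filter.Eventually.of_forall fun x => norm_nonneg _)
      have e3 : ∫ x, ‖D (τ • x)‖ = (τ^n)⁻¹ * ∫ x, ‖D x‖ := hscale_norm hτ0
      have e4 : (0:ℝ) ≤ ∫ x in A, ‖D (τ • x)‖ :=
        integral_nonneg fun x => norm_nonneg _
      rw [Real.norm_eq_abs, abs_of_nonneg (by rw [e1]; positivity), e1]
      have h5 : |τ^(n-1)| = τ^(n-1) := abs_of_nonneg (by positivity)
      rw [h5]
      have h6 : τ^(n-1) ≤ b^(n-1) := pow_le_pow_left₀ hτ0.le hτ.2 _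
      have h7 : (τ^n)⁻¹ ≤ (a^n)⁻¹ := by
        apply inv_anti₀ (by positivity)
        exact pow_le_pow_left₀ ha.le hτ.1.le _
      calc τ^(n-1) * ∫ x in A, ‖D (τ • x)‖
          ≤ τ^(n-1) * ((τ^n)⁻¹ * ∫ x, ‖D x‖) := by
            rw [← e3]; exact mul_le_mul_of_nonneg_left (e3 ▸ e2) (by positivity)
        _ ≤ b^(n-1) * ((a^n)⁻¹ * ∫ x, ‖D x‖) := by
            apply mul_le_mul h6 _ (by positivity) (by positivity)
            exact mul_le_mul_of_nonneg_right h7 hDnn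
    refine Integrable.mono' (integrable_const _) ?_ hC
    exact (hψ_cont.aestronglyMeasurable.norm.integral_prod_right').congr
      (Filter.Eventually.of_forall fun τ => rfl)
  have hFub : Integrable ψ ((volume.restrict (Set.Ioc a b)).prod (volume.restrict A)) :=
    (integrable_prod_iff hmeas_prod).2 ⟨hsec, hnormint⟩
  have hswap := MeasureTheory.integral_integral_swap
    (f := fun τ (x : EuclideanSpace ℝ (Fin n)) => ψ (τ, x))
    (μ := volume.restrict (Set.Ioc a b)) (ν := volume.restrict A) hFub
  -- right side of swap equals LHS of the theorem
  have hRHS : ∫ x in A, ∫ τ in Set.Ioc a b, ψ (τ, x) ∂volume ∂volume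
      = (∫ x in {y : EuclideanSpace ℝ (Fin n) | ∑ i, y i ≤ b * s}, f x)
        - (∫ x in {y : EuclideanSpace ℝ (Fin n) | ∑ i, y i ≤ a * s}, f x) := by
    have : ∀ x : EuclideanSpace ℝ (Fin n),
        (∫ τ in Set.Ioc a b, ψ (τ, x)) = b^n * f (b • x) - a^n * f (a • x) := ftc
    rw [setIntegral_congr_fun hAmeas (fun x _ => this x)]
    have hib : IntegrableOn (fun x => b^n * f (b • x)) A :=
      ((hf_int.comp_smul hb.ne').const_mul _).integrableOn
    have hia : IntegrableOn (fun x => a^n * f (a • x)) A :=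
      ((hf_int.comp_smul ha.ne').const_mul _).integrableOn
    rw [integral_sub hib hia]
    have hsc : ∀ {c : ℝ}, 0 < c → ∫ x in A, c^n * f (c • x)
        = ∫ x in {y : EuclideanSpace ℝ (Fin n) | ∑ i, y i ≤ c * s}, f x := by
      intro c hc
      rw [integral_const_mul, hA, aux_scale f hc s, ← mul_assoc,
        mul_inv_cancel₀ (by positivity), one_mul]
    rw [hsc hb, hsc ha]
  -- left side of swap equals RHS of the theorem
  have hLHS : ∫ τ in Set.Ioc a b, ∫ x in A, ψ (τ, x) ∂volume ∂volume
      = ∫ τ in Set.Ioc a b,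
        τ⁻¹ * (∫ x in {y : EuclideanSpace ℝ (Fin n) | ∑ i, y i ≤ τ * s}, D x) := by
    apply setIntegral_congr_fun measurableSet_Ioc
    intro τ hτ
    have hτ0 : 0 < τ := lt_of_lt_of_le ha hτ.1.le
    simp only [hψ]
    rw [integral_const_mul, hA, aux_scale D hτ0 s, ← mul_assoc, hpinv hτ0.ne']
  rw [← hRHS, ← hswap, hLHS]

/-- Let `f` be a continuously differentiable probability density on `ℝⁿ`
(`n ≥ 1`) with `∫ |⟨x, ∇f(x)⟩| dx < ∞`, and let `μ` be the law of `X ∼ f`.  Define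
`g(s) = (1/s) ∫ 1{x₁+⋯+xₙ ≤ s} (⟨x, ∇f(x)⟩ + n f(x)) dx` for `s ≠ 0` and `g(0) = 0`.
Then `g` is a probability density of `S = X₁ + ⋯ + Xₙ`. -/
theorem sum_density_sensitivity_indicator_le
    (n : ℕ) (hn : 1 ≤ n)
    (f : EuclideanSpace ℝ (Fin n) → ℝ)
    (hf_nonneg : ∀ x, 0 ≤ f x)
    (hf_diff : ContDiff ℝ 1 f)
    (hf_prob : ∫ x, f x = 1)
    (hf_int : Integrable (fun x : EuclideanSpace ℝ (Fin n) => (inner ℝ x (gradient f x) : ℝ)))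
    (μ : Measure (EuclideanSpace ℝ (Fin n)))
    (hμ : μ = volume.withDensity (fun x => ENNReal.ofReal (f x)))
    (g : ℝ → ℝ)
    (hg : ∀ s : ℝ, s ≠ 0 → g s =
      (1 / s) * ∫ x : EuclideanSpace ℝ (Fin n),
        Set.indicator {y : EuclideanSpace ℝ (Fin n) | ∑ i, y i ≤ s}
          (fun y => (inner ℝ y (gradient f y) : ℝ) + n * f y) x)
    (hg0 : g 0 = 0) :
    ∀ s : ℝ, μ {x | ∑ i, x i ≤ s} = ENNReal.ofReal (∫ t in Set.Iic s, g t) := by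
  classical
  -- basic objects
  set F : ℝ → ℝ := fun t => ∫ x in {y : EuclideanSpace ℝ (Fin n) | ∑ i, y i ≤ t}, f x with hF
  set D : EuclideanSpace ℝ (Fin n) → ℝ := fun y => fderiv ℝ f y y + n * f y with hDdef
  set G : ℝ → ℝ := fun t => ∫ x in {y : EuclideanSpace ℝ (Fin n) | ∑ i, y i ≤ t}, D x with hG
  have hinner : ∀ x : EuclideanSpace ℝ (Fin n), (inner ℝ x (gradient f x) : ℝ) = fderiv ℝ f x x := by
    intro x
    rw [real_inner_comm]
    exact InnerProductSpace.toDual_symm_apply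
  have hfun : (fun y : EuclideanSpace ℝ (Fin n) => (inner ℝ y (gradient f y) : ℝ) + n * f y) = D := by
    funext y
    simp only [hDdef]
    rw [hinner y]
  have hf_integrable : Integrable f := by
    by_contra h
    rw [integral_undef h] at hf_prob
    norm_num at hf_prob
  have hD_int : Integrable D := by
    refine (hf_int.add (hf_integrable.const_mul (n : ℝ))).congr ?_
    exact Filter.Eventually.of_forall fun y => congrFun hfun y
  have hD_cont : Continuous D := by
    rw [hDdef]
    exact ((hf_diff.continuous_fderiv one_ne_zero).clm_apply continuous_id).add
      (continuous_const.mul (hf_diff.continuous))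
  have hgrep : ∀ u : ℝ, g u = u⁻¹ * G u := by
    intro u
    by_cases hu : u = 0
    · rw [hu, hg0, inv_zero, zero_mul]
    · rw [hg u hu, one_div, hfun, integral_indicator (aux_meas u)]
  have hFcont : Continuous F := aux_cont hn f hf_integrable (aux_null hn)
  have hGcont : Continuous G := aux_cont hn D hD_int (aux_null hn)
  have hFbot : Filter.Tendsto F Filter.atBot (nhds 0) := aux_atBot f hf_integrable
  have hFmono : Monotone F := by
    intro a b hab
    apply setIntegral_mono_set hf_integrable.integrableOn
      (Filter.Eventually.of_forall fun x => hf_nonneg x)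
    exact HasSubset.Subset.eventuallyLE fun x hx => le_trans hx hab
  have hFnonneg : ∀ t, 0 ≤ F t := fun t =>
    setIntegral_nonneg (aux_meas t) fun x _ => hf_nonneg x
  -- the fundamental identity, positive side
  have hgid_pos : ∀ {a b : ℝ}, 0 < a → a ≤ b → F b - F a = ∫ u in Set.Ioc a b, g u := by
    intro a b ha hab
    have hk := aux_key hn f D hf_diff hf_integrable hD_int hD_cont (fun y => rfl)
      (1 : ℝ) ha hab
    simp only [mul_one] at hk
    rw [hF]
    simp only
    rw [hk]
    apply setIntegral_congr_fun measurableSet_Ioc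
    intro u _
    rw [hgrep u]
  -- the fundamental identity, negative side
  have hgid_neg : ∀ {a b : ℝ}, a ≤ b → b < 0 → F b - F a = ∫ u in Set.Ioc a b, g u := by
    intro a b hab hb
    have hk := aux_key hn f D hf_diff hf_integrable hD_int hD_cont (fun y => rfl)
      (-1 : ℝ) (show (0:ℝ) < -b by linarith) (show -b ≤ -a by linarith)
    have h1 : -a * -1 = a := by ring
    have h2 : -b * -1 = b := by ring
    rw [h1, h2] at hk
    have h3 : ∫ τ in Set.Ioc (-b) (-a),
        τ⁻¹ * (∫ x in {y : EuclideanSpace ℝ (Fin n) | ∑ i, y i ≤ τ * -1}, D x)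
        = ∫ τ in Set.Ioc (-b) (-a), -(g (-τ)) := by
      apply setIntegral_congr_fun measurableSet_Ioc
      intro τ _
      dsimp only
      rw [hgrep (-τ)]
      simp only [hG]
      rw [show τ * -1 = -τ by ring, inv_neg]
      ring
    rw [h3, integral_neg] at hk
    have h4 : ∫ τ in Set.Ioc (-b) (-a), g (-τ) = ∫ u in Set.Ioc a b, g u := by
      have h4a : ∀ x : ℝ, Set.indicator (Set.Ioc (-b) (-a)) (fun τ => g (-τ)) x
          = Set.indicator (Set.Ico a b) g (-x) := by
        intro x
        by_cases hx : x ∈ Set.Ioc (-b) (-a)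
        · rw [Set.indicator_of_mem hx,
            Set.indicator_of_mem (show -x ∈ Set.Ico a b from
              ⟨by have := hx.2; linarith, by have := hx.1; linarith⟩)]
        · rw [Set.indicator_of_notMem hx, Set.indicator_of_notMem]
          intro hmem
          exact hx ⟨by have := hmem.2; linarith, by have := hmem.1; linarith⟩
      calc ∫ τ in Set.Ioc (-b) (-a), g (-τ)
          = ∫ x, Set.indicator (Set.Ioc (-b) (-a)) (fun τ => g (-τ)) x :=
            (integral_indicator measurableSet_Ioc).symm
        _ = ∫ x, Set.indicator (Set.Ico a b) g (-x) := by simp only [h4a]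
        _ = ∫ x, Set.indicator (Set.Ico a b) g x := by rw [integral_neg_eq_self]
        _ = ∫ u in Set.Ico a b, g u := integral_indicator measurableSet_Ico
        _ = ∫ u in Set.Ioc a b, g u := by
            rw [integral_Ico_eq_integral_Ioo, integral_Ioc_eq_integral_Ioo]
    rw [h4] at hk
    linarith [hk]
  -- continuity of g off 0
  have hg_cont : ∀ u : ℝ, u ≠ 0 → ContinuousAt g u := by
    intro u hu
    have hrep : g = fun u => u⁻¹ * G u := funext hgrep
    rw [hrep]
    exact (continuousAt_inv₀ hu).mul hGcont.continuousAt
  have hg_contOn : ∀ {a b : ℝ}, (0 < a ∨ b < 0) → IntegrableOn g (Set.Ioc a b) := by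
    intro a b hcond
    rcases le_or_gt b a with hba | hab
    · rw [Set.Ioc_eq_empty (not_lt.mpr hba)]
      exact integrableOn_empty
    · have hcont : ContinuousOn g (Set.Icc a b) := by
        intro v hv
        refine (hg_cont v ?_).continuousWithinAt
        rcases hcond with h0a | hb0
        · exact (lt_of_lt_of_le h0a hv.1).ne'
        · exact (lt_of_le_of_lt hv.2 hb0).ne
      exact (hcont.integrableOn_Icc).mono_set Set.Ioc_subset_Icc_self
  -- nonnegativity of g
  have hg_nonneg : ∀ u : ℝ, 0 ≤ g u := by
    intro u
    by_contra hneg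
    push_neg at hneg
    have hu0 : u ≠ 0 := by
      intro h
      rw [h, hg0] at hneg
      exact lt_irrefl 0 hneg
    have hc : ContinuousAt g u := hg_cont u hu0
    have hev : ∀ᶠ v in nhds u, g v < g u / 2 := hc.eventually_lt_const (by linarith)
    rw [Metric.eventually_nhds_iff] at hev
    obtain ⟨ε, hε, hball⟩ := hev
    have habs : 0 < |u| := abs_pos.mpr hu0
    set δ : ℝ := min (ε/2) (|u|/2) with hδ
    have hδ0 : 0 < δ := lt_min (by linarith) (by linarith)
    have hδu : δ ≤ |u|/2 := min_le_right _ _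
    have hδε : δ ≤ ε/2 := min_le_left _ _
    have hsub : ∀ v ∈ Set.Ioc (u - δ) (u + δ), g v ≤ g u / 2 := by
      intro v hv
      have h1 := hv.1
      have h2 := hv.2
      refine le_of_lt (hball ?_)
      rw [Real.dist_eq, abs_lt]
      constructor <;> linarith
    have hid : F (u + δ) - F (u - δ) = ∫ v in Set.Ioc (u - δ) (u + δ), g v := by
      rcases lt_trichotomy u 0 with hu | hu | hu
      · apply hgid_neg (by linarith)
        rw [abs_of_neg hu] at hδu
        linarith
      · exact absurd hu hu0
      · apply hgid_pos _ (by linarith)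
        rw [abs_of_pos hu] at hδu
        linarith
    have hmono0 : 0 ≤ F (u + δ) - F (u - δ) :=
      sub_nonneg.2 (hFmono (by linarith : u - δ ≤ u + δ))
    have hint : IntegrableOn g (Set.Ioc (u - δ) (u + δ)) := by
      apply hg_contOn
      rcases lt_trichotomy u 0 with hu | hu | hu
      · right
        rw [abs_of_neg hu] at hδu
        linarith
      · exact absurd hu hu0
      · left
        rw [abs_of_pos hu] at hδu
        linarith
    have hup : ∫ v in Set.Ioc (u - δ) (u + δ), g v
        ≤ ∫ _v in Set.Ioc (u - δ) (u + δ), g u / 2 := by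
      apply setIntegral_mono_on hint
        (integrableOn_const measure_Ioc_lt_top.ne) measurableSet_Ioc
      intro v hv
      exact hsub v hv
    rw [setIntegral_const, Real.volume_real_Ioc_of_le (by linarith : u - δ ≤ u + δ), smul_eq_mul] at hup
    have hfin : (0:ℝ) < -((u + δ - (u - δ)) * (g u / 2)) := by nlinarith
    rw [hid] at hmono0
    linarith
  -- measurability of g
  have hgmeas : Measurable g := by
    have hrep : g = fun u => u⁻¹ * G u := funext hgrep
    rw [hrep]
    exact measurable_inv.mul hGcont.measurable
  -- the candidate density measure
  set ν : Measure ℝ := volume.withDensity (fun u => ENNReal.ofReal (g u)) with hν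
  have hν_apply : ∀ {A : Set ℝ}, MeasurableSet A →
      ν A = ∫⁻ u in A, ENNReal.ofReal (g u) := by
    intro A hA
    rw [hν, withDensity_apply _ hA]
  have hbase : ∀ {a b : ℝ}, a ≤ b → (0 < a ∨ b < 0) →
      ν (Set.Ioc a b) = ENNReal.ofReal (F b - F a) := by
    intro a b hab hcond
    rw [hν_apply measurableSet_Ioc,
      ← ofReal_integral_eq_lintegral_ofReal (hg_contOn hcond)
        (Filter.Eventually.of_forall fun u => hg_nonneg u)]
    congr 1
    rcases hcond with h0a | hb0
    · exact (hgid_pos h0a hab).symm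
    · exact (hgid_neg hab hb0).symm
  have hν_null : ∀ {A : Set ℝ}, volume A = 0 → ν A = 0 := by
    intro A hA
    rw [hν]
    exact withDensity_absolutelyContinuous volume _ hA
  -- sup evaluation helper
  have hsup_eval : ∀ (c : ℕ → ℝ) (L : ℝ), Monotone c → Filter.Tendsto c Filter.atTop (nhds L) →
      (⨆ k, ENNReal.ofReal (c k)) = ENNReal.ofReal L := by
    intro c L hm ht
    have h1 : Filter.Tendsto (fun k => ENNReal.ofReal (c k)) Filter.atTop
        (nhds (ENNReal.ofReal L)) := (ENNReal.continuous_ofReal.tendsto L).comp ht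
    have h2 : Monotone fun k => ENNReal.ofReal (c k) := fun i j h =>
      ENNReal.ofReal_le_ofReal (hm h)
    exact tendsto_nhds_unique (tendsto_atTop_iSup h2) h1
  -- value on Iic c for c ≤ 0
  have hIic_neg : ∀ c : ℝ, c ≤ 0 → ν (Set.Iic c) = ENNReal.ofReal (F c) := by
    intro c hc
    have hAmono : Monotone (fun k : ℕ => Set.Ioc (c - (k+1)) (c - 1/(k+1))) := by
      intro i j hij
      have hij' : (i:ℝ) ≤ j := Nat.cast_le.2 hij
      apply Set.Ioc_subset_Ioc
      · linarith
      · have h1 : (1:ℝ)/(j+1) ≤ 1/(i+1) := by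
          apply one_div_le_one_div_of_le (by positivity)
          linarith
        linarith
    have hAunion : (⋃ k : ℕ, Set.Ioc (c - (k+1)) (c - 1/(k+1))) = Set.Iio c := by
      ext u
      simp only [Set.mem_iUnion, Set.mem_Ioc, Set.mem_Iio]
      constructor
      · rintro ⟨k, _, hk2⟩
        have hpos : (0:ℝ) < 1/(k+1) := by positivity
        linarith
      · intro hu
        obtain ⟨k₁, hk₁⟩ := exists_nat_one_div_lt (show (0:ℝ) < c - u by linarith)
        obtain ⟨k₂, hk₂⟩ := exists_nat_gt (c - u)
        refine ⟨max k₁ k₂, ?_, ?_⟩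
        · have h1 : (k₂:ℝ) ≤ max k₁ k₂ := Nat.cast_le.2 (le_max_right _ _)
          linarith
        · have h2 : (1:ℝ)/(max k₁ k₂ + 1) ≤ 1/(k₁+1) := by
            apply one_div_le_one_div_of_le (by positivity)
            have : (k₁:ℝ) ≤ max k₁ k₂ := Nat.cast_le.2 (le_max_left _ _)
            linarith
          linarith
    have hIio : ν (Set.Iio c) = ENNReal.ofReal (F c) := by
      rw [← hAunion, Directed.measure_iUnion (hAmono.directed_le)]
      have hbk : ∀ k : ℕ, ν (Set.Ioc (c - (k+1)) (c - 1/(k+1)))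
          = ENNReal.ofReal (F (c - 1/(k+1)) - F (c - (k+1))) := by
        intro k
        apply hbase
        · have h1 : (1:ℝ)/(k+1) ≤ k+1 := by
            rw [div_le_iff₀ (by positivity)]
            nlinarith [Nat.cast_nonneg (α := ℝ) k]
          linarith
        · right
          have hpos : (0:ℝ) < 1/(k+1) := by positivity
          linarith
      simp only [hbk]
      apply hsup_eval
      · intro i j hij
        have hij' : (i:ℝ) ≤ j := Nat.cast_le.2 hij
        have hm1 : F (c - 1/(i+1)) ≤ F (c - 1/(j+1)) := by
          apply hFmono
          have h1 : (1:ℝ)/(j+1) ≤ 1/(i+1) := by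
            apply one_div_le_one_div_of_le (by positivity)
            linarith
          linarith
        have hm2 : F (c - (j+1)) ≤ F (c - (i+1)) := by
          apply hFmono
          linarith
        linarith
      · have t1 : Filter.Tendsto (fun k : ℕ => F (c - 1/(k+1))) Filter.atTop (nhds (F c)) := by
          apply (hFcont.tendsto c).comp
          have ht : Filter.Tendsto (fun k : ℕ => c - 1/(k+1)) Filter.atTop (nhds (c - 0)) :=
            tendsto_const_nhds.sub tendsto_one_div_add_atTop_nhds_zero_nat
          simpa using ht
        have t2 : Filter.Tendsto (fun k : ℕ => F (c - (k+1))) Filter.atTop (nhds 0) := by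
          apply hFbot.comp
          rw [Filter.tendsto_atBot]
          intro M
          obtain ⟨k₀, hk₀⟩ := exists_nat_gt (c - M)
          refine Filter.eventually_atTop.2 ⟨k₀, fun k hk => ?_⟩
          have hkk : (k₀:ℝ) ≤ k := Nat.cast_le.2 hk
          linarith
        have := t1.sub t2
        simpa using this
    have hsing : ν {c} = 0 := hν_null Real.volume_singleton
    rw [← Set.Iio_union_right]
    apply le_antisymm
    · calc ν (Set.Iio c ∪ {c}) ≤ ν (Set.Iio c) + ν {c} := measure_union_le _ _
        _ = ENNReal.ofReal (F c) := by rw [hsing, add_zero, hIio]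
    · rw [← hIio]
      exact measure_mono Set.subset_union_left
  -- the value of ν on Iic s, all s
  have hν_Iic : ∀ s : ℝ, ν (Set.Iic s) = ENNReal.ofReal (F s) := by
    intro s
    rcases le_or_gt s 0 with hs | hs
    · exact hIic_neg s hs
    · have hsplit : Set.Iic s = Set.Iic 0 ∪ Set.Ioc 0 s := (Set.Iic_union_Ioc_eq_Iic hs.le).symm
      rw [hsplit, measure_union (Set.Iic_disjoint_Ioc le_rfl) measurableSet_Ioc, hIic_neg 0 le_rfl]
      have hmid : ν (Set.Ioc 0 s) = ENNReal.ofReal (F s - F 0) := by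
        have hAmono : Monotone (fun k : ℕ => Set.Ioc (min s (1/(k+1))) s) := by
          intro i j hij
          have hij' : (i:ℝ) ≤ j := Nat.cast_le.2 hij
          apply Set.Ioc_subset_Ioc _ le_rfl
          apply min_le_min le_rfl
          apply one_div_le_one_div_of_le (by positivity)
          linarith
        have hAunion : (⋃ k : ℕ, Set.Ioc (min s (1/(k+1))) s) = Set.Ioc 0 s := by
          ext u
          simp only [Set.mem_iUnion, Set.mem_Ioc]
          constructor
          · rintro ⟨k, hk1, hk2⟩
            have hminpos : 0 < min s (1/(k+1 : ℝ)) := lt_min hs (by positivity)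
            exact ⟨hminpos.trans hk1, hk2⟩
          · rintro ⟨hu0, hus⟩
            obtain ⟨k, hk⟩ := exists_nat_one_div_lt hu0
            exact ⟨k, lt_of_le_of_lt (min_le_right _ _) hk, hus⟩
        rw [← hAunion, Directed.measure_iUnion (hAmono.directed_le)]
        have hbk : ∀ k : ℕ, ν (Set.Ioc (min s (1/(k+1))) s)
            = ENNReal.ofReal (F s - F (min s (1/(k+1)))) := fun k =>
          hbase (min_le_left _ _) (Or.inl (lt_min hs (by positivity)))
        simp only [hbk]
        apply hsup_eval
        · intro i j hij
          have hij' : (i:ℝ) ≤ j := Nat.cast_le.2 hij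
          have hminle : min s (1/((j:ℝ)+1)) ≤ min s (1/((i:ℝ)+1)) := by
            apply min_le_min le_rfl
            apply one_div_le_one_div_of_le (by positivity)
            linarith
          have := hFmono hminle
          linarith
        · have hminto : Filter.Tendsto (fun k : ℕ => min s (1/(k+1 : ℝ)))
              Filter.atTop (nhds 0) := by
            have h0 : Filter.Tendsto (fun k : ℕ => (1:ℝ)/(k+1)) Filter.atTop (nhds 0) :=
              tendsto_one_div_add_atTop_nhds_zero_nat
            have hmin := (tendsto_const_nhds (x := s) (f := Filter.atTop (α := ℕ))).min h0
            rw [min_eq_right hs.le] at hmin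
            exact hmin
          have hcomp := (hFcont.tendsto 0).comp hminto
          have := (tendsto_const_nhds (x := F s) (f := Filter.atTop (α := ℕ))).sub hcomp
          simpa using this
      rw [hmid, ← ENNReal.ofReal_add (hFnonneg 0) (sub_nonneg.2 (hFmono hs.le))]
      congr 1
      ring
  -- conclusion
  intro s
  have hgint : IntegrableOn g (Set.Iic s) := by
    refine ⟨hgmeas.aestronglyMeasurable, ?_⟩
    have heq : ∫⁻ u in Set.Iic s, (‖g u‖₊ : ENNReal) = ν (Set.Iic s) := by
      rw [hν_apply measurableSet_Iic]
      apply lintegral_congr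
      intro u
      exact Real.enorm_eq_ofReal (hg_nonneg u)
    have hlt : ∫⁻ u in Set.Iic s, (‖g u‖₊ : ENNReal) < ⊤ := by
      rw [heq, hν_Iic s]
      exact ENNReal.ofReal_lt_top
    exact hlt
  have hright : ENNReal.ofReal (∫ t in Set.Iic s, g t) = ENNReal.ofReal (F s) := by
    rw [ofReal_integral_eq_lintegral_ofReal hgint
      (Filter.Eventually.of_forall fun u => hg_nonneg u), ← hν_apply measurableSet_Iic,
      hν_Iic s]
  rw [hright, hμ, withDensity_apply _ (aux_meas s),
    ← ofReal_integral_eq_lintegral_ofReal hf_integrable.integrableOn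
      (Filter.Eventually.of_forall fun x => hf_nonneg x)]
end

section
/- Define g̃ : ℝ → ℝ by g̃(s) = −(1/s) ∫_{ℝⁿ} 1{x₁ + ⋯ + xₙ > s} (⟨x, ∇f(x)⟩ + n·f(x)) dx for s ≠ 0, and g̃(0) = 0. Then g̃ is a probability density of the sum S = X₁ + ⋯ + Xₙ: for every s ∈ ℝ, μ({x ∈ ℝⁿ : x₁ + ⋯ + xₙ ≤ s}) = ∫_{−∞}^{s} g̃(t) dt. -/
open MeasureTheory Set Filter Topology

noncomputable section

namespace SumAux

variable {n : ℕ}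

lemma cont_sum : Continuous fun y : EuclideanSpace ℝ (Fin n) => ∑ i, y i :=
  continuous_finset_sum _ fun i _ => (EuclideanSpace.proj i).continuous

lemma meas_S (u : ℝ) : MeasurableSet {y : EuclideanSpace ℝ (Fin n) | u < ∑ i, y i} :=
  (isOpen_lt continuous_const cont_sum).measurableSet

lemma meas_le (u : ℝ) : MeasurableSet {y : EuclideanSpace ℝ (Fin n) | ∑ i, y i ≤ u} :=
  (isClosed_le cont_sum continuous_const).measurableSet

lemma sum_smul_eq (c : ℝ) (x : EuclideanSpace ℝ (Fin n)) :
    (∑ i, (c • x) i) = c * ∑ i, x i := by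
  simp [PiLp.smul_apply, smul_eq_mul, Finset.mul_sum]

lemma null_hyperplane (hn : 1 ≤ n) (c : ℝ) :
    volume {x : EuclideanSpace ℝ (Fin n) | ∑ i, x i = c} = 0 := by
  classical
  set φ : EuclideanSpace ℝ (Fin n) →L[ℝ] ℝ := ∑ i, EuclideanSpace.proj i with hφ
  have hφ_apply : ∀ x : EuclideanSpace ℝ (Fin n), φ x = ∑ i, x i := by
    intro x
    simp [hφ, ContinuousLinearMap.sum_apply, EuclideanSpace.proj]
  set x₀ : EuclideanSpace ℝ (Fin n) := (EuclideanSpace.equiv (Fin n) ℝ).symm (fun _ => c / n)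
    with hx₀
  have hnR : (n : ℝ) ≠ 0 := Nat.cast_ne_zero.2 (by omega)
  have hx₀_apply : ∀ i, x₀ i = c / n := fun i => rfl
  have hφx₀ : φ x₀ = c := by
    rw [hφ_apply]
    simp [hx₀_apply, Finset.sum_const, Finset.card_univ]
    field_simp
  set K : Submodule ℝ (EuclideanSpace ℝ (Fin n)) := LinearMap.ker (φ : EuclideanSpace ℝ (Fin n) →ₗ[ℝ] ℝ) with hK
  have hKne : K ≠ ⊤ := by
    intro h
    set e : EuclideanSpace ℝ (Fin n) := (EuclideanSpace.equiv (Fin n) ℝ).symm (fun _ => 1)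
    have he : φ e = n := by
      rw [hφ_apply]
      simp [e]
    have : e ∈ K := by rw [h]; trivial
    rw [LinearMap.mem_ker, ContinuousLinearMap.coe_coe] at this
    rw [this] at he
    exact hnR he.symm
  have hset : {x : EuclideanSpace ℝ (Fin n) | ∑ i, x i = c}
      = (fun x => x + (-x₀)) ⁻¹' (K : Set (EuclideanSpace ℝ (Fin n))) := by
    ext x
    simp only [Set.mem_setOf_eq, Set.mem_preimage, SetLike.mem_coe, hK, LinearMap.mem_ker, ContinuousLinearMap.coe_coe,
      map_add, map_neg, hφ_apply]
    have hs0 : ∑ i, x₀ i = c := by rw [← hφ_apply]; exact hφx₀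
    have hadd : (∑ i, (x + -x₀) i) = (∑ i, x i) - ∑ i, x₀ i := by
      simp [PiLp.add_apply, PiLp.neg_apply, Finset.sum_add_distrib, sub_eq_add_neg]
    rw [hs0]
    constructor
    · intro h; rw [h]; ring
    · intro h; linarith
  rw [hset, measure_preimage_add_right]
  exact Measure.addHaar_submodule volume K hKne

lemma cont_J (hn : 1 ≤ n) {φ : EuclideanSpace ℝ (Fin n) → ℝ} (hφ : Integrable φ) :
    Continuous fun u : ℝ => ∫ x, Set.indicator {y : EuclideanSpace ℝ (Fin n) | u < ∑ i, y i} φ x := by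
  rw [continuous_iff_continuousAt]
  intro u₀
  apply tendsto_integral_filter_of_dominated_convergence (fun x => ‖φ x‖)
  · exact Eventually.of_forall fun u => hφ.aestronglyMeasurable.indicator (meas_S u)
  · exact Eventually.of_forall fun u => Eventually.of_forall fun x =>
      norm_indicator_le_norm_self _ _
  · exact hφ.norm
  · have hae : ∀ᵐ x : EuclideanSpace ℝ (Fin n), (∑ i, x i) ≠ u₀ := by
      rw [ae_iff]
      simpa using null_hyperplane hn u₀
    filter_upwards [hae] with x hx
    rcases lt_or_gt_of_ne hx with h | h
    · -- ∑ x < u₀ : indicator is eventually zero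
      apply tendsto_const_nhds.congr'
      have h1 : ∀ᶠ u in 𝓝 u₀, (∑ i, x i) < u := eventually_gt_nhds h
      filter_upwards [h1] with u hu
      rw [Set.indicator_of_notMem (by simp only [Set.mem_setOf_eq]; exact not_lt.2 h.le),
        Set.indicator_of_notMem (by simp only [Set.mem_setOf_eq]; exact not_lt.2 hu.le)]
    · -- u₀ < ∑ x : indicator is eventually φ x
      apply tendsto_const_nhds.congr'
      have h1 : ∀ᶠ u in 𝓝 u₀, u < (∑ i, x i) := eventually_lt_nhds h
      filter_upwards [h1] with u hu
      rw [Set.indicator_of_mem (by exact h), Set.indicator_of_mem (by exact hu)]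


/-- `H` : upper tail of the sum under density `φ`. -/
def Jint (n : ℕ) (φ : EuclideanSpace ℝ (Fin n) → ℝ) (u : ℝ) : ℝ :=
  ∫ x, Set.indicator {y : EuclideanSpace ℝ (Fin n) | u < ∑ i, y i} φ x

lemma indicator_comp_smul (φ : EuclideanSpace ℝ (Fin n) → ℝ) {c : ℝ} (hc : 0 < c) (t : ℝ)
    (x : EuclideanSpace ℝ (Fin n)) :
    Set.indicator {y : EuclideanSpace ℝ (Fin n) | t < ∑ i, y i} (fun x' => φ (c • x')) x
      = Set.indicator {y : EuclideanSpace ℝ (Fin n) | c * t < ∑ i, y i} φ (c • x) := by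
  by_cases hx : t < ∑ i, x i
  · rw [Set.indicator_of_mem (by exact hx), Set.indicator_of_mem]
    show c * t < ∑ i, (c • x) i
    rw [sum_smul_eq]
    exact (mul_lt_mul_iff_right₀ hc).2 hx
  · rw [Set.indicator_of_notMem (by exact hx), Set.indicator_of_notMem]
    show ¬ c * t < ∑ i, (c • x) i
    rw [sum_smul_eq]
    exact fun h => hx ((mul_lt_mul_iff_right₀ hc).1 h)

lemma scale_indicator (φ : EuclideanSpace ℝ (Fin n) → ℝ) {c : ℝ} (hc : 0 < c) (t : ℝ) :
    (∫ x, Set.indicator {y : EuclideanSpace ℝ (Fin n) | t < ∑ i, y i} (fun x' => φ (c • x')) x)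
      = (c ^ n)⁻¹ * Jint n φ (c * t) := by
  have h1 : (∫ x, Set.indicator {y : EuclideanSpace ℝ (Fin n) | t < ∑ i, y i}
      (fun x' => φ (c • x')) x)
      = ∫ x, (Set.indicator {y : EuclideanSpace ℝ (Fin n) | c * t < ∑ i, y i} φ) (c • x) := by
    congr 1
    ext x
    exact indicator_comp_smul φ hc t x
  rw [h1, Measure.integral_comp_smul_of_nonneg volume
    (Set.indicator {y : EuclideanSpace ℝ (Fin n) | c * t < ∑ i, y i} φ) c (hR := hc.le),
    finrank_euclideanSpace_fin, smul_eq_mul, Jint]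

lemma integrable_indicator_comp_smul {φ : EuclideanSpace ℝ (Fin n) → ℝ} (hφ : Integrable φ)
    {c : ℝ} (hc : 0 < c) (t : ℝ) :
    Integrable (fun x => Set.indicator {y : EuclideanSpace ℝ (Fin n) | t < ∑ i, y i}
      (fun x' => φ (c • x')) x) := by
  have h2 : Integrable (fun x : EuclideanSpace ℝ (Fin n) => φ (c • x)) :=
    (integrable_comp_smul_iff volume φ hc.ne').2 hφ
  simpa using h2.indicator (meas_S t)

variable {f : EuclideanSpace ℝ (Fin n) → ℝ}

lemma psi_cont (hf_diff : ContDiff ℝ 1 f) :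
    Continuous fun y : EuclideanSpace ℝ (Fin n) => fderiv ℝ f y y :=
  (hf_diff.continuous_fderiv one_ne_zero).clm_apply continuous_id

lemma hasDerivAt_line (hf_diff : ContDiff ℝ 1 f) (x : EuclideanSpace ℝ (Fin n)) (c : ℝ) :
    HasDerivAt (fun c : ℝ => f (c • x)) (fderiv ℝ f (c • x) x) c := by
  have h1 : HasFDerivAt f (fderiv ℝ f (c • x)) (c • x) :=
    (hf_diff.differentiable one_ne_zero (c • x)).hasFDerivAt
  have h2 : HasDerivAt (fun c : ℝ => c • x) x c := by
    simpa using (hasDerivAt_id c).smul_const x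
  exact h1.comp_hasDerivAt c h2

lemma fderiv_line_eq {c : ℝ} (hc : c ≠ 0) (x : EuclideanSpace ℝ (Fin n)) :
    fderiv ℝ f (c • x) x = c⁻¹ * (fun y : EuclideanSpace ℝ (Fin n) => fderiv ℝ f y y) (c • x) := by
  simp only
  rw [ContinuousLinearMap.map_smul, smul_eq_mul, inv_mul_cancel_left₀ hc]

lemma star_eq (hf_diff : ContDiff ℝ 1 f) (hf_integrable : Integrable f)
    (hpsi_int : Integrable fun y : EuclideanSpace ℝ (Fin n) => fderiv ℝ f y y)
    (t : ℝ) {a b : ℝ} (ha : 0 < a) (hab : a ≤ b) :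
    (b ^ n)⁻¹ * Jint n f (b * t) - (a ^ n)⁻¹ * Jint n f (a * t)
      = ∫ c in a..b, (c ^ (n + 1))⁻¹
          * Jint n (fun y : EuclideanSpace ℝ (Fin n) => fderiv ℝ f y y) (c * t) := by
  have hb : 0 < b := lt_of_lt_of_le ha hab
  set ψ : EuclideanSpace ℝ (Fin n) → ℝ := fun y => fderiv ℝ f y y with hψ
  set S := {y : EuclideanSpace ℝ (Fin n) | t < ∑ i, y i} with hSdef
  set D : ℝ → EuclideanSpace ℝ (Fin n) → ℝ :=
    fun c x => Set.indicator S (fun x' => fderiv ℝ f (c • x') x') x with hD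
  have hDeq : ∀ c : ℝ, c ≠ 0 →
      (fun x => D c x) = fun x => c⁻¹ * Set.indicator S (fun x' => ψ (c • x')) x := by
    intro c hc
    ext x
    by_cases hx : x ∈ S
    · simp only [hD, Set.indicator_of_mem hx]
      exact fderiv_line_eq hc x
    · simp only [hD, Set.indicator_of_notMem hx, mul_zero]
  have hInt_sec : ∀ c : ℝ, 0 < c → Integrable (fun x => D c x) := by
    intro c hc
    rw [hDeq c hc.ne']
    exact (integrable_indicator_comp_smul hpsi_int hc t).const_mul _
  have key : ∀ c : ℝ, 0 < c → (∫ x, D c x) = (c ^ (n + 1))⁻¹ * Jint n ψ (c * t) := by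
    intro c hc
    rw [hDeq c hc.ne', integral_const_mul, scale_indicator ψ hc t, pow_succ, mul_inv_rev,
      mul_assoc]
  have hnorm_scale : ∀ c : ℝ, 0 < c →
      (∫ x, ‖ψ (c • x)‖) = (c ^ n)⁻¹ * ∫ x, ‖ψ x‖ := by
    intro c hc
    rw [Measure.integral_comp_smul_of_nonneg volume (fun y => ‖ψ y‖) c (hR := hc.le),
      finrank_euclideanSpace_fin, smul_eq_mul]
  -- product measurability
  set ν := volume.restrict (Set.Ioc a b) with hν
  set u : (EuclideanSpace ℝ (Fin n)) × ℝ → ℝ := fun p => D p.2 p.1 with hu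
  have hu_sm : StronglyMeasurable u := by
    have hcontF : Continuous fun p : (EuclideanSpace ℝ (Fin n)) × ℝ =>
        fderiv ℝ f (p.2 • p.1) p.1 :=
      ((hf_diff.continuous_fderiv one_ne_zero).comp (continuous_snd.smul continuous_fst)).clm_apply
        continuous_fst
    have hueq : u = Set.indicator (S ×ˢ (Set.univ : Set ℝ))
        (fun p : (EuclideanSpace ℝ (Fin n)) × ℝ => fderiv ℝ f (p.2 • p.1) p.1) := by
      ext p
      by_cases hp : p.1 ∈ S
      · rw [Set.indicator_of_mem (Set.mk_mem_prod hp (Set.mem_univ _))]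
        simp only [hu, hD, Set.indicator_of_mem hp]
      · rw [Set.indicator_of_notMem (fun hmem => hp hmem.1)]
        simp only [hu, hD, Set.indicator_of_notMem hp]
    rw [hueq]
    exact hcontF.stronglyMeasurable.indicator ((meas_S t).prod MeasurableSet.univ)
  have hu_int : Integrable u (volume.prod ν) := by
    refine (integrable_prod_iff' hu_sm.aestronglyMeasurable).2 ⟨?_, ?_⟩
    · rw [ae_restrict_iff' measurableSet_Ioc]
      exact Eventually.of_forall fun c hc => hInt_sec c (ha.trans_le hc.1.le)
    · haveI : IsFiniteMeasure ν := by
        constructor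
        rw [hν, Measure.restrict_apply_univ, Real.volume_Ioc]
        exact ENNReal.ofReal_lt_top
      refine Integrable.mono' (integrable_const ((a ^ (n + 1))⁻¹ * ∫ x, ‖ψ x‖))
        (hu_sm.norm.integral_prod_left'.aestronglyMeasurable) ?_
      rw [ae_restrict_iff' measurableSet_Ioc]
      refine Eventually.of_forall fun c hc => ?_
      have hc0 : 0 < c := ha.trans_le hc.1.le
      have hIc : Integrable (fun x => c⁻¹ * Set.indicator S (fun x' => ψ (c • x')) x) :=
        (integrable_indicator_comp_smul hpsi_int hc0 t).const_mul _
      have hIc2 : Integrable (fun x : EuclideanSpace ℝ (Fin n) => ψ (c • x)) :=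
        (integrable_comp_smul_iff volume ψ hc0.ne').2 hpsi_int
      have hmono : (∫ x, ‖u (x, c)‖) ≤ ∫ x, ‖c⁻¹ * ψ (c • x)‖ := by
        refine integral_mono ((hInt_sec c hc0).norm) ((hIc2.const_mul _).norm) ?_
        intro x
        show ‖D c x‖ ≤ _
        rw [congrFun (hDeq c hc0.ne') x]
        simp only [norm_mul]
        gcongr
        exact norm_indicator_le_norm_self _ _
      have hval : (∫ x, ‖c⁻¹ * ψ (c • x)‖) = (c ^ (n + 1))⁻¹ * ∫ x, ‖ψ x‖ := by
        simp_rw [norm_mul]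
        rw [integral_const_mul, hnorm_scale c hc0, norm_inv, Real.norm_of_nonneg hc0.le,
          ← mul_assoc, ← mul_inv_rev, ← pow_succ]
      have hnn : 0 ≤ ∫ x, ‖u (x, c)‖ := integral_nonneg fun x => norm_nonneg _
      rw [Real.norm_of_nonneg hnn]
      refine hmono.trans ?_
      rw [hval]
      have hpow : (c ^ (n + 1))⁻¹ ≤ (a ^ (n + 1))⁻¹ := by
        apply inv_anti₀ (pow_pos ha _)
        exact pow_le_pow_left₀ ha.le hc.1.le _
      exact mul_le_mul_of_nonneg_right hpow (integral_nonneg fun x => norm_nonneg _)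
  -- main computation
  have hswap := integral_integral_swap (f := fun x c => D c x) hu_int
  calc (b ^ n)⁻¹ * Jint n f (b * t) - (a ^ n)⁻¹ * Jint n f (a * t)
      = (∫ x, Set.indicator S (fun x' => f (b • x')) x)
        - ∫ x, Set.indicator S (fun x' => f (a • x')) x := by
        rw [scale_indicator f hb t, scale_indicator f ha t]
    _ = ∫ x, (Set.indicator S (fun x' => f (b • x')) x
          - Set.indicator S (fun x' => f (a • x')) x) :=
        (integral_sub (integrable_indicator_comp_smul hf_integrable hb t)
          (integrable_indicator_comp_smul hf_integrable ha t)).symm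
    _ = ∫ x, ∫ c in a..b, D c x := by
        congr 1
        ext x
        by_cases hx : x ∈ S
        · rw [Set.indicator_of_mem hx, Set.indicator_of_mem hx]
          have hcont : Continuous fun c : ℝ => fderiv ℝ f (c • x) x :=
            ((hf_diff.continuous_fderiv one_ne_zero).comp
              ((continuous_id.smul continuous_const : Continuous fun c : ℝ => c • x))).clm_apply
              continuous_const
          have := intervalIntegral.integral_eq_sub_of_hasDerivAt
            (f := fun c : ℝ => f (c • x)) (f' := fun c : ℝ => fderiv ℝ f (c • x) x)
            (fun c _ => hasDerivAt_line hf_diff x c) (hcont.intervalIntegrable a b)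
          rw [← this]
          congr 1
          ext c
          simp only [hD, Set.indicator_of_mem hx]
        · rw [Set.indicator_of_notMem hx, Set.indicator_of_notMem hx]
          have : ∀ c : ℝ, D c x = 0 := fun c => by
            simp only [hD, Set.indicator_of_notMem hx]
          simp [this]
    _ = ∫ x, ∫ c in Set.Ioc a b, D c x := by
        congr 1
        ext x
        rw [intervalIntegral.integral_of_le hab]
    _ = ∫ c in Set.Ioc a b, ∫ x, D c x := hswap
    _ = ∫ c in Set.Ioc a b, (c ^ (n + 1))⁻¹ * Jint n ψ (c * t) :=
        setIntegral_congr_fun measurableSet_Ioc fun c hc => key c (ha.trans_le hc.1.le)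
    _ = ∫ c in a..b, (c ^ (n + 1))⁻¹ * Jint n ψ (c * t) :=
        (intervalIntegral.integral_of_le hab).symm

lemma Psi_hasDeriv (hn : 1 ≤ n) (hf_diff : ContDiff ℝ 1 f) (hf_integrable : Integrable f)
    (hpsi_int : Integrable fun y : EuclideanSpace ℝ (Fin n) => fderiv ℝ f y y)
    (t : ℝ) {w : ℝ} (hw : 0 < w) :
    HasDerivAt (fun c : ℝ => (c ^ n)⁻¹ * Jint n f (c * t))
      ((w ^ (n + 1))⁻¹ * Jint n (fun y : EuclideanSpace ℝ (Fin n) => fderiv ℝ f y y) (w * t))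
      w := by
  set ψ : EuclideanSpace ℝ (Fin n) → ℝ := fun y => fderiv ℝ f y y with hψ
  set k : ℝ → ℝ := fun c => (c ^ (n + 1))⁻¹ * Jint n ψ (c * t) with hk
  set Ψ : ℝ → ℝ := fun c => (c ^ n)⁻¹ * Jint n f (c * t) with hΨdef
  have hG_cont : Continuous fun v : ℝ => Jint n ψ v := cont_J hn hpsi_int
  have hk_contOn : ContinuousOn k (Set.Ioi 0) := by
    refine ContinuousOn.mul (ContinuousOn.inv₀ (continuous_pow _).continuousOn
      fun c hc => pow_ne_zero _ (ne_of_gt hc)) ?_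
    exact (hG_cont.comp (continuous_mul_right t)).continuousOn
  have hΨeq : ∀ c : ℝ, 0 < c → Ψ c = Ψ 1 + ∫ s in (1:ℝ)..c, k s := by
    intro c hc
    rcases le_or_gt 1 c with h | h
    · have := star_eq hf_diff hf_integrable hpsi_int t one_pos h
      simp only [hΨdef, hk]
      linarith [this]
    · have := star_eq hf_diff hf_integrable hpsi_int t hc h.le
      rw [intervalIntegral.integral_symm] at this
      simp only [hΨdef, hk]
      linarith [this]
  have hkint : IntervalIntegrable k volume 1 w := by
    apply ContinuousOn.intervalIntegrable
    apply hk_contOn.mono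
    intro z hz
    rcases hz with ⟨hz1, _⟩
    have : (0:ℝ) < min 1 w := lt_min one_pos hw
    exact lt_of_lt_of_le this hz1
  have hFTC : HasDerivAt (fun c : ℝ => ∫ s in (1:ℝ)..c, k s) (k w) w :=
    intervalIntegral.integral_hasDerivAt_right hkint
      (hk_contOn.stronglyMeasurableAtFilter isOpen_Ioi w hw)
      (hk_contOn.continuousAt (Ioi_mem_nhds hw))
  have heq : Ψ =ᶠ[𝓝 w] fun c : ℝ => Ψ 1 + ∫ s in (1:ℝ)..c, k s := by
    filter_upwards [Ioi_mem_nhds hw] with c hc using hΨeq c hc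
  have h3 := ((hasDerivAt_const w (Ψ 1)).add hFTC).congr_of_eventuallyEq heq
  simpa using h3

lemma Q_hasDeriv (hn : 1 ≤ n) (hf_diff : ContDiff ℝ 1 f) (hf_integrable : Integrable f)
    (hpsi_int : Integrable fun y : EuclideanSpace ℝ (Fin n) => fderiv ℝ f y y)
    (t : ℝ) {w : ℝ} (hw : 0 < w) :
    HasDerivAt (fun c : ℝ => Jint n f (c * t))
      ((n * Jint n f (w * t)
        + Jint n (fun y : EuclideanSpace ℝ (Fin n) => fderiv ℝ f y y) (w * t)) / w) w := by
  have hΨ := Psi_hasDeriv hn hf_diff hf_integrable hpsi_int t hw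
  have hprod := (hasDerivAt_pow n w).mul hΨ
  have heq : (fun c : ℝ => Jint n f (c * t))
      =ᶠ[𝓝 w] fun c : ℝ => c ^ n * ((c ^ n)⁻¹ * Jint n f (c * t)) := by
    filter_upwards [Ioi_mem_nhds hw] with c hc
    rw [mul_inv_cancel_left₀ (pow_ne_zero _ (ne_of_gt hc))]
  have h2 := hprod.congr_of_eventuallyEq heq
  refine h2.congr_deriv ?_
  obtain ⟨m, rfl⟩ : ∃ m, n = m + 1 := ⟨n - 1, (Nat.succ_pred_eq_of_pos hn).symm⟩
  have hw' : w ≠ 0 := ne_of_gt hw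
  simp only [Nat.add_sub_cancel]
  field_simp
  ring

lemma hasDerivAt_Jf (hn : 1 ≤ n) (hf_diff : ContDiff ℝ 1 f) (hf_integrable : Integrable f)
    (hpsi_int : Integrable fun y : EuclideanSpace ℝ (Fin n) => fderiv ℝ f y y)
    {u : ℝ} (hu : u ≠ 0) :
    HasDerivAt (Jint n f)
      ((n * Jint n f u
        + Jint n (fun y : EuclideanSpace ℝ (Fin n) => fderiv ℝ f y y) u) / u) u := by
  rcases hu.lt_or_gt with hneg | hpos
  · -- u < 0 : use t = -1
    have hw : 0 < -u := neg_pos.2 hneg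
    have hR := Q_hasDeriv hn hf_diff hf_integrable hpsi_int (-1) hw
    have hcomp := hR.comp u (hasDerivAt_neg u)
    have hval : (-u) * -1 = u := by ring
    rw [hval] at hcomp
    have heqfun : (Jint n f) =ᶠ[𝓝 u] ((fun c : ℝ => Jint n f (c * -1)) ∘ Neg.neg) :=
      Eventually.of_forall fun v => by simp [Function.comp]
    have h4 := hcomp.congr_of_eventuallyEq heqfun
    refine h4.congr_deriv ?_
    ring
  · -- u > 0 : use t = 1
    have hR := Q_hasDeriv hn hf_diff hf_integrable hpsi_int 1 hpos
    simp only [mul_one] at hR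
    have heqfun : (fun c : ℝ => Jint n f c) = Jint n f := rfl
    exact hR

lemma deriv_nonneg_of_monotone {F : ℝ → ℝ} (hm : Monotone F) {d v : ℝ}
    (h : HasDerivAt F d v) : 0 ≤ d := by
  have hslope := hasDerivAt_iff_tendsto_slope.1 h
  have hsub : Set.Ioi v ⊆ {v}ᶜ := fun z hz => (show z ≠ v from ne_of_gt hz)
  have h2 : Tendsto (slope F v) (𝓝[>] v) (𝓝 d) :=
    hslope.mono_left (nhdsWithin_mono v hsub)
  refine ge_of_tendsto h2 ?_
  filter_upwards [eventually_mem_nhdsWithin] with z hz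
  have hvz : v < z := hz
  rw [slope_def_field]
  exact div_nonneg (sub_nonneg.2 (hm hvz.le)) (sub_nonneg.2 hvz.le)

/-- The distribution function of the sum. -/
def Ffun (n : ℕ) (f : EuclideanSpace ℝ (Fin n) → ℝ) (s : ℝ) : ℝ :=
  ∫ x in {y : EuclideanSpace ℝ (Fin n) | ∑ i, y i ≤ s}, f x

lemma F_add_H (hf_integrable : Integrable f) (hf_prob : ∫ x, f x = 1) (s : ℝ) :
    Ffun n f s + Jint n f s = 1 := by
  have hcompl : {y : EuclideanSpace ℝ (Fin n) | s < ∑ i, y i}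
      = {y : EuclideanSpace ℝ (Fin n) | ∑ i, y i ≤ s}ᶜ := by
    ext y; simp [not_le]
  rw [Jint, integral_indicator (meas_S s), hcompl, Ffun,
    integral_add_compl (meas_le s) hf_integrable, hf_prob]

lemma F_eq (hf_integrable : Integrable f) (hf_prob : ∫ x, f x = 1) :
    Ffun n f = fun s => 1 - Jint n f s :=
  funext fun s => by linarith [F_add_H hf_integrable hf_prob s]

lemma F_cont (hn : 1 ≤ n) (hf_integrable : Integrable f) (hf_prob : ∫ x, f x = 1) :
    Continuous (Ffun n f) := by
  rw [F_eq hf_integrable hf_prob]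
  exact continuous_const.sub (cont_J hn hf_integrable)

lemma F_mono (hf_nonneg : ∀ x, 0 ≤ f x) (hf_integrable : Integrable f) :
    Monotone (Ffun n f) := by
  intro s s' hss
  apply setIntegral_mono_set hf_integrable.integrableOn
    (Eventually.of_forall fun x => hf_nonneg x)
  exact HasSubset.Subset.eventuallyLE fun y hy => le_trans hy hss

lemma F_nonneg (hf_nonneg : ∀ x, 0 ≤ f x) (s : ℝ) : 0 ≤ Ffun n f s :=
  setIntegral_nonneg (meas_le s) fun x _ => hf_nonneg x

lemma F_hasDeriv (hn : 1 ≤ n) (hf_diff : ContDiff ℝ 1 f) (hf_integrable : Integrable f)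
    (hf_prob : ∫ x, f x = 1)
    (hpsi_int : Integrable fun y : EuclideanSpace ℝ (Fin n) => fderiv ℝ f y y)
    {u : ℝ} (hu : u ≠ 0) :
    HasDerivAt (Ffun n f)
      (-((n * Jint n f u
        + Jint n (fun y : EuclideanSpace ℝ (Fin n) => fderiv ℝ f y y) u) / u)) u := by
  rw [F_eq hf_integrable hf_prob]
  have h := (hasDerivAt_const u (1:ℝ)).sub
    (hasDerivAt_Jf hn hf_diff hf_integrable hpsi_int hu)
  rw [zero_sub] at h
  exact h

lemma F_atBot (hf_integrable : Integrable f) :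
    Tendsto (Ffun n f) atBot (𝓝 0) := by
  have h0 : (0:ℝ) = ∫ x : EuclideanSpace ℝ (Fin n), (0:ℝ) := by simp
  have heq : ∀ s : ℝ, Ffun n f s
      = ∫ x, Set.indicator {y : EuclideanSpace ℝ (Fin n) | ∑ i, y i ≤ s} f x := by
    intro s; rw [Ffun, ← integral_indicator (meas_le s)]
  rw [h0]
  apply Tendsto.congr (fun s => (heq s).symm)
  apply tendsto_integral_filter_of_dominated_convergence (fun x => ‖f x‖)
  · exact Eventually.of_forall fun s => hf_integrable.aestronglyMeasurable.indicator (meas_le s)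
  · exact Eventually.of_forall fun s => Eventually.of_forall fun x =>
      norm_indicator_le_norm_self _ _
  · exact hf_integrable.norm
  · refine Eventually.of_forall fun x => ?_
    apply tendsto_const_nhds.congr'
    filter_upwards [eventually_lt_atBot (∑ i, x i)] with s hs
    rw [Set.indicator_of_notMem (by simp only [Set.mem_setOf_eq]; exact not_le.2 hs)]

lemma inner_gradient_eq (f : EuclideanSpace ℝ (Fin n) → ℝ) (y : EuclideanSpace ℝ (Fin n)) :
    (inner ℝ y (gradient f y) : ℝ) = fderiv ℝ f y y := by
  rw [gradient, real_inner_comm, InnerProductSpace.toDual_symm_apply]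

lemma GH_split (hf_integrable : Integrable f)
    (hpsi_int : Integrable fun y : EuclideanSpace ℝ (Fin n) => fderiv ℝ f y y) (u : ℝ) :
    (∫ x : EuclideanSpace ℝ (Fin n),
        Set.indicator {y : EuclideanSpace ℝ (Fin n) | u < ∑ i, y i}
          (fun y => (inner ℝ y (gradient f y) : ℝ) + n * f y) x)
      = Jint n (fun y : EuclideanSpace ℝ (Fin n) => fderiv ℝ f y y) u + n * Jint n f u := by
  set S := {y : EuclideanSpace ℝ (Fin n) | u < ∑ i, y i} with hS
  have h2 : ∀ x, Set.indicator S (fun y => (inner ℝ y (gradient f y) : ℝ) + n * f y) x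
      = Set.indicator S (fun y : EuclideanSpace ℝ (Fin n) => fderiv ℝ f y y) x
        + n * Set.indicator S f x := by
    intro x
    by_cases hx : x ∈ S
    · rw [Set.indicator_of_mem hx, Set.indicator_of_mem hx, Set.indicator_of_mem hx,
        inner_gradient_eq]
    · rw [Set.indicator_of_notMem hx, Set.indicator_of_notMem hx,
        Set.indicator_of_notMem hx, mul_zero, add_zero]
  simp_rw [h2]
  rw [integral_add (hpsi_int.indicator (meas_S u))
    ((hf_integrable.indicator (meas_S u)).const_mul _), integral_const_mul]
  rfl

end SumAux

open SumAux

/-- Let `f` be a continuously differentiable probability density on `ℝⁿ`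
(`n ≥ 1`) with `∫ |⟨x, ∇f(x)⟩| dx < ∞`, and let `μ` be the law of `X ∼ f`.  Define
`g̃(s) = -(1/s) ∫ 1{x₁+⋯+xₙ > s} (⟨x, ∇f(x)⟩ + n f(x)) dx` for `s ≠ 0` and `g̃(0) = 0`.
Then `g̃` is a probability density of `S = X₁ + ⋯ + Xₙ`. -/
theorem sum_density_sensitivity_indicator_gt
    (n : ℕ) (hn : 1 ≤ n)
    (f : EuclideanSpace ℝ (Fin n) → ℝ)
    (hf_nonneg : ∀ x, 0 ≤ f x)
    (hf_diff : ContDiff ℝ 1 f)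
    (hf_prob : ∫ x, f x = 1)
    (hf_int : Integrable (fun x : EuclideanSpace ℝ (Fin n) => (inner ℝ x (gradient f x) : ℝ)))
    (μ : Measure (EuclideanSpace ℝ (Fin n)))
    (hμ : μ = volume.withDensity (fun x => ENNReal.ofReal (f x)))
    (g : ℝ → ℝ)
    (hg : ∀ s : ℝ, s ≠ 0 → g s =
      -((1 / s) * ∫ x : EuclideanSpace ℝ (Fin n),
        Set.indicator {y : EuclideanSpace ℝ (Fin n) | s < ∑ i, y i}
          (fun y => (inner ℝ y (gradient f y) : ℝ) + n * f y) x))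
    (hg0 : g 0 = 0) :
    ∀ s : ℝ, μ {x | ∑ i, x i ≤ s} = ENNReal.ofReal (∫ t in Set.Iic s, g t) := by
  classical
  have hf_integrable : Integrable f := by
    by_contra h
    rw [integral_undef h] at hf_prob
    norm_num at hf_prob
  have hpsi_int : Integrable (fun y : EuclideanSpace ℝ (Fin n) => fderiv ℝ f y y) := by
    refine hf_int.congr (Filter.Eventually.of_forall fun y => ?_)
    exact inner_gradient_eq f y
  set F : ℝ → ℝ := Ffun n f with hFdef
  set H : ℝ → ℝ := Jint n f with hHdef
  set G : ℝ → ℝ := Jint n (fun y : EuclideanSpace ℝ (Fin n) => fderiv ℝ f y y) with hGdef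
  have hG_cont : Continuous G := cont_J hn hpsi_int
  have hH_cont : Continuous H := cont_J hn hf_integrable
  have hF_cont : Continuous F := F_cont hn hf_integrable hf_prob
  have hF_mono : Monotone F := F_mono hf_nonneg hf_integrable
  have hF_nonneg : ∀ s, 0 ≤ F s := F_nonneg hf_nonneg
  have hF_atBot : Filter.Tendsto F Filter.atBot (𝓝 0) := F_atBot hf_integrable
  have hg_eq : g = fun v => -((1 / v) * (G v + n * H v)) := by
    funext v
    by_cases hv : v = 0
    · subst hv; rw [hg0]; simp
    · rw [hg v hv, GH_split hf_integrable hpsi_int v]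
  have hgF : ∀ u : ℝ, u ≠ 0 → HasDerivAt F (g u) u := by
    intro u hu
    have h := F_hasDeriv hn hf_diff hf_integrable hf_prob hpsi_int hu
    convert h using 1
    rw [hg_eq]
    field_simp
    ring
  have hg_nonneg : ∀ u : ℝ, u ≠ 0 → 0 ≤ g u :=
    fun u hu => deriv_nonneg_of_monotone hF_mono (hgF u hu)
  have hg_meas : Measurable g := by
    rw [hg_eq]
    have h1 : Measurable fun v : ℝ => 1 / v := by
      simpa [one_div] using (measurable_inv : Measurable fun v : ℝ => v⁻¹)
    exact ((h1.mul (hG_cont.add (continuous_const.mul hH_cont)).measurable)).neg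
  set ν : Measure ℝ := volume.withDensity fun t => ENNReal.ofReal (g t) with hνdef
  have hν_apply : ∀ A : Set ℝ, MeasurableSet A → ν A = ∫⁻ t in A, ENNReal.ofReal (g t) := by
    intro A hA
    rw [hνdef, withDensity_apply _ hA]
  have hseg : ∀ a b : ℝ, a ≤ b → (0:ℝ) ∉ Set.Icc a b →
      ν (Set.Ioc a b) = ENNReal.ofReal (F b - F a) := by
    intro a b hab h0
    have hne : ∀ v ∈ Set.Icc a b, v ≠ 0 := fun v hv hv0 => h0 (hv0 ▸ hv)
    have hcont : ContinuousOn g (Set.Icc a b) := by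
      rw [hg_eq]
      refine ContinuousOn.neg (ContinuousOn.mul ?_ ?_)
      · exact ContinuousOn.div continuousOn_const continuousOn_id fun v hv => hne v hv
      · exact (hG_cont.add (continuous_const.mul hH_cont)).continuousOn
    have hii : IntervalIntegrable g volume a b :=
      ContinuousOn.intervalIntegrable (by rwa [Set.uIcc_of_le hab])
    have hio : IntegrableOn g (Set.Ioc a b) :=
      (intervalIntegrable_iff_integrableOn_Ioc_of_le hab).1 hii
    have hftc : ∫ t in a..b, g t = F b - F a :=
      intervalIntegral.integral_eq_sub_of_hasDerivAt
        (fun v hv => hgF v (hne v (by rwa [Set.uIcc_of_le hab] at hv))) hii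
    have hgnn : 0 ≤ᵐ[volume.restrict (Set.Ioc a b)] g :=
      ae_restrict_of_forall_mem measurableSet_Ioc
        fun v hv => hg_nonneg v (hne v ⟨hv.1.le, hv.2⟩)
    rw [hν_apply _ measurableSet_Ioc, ← ofReal_integral_eq_lintegral_ofReal hio hgnn,
      ← intervalIntegral.integral_of_le hab, hftc]
  have hseq_bot : ∀ r : ℝ, Filter.Tendsto (fun k : ℕ => r - ((k:ℝ) + 1))
      Filter.atTop Filter.atBot := by
    intro r
    have h1 : Filter.Tendsto (fun k : ℕ => ((k:ℝ) + 1)) Filter.atTop Filter.atTop :=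
      Filter.tendsto_atTop_add_const_right _ 1 tendsto_natCast_atTop_atTop
    have h2 := tendsto_neg_atTop_atBot.comp h1
    have h3 := Filter.tendsto_atBot_add_const_left Filter.atTop r h2
    refine h3.congr fun k => ?_
    simp [Function.comp, sub_eq_add_neg]
  have hFk : ∀ r : ℝ, Filter.Tendsto (fun k : ℕ => F (r - ((k:ℝ) + 1))) Filter.atTop (𝓝 0) :=
    fun r => hF_atBot.comp (hseq_bot r)
  -- ν on Iic s for s < 0
  have hν_neg : ∀ s : ℝ, s < 0 → ν (Set.Iic s) = ENNReal.ofReal (F s) := by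
    intro s hs
    have hM1 : Monotone fun k : ℕ => Set.Ioc (s - ((k:ℝ) + 1)) s := by
      intro k l hkl
      apply Set.Ioc_subset_Ioc_left
      have : ((k:ℝ)) ≤ l := Nat.cast_le.2 hkl
      linarith
    have hU1 : (⋃ k : ℕ, Set.Ioc (s - ((k:ℝ) + 1)) s) = Set.Iic s := by
      ext u
      simp only [Set.mem_iUnion, Set.mem_Ioc, Set.mem_Iic]
      constructor
      · rintro ⟨k, _, h2⟩; exact h2
      · intro h
        obtain ⟨k, hk⟩ := exists_nat_gt (s - u)
        exact ⟨k, by linarith, h⟩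
    have ht1 := tendsto_measure_iUnion_atTop (μ := ν) hM1
    rw [hU1] at ht1
    have hvals : ∀ k : ℕ, ν (Set.Ioc (s - ((k:ℝ) + 1)) s)
        = ENNReal.ofReal (F s - F (s - ((k:ℝ) + 1))) := by
      intro k
      have hk0 : (0:ℝ) ≤ (k:ℝ) := Nat.cast_nonneg k
      refine hseg _ _ (by linarith) ?_
      rintro ⟨_, h2⟩
      linarith
    have ht2 : Filter.Tendsto (fun k : ℕ => ν (Set.Ioc (s - ((k:ℝ) + 1)) s)) Filter.atTop
        (𝓝 (ENNReal.ofReal (F s - 0))) := by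
      simp_rw [hvals]
      exact (ENNReal.continuous_ofReal.tendsto _).comp (tendsto_const_nhds.sub (hFk s))
    have huniq := tendsto_nhds_unique ht1 ht2
    rw [huniq, sub_zero]
  -- ν on Iio 0
  have hν_Iio0 : ν (Set.Iio 0) = ENNReal.ofReal (F 0) := by
    have hM : Monotone fun k : ℕ => Set.Ioc (-((k:ℝ) + 1)) (-(1 / ((k:ℝ) + 1))) := by
      intro k l hkl
      have hcast : ((k:ℝ)) ≤ l := Nat.cast_le.2 hkl
      apply Set.Ioc_subset_Ioc
      · have : ((k:ℝ)) + 1 ≤ (l:ℝ) + 1 := by linarith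
        linarith
      · have h1 : (1:ℝ) / ((l:ℝ) + 1) ≤ 1 / ((k:ℝ) + 1) :=
          one_div_le_one_div_of_le (by positivity) (by linarith)
        linarith
    have hU : (⋃ k : ℕ, Set.Ioc (-((k:ℝ) + 1)) (-(1 / ((k:ℝ) + 1)))) = Set.Iio 0 := by
      ext u
      simp only [Set.mem_iUnion, Set.mem_Ioc, Set.mem_Iio]
      constructor
      · rintro ⟨k, _, h2⟩
        have : (0:ℝ) < 1 / ((k:ℝ) + 1) := by positivity
        linarith
      · intro hu
        obtain ⟨k, hk⟩ := exists_nat_gt (max (-u) (1 / (-u)))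
        have hk1 : -u < (k:ℝ) := lt_of_le_of_lt (le_max_left _ _) hk
        have hk2 : 1 / (-u) < (k:ℝ) := lt_of_le_of_lt (le_max_right _ _) hk
        have hu0 : (0:ℝ) < -u := by linarith
        refine ⟨k, by linarith, ?_⟩
        have hkpos : (0:ℝ) < (k:ℝ) + 1 := by positivity
        have h3 : 1 / ((k:ℝ) + 1) ≤ -u := by
          rw [div_le_iff₀ hkpos]
          have h4 : 1 / (-u) * (-u) = 1 := one_div_mul_cancel hu0.ne'
          nlinarith
        linarith
    have ht1 := tendsto_measure_iUnion_atTop (μ := ν) hM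
    rw [hU] at ht1
    have hvals : ∀ k : ℕ, ν (Set.Ioc (-((k:ℝ) + 1)) (-(1 / ((k:ℝ) + 1))))
        = ENNReal.ofReal (F (-(1 / ((k:ℝ) + 1))) - F (-((k:ℝ) + 1))) := by
      intro k
      have hkpos : (0:ℝ) < (k:ℝ) + 1 := by positivity
      have h1 : (1:ℝ) / ((k:ℝ) + 1) ≤ 1 := by
        rw [div_le_one hkpos]; linarith [(Nat.cast_nonneg k : (0:ℝ) ≤ k)]
      have hd : (0:ℝ) < 1 / ((k:ℝ) + 1) := by positivity
      refine hseg _ _ (by linarith) ?_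
      rintro ⟨_, h2⟩
      linarith
    have htF1 : Filter.Tendsto (fun k : ℕ => F (-(1 / ((k:ℝ) + 1)))) Filter.atTop (𝓝 (F 0)) := by
      have h0 : Filter.Tendsto (fun k : ℕ => -(1 / ((k:ℝ) + 1))) Filter.atTop (𝓝 0) := by
        have := (tendsto_one_div_add_atTop_nhds_zero_nat (𝕜 := ℝ)).neg
        simpa using this
      exact (hF_cont.continuousAt.tendsto).comp h0
    have htF2 : Filter.Tendsto (fun k : ℕ => F (-((k:ℝ) + 1))) Filter.atTop (𝓝 0) := by
      have := hFk 0
      simpa [zero_sub] using this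
    have ht2 : Filter.Tendsto (fun k : ℕ => ν (Set.Ioc (-((k:ℝ) + 1)) (-(1 / ((k:ℝ) + 1)))))
        Filter.atTop (𝓝 (ENNReal.ofReal (F 0 - 0))) := by
      simp_rw [hvals]
      exact (ENNReal.continuous_ofReal.tendsto _).comp (htF1.sub htF2)
    have huniq := tendsto_nhds_unique ht1 ht2
    rw [huniq, sub_zero]
  -- ν on Ioc 0 s for 0 < s
  have hν_pos : ∀ s : ℝ, 0 < s → ν (Set.Ioc 0 s) = ENNReal.ofReal (F s - F 0) := by
    intro s hs
    have hM : Monotone fun k : ℕ => Set.Ioc (s / ((k:ℝ) + 2)) s := by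
      intro k l hkl
      apply Set.Ioc_subset_Ioc_left
      have hcast : ((k:ℝ)) ≤ l := Nat.cast_le.2 hkl
      gcongr
    have hU : (⋃ k : ℕ, Set.Ioc (s / ((k:ℝ) + 2)) s) = Set.Ioc 0 s := by
      ext u
      simp only [Set.mem_iUnion, Set.mem_Ioc]
      constructor
      · rintro ⟨k, h1, h2⟩
        have : (0:ℝ) < s / ((k:ℝ) + 2) := by positivity
        exact ⟨by linarith, h2⟩
      · rintro ⟨hu0, hus⟩
        obtain ⟨k, hk⟩ := exists_nat_gt (s / u)
        refine ⟨k, ?_, hus⟩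
        rw [div_lt_iff₀ (by positivity)]
        have h4 : s / u * u = s := by field_simp
        nlinarith
    have ht1 := tendsto_measure_iUnion_atTop (μ := ν) hM
    rw [hU] at ht1
    have hvals : ∀ k : ℕ, ν (Set.Ioc (s / ((k:ℝ) + 2)) s)
        = ENNReal.ofReal (F s - F (s / ((k:ℝ) + 2))) := by
      intro k
      have hd : (0:ℝ) < s / ((k:ℝ) + 2) := by positivity
      refine hseg _ _ (div_le_self hs.le (by linarith [(Nat.cast_nonneg k : (0:ℝ) ≤ k)])) ?_
      rintro ⟨h1, _⟩
      linarith
    have htF1 : Filter.Tendsto (fun k : ℕ => F (s / ((k:ℝ) + 2))) Filter.atTop (𝓝 (F 0)) := by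
      have h0 : Filter.Tendsto (fun k : ℕ => s / ((k:ℝ) + 2)) Filter.atTop (𝓝 0) := by
        have h' : Filter.Tendsto (fun k : ℕ => (((k:ℝ) + 2))⁻¹) Filter.atTop (𝓝 0) :=
          tendsto_inv_atTop_zero.comp
            (Filter.tendsto_atTop_add_const_right _ 2 tendsto_natCast_atTop_atTop)
        simpa [div_eq_mul_inv] using tendsto_const_nhds.mul h'
      exact (hF_cont.continuousAt.tendsto).comp h0
    have ht2 : Filter.Tendsto (fun k : ℕ => ν (Set.Ioc (s / ((k:ℝ) + 2)) s)) Filter.atTop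
        (𝓝 (ENNReal.ofReal (F s - F 0))) := by
      simp_rw [hvals]
      exact (ENNReal.continuous_ofReal.tendsto _).comp (tendsto_const_nhds.sub htF1)
    exact tendsto_nhds_unique ht1 ht2
  have hν_sing : ν {(0:ℝ)} = 0 := by
    rw [hν_apply _ (measurableSet_singleton 0),
      Measure.restrict_eq_zero.2 Real.volume_singleton, lintegral_zero_measure]
  -- main computation
  intro s
  have hνIic : ν (Set.Iic s) = ENNReal.ofReal (F s) := by
    rcases lt_or_ge s 0 with hs | hs
    · exact hν_neg s hs
    · have hIic0 : Set.Iic (0:ℝ) = Set.Iio 0 ∪ {0} := by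
        ext u; simp [le_iff_lt_or_eq]
      have h1 : Set.Iic s = Set.Iic 0 ∪ Set.Ioc 0 s := (Set.Iic_union_Ioc_eq_Iic hs).symm
      have hIoc_val : ν (Set.Ioc 0 s) = ENNReal.ofReal (F s - F 0) := by
        rcases eq_or_lt_of_le hs with hs0 | hs0
        · rw [← hs0]
          simp
        · exact hν_pos s hs0
      have hd2 : Disjoint (Set.Iic (0:ℝ)) (Set.Ioc 0 s) := Set.Iic_disjoint_Ioc le_rfl
      have hd1 : Disjoint (Set.Iio (0:ℝ)) {(0:ℝ)} := by
        simp [Set.disjoint_singleton_right]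
      rw [h1, measure_union hd2 measurableSet_Ioc, hIic0,
        measure_union hd1 (measurableSet_singleton 0), hν_Iio0, hν_sing, add_zero, hIoc_val,
        ← ENNReal.ofReal_add (hF_nonneg 0) (sub_nonneg.2 (hF_mono hs))]
      congr 1
      ring
  have hae0 : 0 ≤ᵐ[volume.restrict (Set.Iic s)] g := by
    have h0 : ∀ᵐ v : ℝ ∂volume, v ≠ 0 := by
      rw [ae_iff]
      have : {v : ℝ | ¬ v ≠ 0} = {0} := by ext v; simp
      rw [this]
      exact Real.volume_singleton
    exact ae_restrict_of_ae (h0.mono fun v hv => hg_nonneg v hv)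
  have haesm : AEStronglyMeasurable g (volume.restrict (Set.Iic s)) :=
    hg_meas.aestronglyMeasurable.restrict
  have hlint : ∫⁻ t in Set.Iic s, ENNReal.ofReal (g t) = ENNReal.ofReal (F s) := by
    rw [← hν_apply _ measurableSet_Iic, hνIic]
  have hfin : IntegrableOn g (Set.Iic s) := by
    refine ⟨haesm, ?_⟩
    rw [hasFiniteIntegral_iff_ofReal hae0, hlint]
    exact ENNReal.ofReal_lt_top
  have hint_eq : ∫ t in Set.Iic s, g t = F s := by
    rw [integral_eq_lintegral_of_nonneg_ae hae0 haesm, hlint,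
      ENNReal.toReal_ofReal (hF_nonneg s)]
  rw [hint_eq, hμ, withDensity_apply _ (meas_le s),
    ← ofReal_integral_eq_lintegral_ofReal hf_integrable.integrableOn
      (Filter.Eventually.of_forall hf_nonneg)]
  rfl
end
end

section
/- Fix i ∈ {1,…,n}. Define gᵢ : ℝ → ℝ by gᵢ(s) = (1/s) ∫_{ℝⁿ} 1{xᵢ ≤ s} (xᵢ · ∂f/∂xᵢ(x) + f(x)) dx for s ≠ 0, and gᵢ(0) = 0. Then gᵢ is a probability density of the i-th marginal: for every s ∈ ℝ, μ({x ∈ ℝⁿ : xᵢ ≤ s}) = ∫_{−∞}^{s} gᵢ(t) dt. -/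
open MeasureTheory Set Filter Topology

lemma key1d (φ dφ : ℝ → ℝ) (hd : ∀ t, HasDerivAt φ (dφ t) t)
    (hpos : ∀ t, 0 ≤ φ t) (hint : Integrable φ)
    (hint2 : Integrable (fun t => t * dφ t)) (s : ℝ) :
    ∫ t in Iic s, (t * dφ t + φ t) = s * φ s := by
  have hd' : ∀ t : ℝ, HasDerivAt (fun t => t * φ t) (t * dφ t + φ t) t := by
    intro t
    have := (hasDerivAt_id' t).mul (hd t)
    exact this.congr_deriv (by ring)
  have h'int : Integrable (fun t => t * dφ t + φ t) := hint2.add hint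
  have hlim : Tendsto (fun t => t * φ t) atBot (𝓝 (limUnder atBot (fun t : ℝ => t * φ t))) :=
    tendsto_limUnder_of_hasDerivAt_of_integrableOn_Iic (a := 0)
      (fun t _ => hd' t) h'int.integrableOn
  set L := limUnder atBot (fun t : ℝ => t * φ t) with hL
  have hL0 : L = 0 := by
    by_contra hne
    rcases lt_or_gt_of_ne hne with hLneg | hLpos
    · have hev : ∀ᶠ t in atBot, t * φ t ≤ L / 2 := by
        have : Iio (L/2) ∈ 𝓝 L := Iio_mem_nhds (by linarith)
        filter_upwards [hlim this] with t ht using le_of_lt ht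
      rcases (hev.and (eventually_le_atBot (-1 : ℝ))).exists_forall_of_atBot with ⟨T, hT⟩
      have hTneg : T < 0 := lt_of_le_of_lt (hT T le_rfl).2 (by norm_num)
      have key : ∀ t ∈ Iic T, (-L/2) * (-t)⁻¹ ≤ φ t := by
        intro t ht
        have htneg : t < 0 := lt_of_le_of_lt ht hTneg
        have h1 : t * φ t ≤ L / 2 := (hT t ht).1
        have h2 : (0:ℝ) < -t := by linarith
        have he : φ t * (-t) = -(t * φ t) := by ring
        rw [mul_inv_le_iff₀ h2]
        linarith
      have hIntOn : IntegrableOn (fun t => (-L/2) * (-t)⁻¹) (Iic T) := by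
        apply Integrable.mono' hint.integrableOn
        · exact (Continuous.aestronglyMeasurable (by continuity)).mul
            ((measurable_neg.inv).aestronglyMeasurable)
        filter_upwards [ae_restrict_mem measurableSet_Iic] with t ht
        have htneg : t < 0 := lt_of_le_of_lt ht hTneg
        have h2 : (0:ℝ) < -t := by linarith
        have h3 : (0:ℝ) ≤ (-L/2) * (-t)⁻¹ :=
          mul_nonneg (by linarith) (inv_nonneg.2 h2.le)
        rw [Real.norm_eq_abs, abs_of_nonneg h3]
        exact key t ht
      have hIntOn2 : IntegrableOn (fun t : ℝ => (-t)⁻¹) (Iic T) := by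
        have hc : (-L/2) ≠ 0 := ne_of_gt (by linarith)
        have h4 := hIntOn.const_mul (-L/2)⁻¹
        have h5 : (fun x : ℝ => (-L/2)⁻¹ * ((-L/2) * (-x)⁻¹)) = fun x : ℝ => (-x)⁻¹ := by
          funext x; rw [inv_mul_cancel_left₀ hc]
        rwa [h5] at h4
      have hIci : IntegrableOn (fun x : ℝ => x⁻¹) (Ici (-T)) := by
        have := (MeasurePreserving.integrableOn_comp_preimage
          (Measure.measurePreserving_neg (volume : Measure ℝ))
          (Homeomorph.neg ℝ).measurableEmbedding
          (f := fun t : ℝ => (-t)⁻¹) (s := Iic T)).2 hIntOn2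
        simpa [Function.comp_def, neg_neg, Set.preimage, Set.Ici, neg_le] using this
      exact not_IntegrableOn_Ici_inv hIci
    · have hev : ∀ᶠ t in atBot, L / 2 ≤ t * φ t := by
        have : Ioi (L/2) ∈ 𝓝 L := Ioi_mem_nhds (by linarith)
        filter_upwards [hlim this] with t ht using le_of_lt ht
      rcases (hev.and (eventually_le_atBot (-1 : ℝ))).exists_forall_of_atBot with ⟨T, hT⟩
      have h1 := (hT (min T (-1)) (min_le_left _ _)).1
      have h2 : min T (-1) ≤ -1 := min_le_right _ _
      nlinarith [hpos (min T (-1))]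
  have := integral_Iic_of_hasDerivAt_of_tendsto' (a := s) (f := fun t => t * φ t)
    (f' := fun t => t * dφ t + φ t) (fun x _ => hd' x) h'int.integrableOn (hL0 ▸ hlim)
  simpa using this

/-- Let `f` be a continuously differentiable probability density on `ℝⁿ`
(`n ≥ 1`) with `∫ |xᵢ ∂f/∂xᵢ(x)| dx < ∞` for a fixed `i`, and let `μ` be the law of
`X ∼ f`.  Define `gᵢ(s) = (1/s) ∫ 1{xᵢ ≤ s} (xᵢ ∂f/∂xᵢ(x) + f(x)) dx` for `s ≠ 0` and
`gᵢ(0) = 0`.  Then `gᵢ` is a probability density of the `i`-th marginal. -/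
theorem marginal_density_sensitivity_indicator_le
    (n : ℕ) (hn : 1 ≤ n) (i : Fin n)
    (f : EuclideanSpace ℝ (Fin n) → ℝ)
    (hf_nonneg : ∀ x, 0 ≤ f x)
    (hf_diff : ContDiff ℝ 1 f)
    (hf_prob : ∫ x, f x = 1)
    (hf_int : Integrable (fun x : EuclideanSpace ℝ (Fin n) =>
      x i * fderiv ℝ f x (EuclideanSpace.single i 1)))
    (μ : Measure (EuclideanSpace ℝ (Fin n)))
    (hμ : μ = volume.withDensity (fun x => ENNReal.ofReal (f x)))
    (g : ℝ → ℝ)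
    (hg : ∀ s : ℝ, s ≠ 0 → g s =
      (1 / s) * ∫ x : EuclideanSpace ℝ (Fin n),
        Set.indicator {y : EuclideanSpace ℝ (Fin n) | y i ≤ s}
          (fun y => y i * fderiv ℝ f y (EuclideanSpace.single i 1) + f y) x)
    (hg0 : g 0 = 0) :
    ∀ s : ℝ, μ {x | x i ≤ s} = ENNReal.ofReal (∫ t in Set.Iic s, g t) := by
  obtain ⟨m, rfl⟩ : ∃ m, n = m + 1 := ⟨n - 1, (Nat.succ_pred_eq_of_pos hn).symm⟩
  intro s
  have hfd : Differentiable ℝ f := hf_diff.differentiable one_ne_zero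
  set v : EuclideanSpace ℝ (Fin (m+1)) := EuclideanSpace.single i 1 with hv
  have hfi : Integrable f := by
    by_contra h
    rw [integral_undef h] at hf_prob; norm_num at hf_prob
  -- the measure-preserving equivalence
  set E : (ℝ × (Fin m → ℝ)) ≃ᵐ EuclideanSpace ℝ (Fin (m+1)) :=
    (MeasurableEquiv.piFinSuccAbove (fun _ => ℝ) i).symm.trans
      (MeasurableEquiv.toLp 2 (Fin (m+1) → ℝ)).symm.symm with hE
  have hEmp : MeasurePreserving E :=
    ((EuclideanSpace.volume_preserving_symm_measurableEquiv_toLp (Fin (m+1))).symm).comp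
      (volume_preserving_piFinSuccAbove (fun _ => ℝ) i).symm
  have hEi : ∀ p : ℝ × (Fin m → ℝ), (E p) i = p.1 := by
    intro p
    simp [hE, MeasurableEquiv.trans_apply, MeasurableEquiv.coe_toLp,
      MeasurableEquiv.piFinSuccAbove_symm_apply]
  have haff : ∀ (y : Fin m → ℝ) (t : ℝ), E (t, y) = E (0, y) + t • v := by
    intro y t
    ext j
    rcases eq_or_ne j i with rfl | hj
    · simp [hE, hv, MeasurableEquiv.trans_apply, MeasurableEquiv.coe_toLp,
        MeasurableEquiv.piFinSuccAbove_symm_apply, PiLp.add_apply, PiLp.smul_apply,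
        EuclideanSpace.single_apply]
    · obtain ⟨k, rfl⟩ := Fin.exists_succAbove_eq hj
      simp [hE, hv, MeasurableEquiv.trans_apply, MeasurableEquiv.coe_toLp,
        MeasurableEquiv.piFinSuccAbove_symm_apply, PiLp.add_apply, PiLp.smul_apply,
        EuclideanSpace.single_apply, Fin.succAbove_ne i k]
  have hder : ∀ (y : Fin m → ℝ) (t : ℝ),
      HasDerivAt (fun t' => f (E (t', y))) (fderiv ℝ f (E (t, y)) v) t := by
    intro y t
    have h1 : HasDerivAt (fun t' : ℝ => E (0, y) + t' • v) v t := by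
      simpa using ((hasDerivAt_id t).smul_const v).const_add (E (0, y))
    have h2 := (hfd (E (0, y) + t • v)).hasFDerivAt.comp_hasDerivAt t h1
    have heq : (fun t' : ℝ => f (E (t', y))) = fun t' => f (E (0, y) + t' • v) := by
      funext t'; rw [haff y t']
    rw [heq, haff y t]
    exact h2
  -- transfer helpers
  have hTint : ∀ G : EuclideanSpace ℝ (Fin (m+1)) → ℝ, Integrable G →
      Integrable (fun p : ℝ × (Fin m → ℝ) => G (E p)) := fun G hG =>
    (hEmp.integrable_comp_emb E.measurableEmbedding).2 hG
  have hTeq : ∀ G : EuclideanSpace ℝ (Fin (m+1)) → ℝ,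
      ∫ p : ℝ × (Fin m → ℝ), G (E p) = ∫ x, G x := fun G =>
    hEmp.integral_comp E.measurableEmbedding G
  have hxim : Measurable fun x : EuclideanSpace ℝ (Fin (m+1)) => x i :=
    (measurable_pi_apply i).comp (MeasurableEquiv.toLp 2 (Fin (m+1) → ℝ)).symm.measurable
  have hSm : ∀ r : ℝ, MeasurableSet {x : EuclideanSpace ℝ (Fin (m+1)) | x i ≤ r} :=
    fun r => measurableSet_le hxim measurable_const
  have hQm : ∀ r : ℝ, MeasurableSet {q : ℝ × (Fin m → ℝ) | q.1 ≤ r} :=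
    fun r => measurableSet_le measurable_fst measurable_const
  set P : ℝ → ℝ := fun t => ∫ y : Fin m → ℝ, f (E (t, y)) with hPdef
  -- slice integrability
  have hfiE : Integrable (fun q : ℝ × (Fin m → ℝ) => f (E q)) := hTint f hfi
  have hDiE : Integrable (fun p : ℝ × (Fin m → ℝ) => p.1 * fderiv ℝ f (E p) v) := by
    have h := hTint _ hf_int
    simpa only [hEi] using h
  have hs1 : ∀ᵐ y : Fin m → ℝ, Integrable (fun t => f (E (t, y))) := by
    have h := hfiE
    rw [Measure.volume_eq_prod] at h
    exact h.prod_left_ae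
  have hs2 : ∀ᵐ y : Fin m → ℝ, Integrable (fun t => t * fderiv ℝ f (E (t, y)) v) := by
    have h := hDiE
    rw [Measure.volume_eq_prod] at h
    exact h.prod_left_ae
  -- Claim B
  have claimB : ∀ r : ℝ,
      (∫ x : EuclideanSpace ℝ (Fin (m+1)),
        Set.indicator {y : EuclideanSpace ℝ (Fin (m+1)) | y i ≤ r}
          (fun y => y i * fderiv ℝ f y v + f y) x) = r * P r := by
    intro r
    have hφint : Integrable (fun x : EuclideanSpace ℝ (Fin (m+1)) =>
        x i * fderiv ℝ f x v + f x) := hf_int.add hfi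
    rw [← hTeq _]
    have hindE : (fun p : ℝ × (Fin m → ℝ) =>
        Set.indicator {y : EuclideanSpace ℝ (Fin (m+1)) | y i ≤ r}
          (fun y => y i * fderiv ℝ f y v + f y) (E p))
        = fun p => Set.indicator {q : ℝ × (Fin m → ℝ) | q.1 ≤ r}
            (fun q => q.1 * fderiv ℝ f (E q) v + f (E q)) p := by
      funext p
      simp only [Set.indicator_apply, Set.mem_setOf_eq, hEi]
    rw [hindE]
    have hintP : Integrable (fun q : ℝ × (Fin m → ℝ) =>
        q.1 * fderiv ℝ f (E q) v + f (E q)) := hDiE.add hfiE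
    have hindint : Integrable (fun p : ℝ × (Fin m → ℝ) =>
        Set.indicator {q : ℝ × (Fin m → ℝ) | q.1 ≤ r}
          (fun q => q.1 * fderiv ℝ f (E q) v + f (E q)) p) := hintP.indicator (hQm r)
    rw [Measure.volume_eq_prod] at hindint
    rw [show (volume : Measure (ℝ × (Fin m → ℝ))) = (volume : Measure ℝ).prod volume from
      Measure.volume_eq_prod ℝ (Fin m → ℝ)]
    rw [integral_prod_symm _ hindint]
    have hae : ∀ᵐ y : Fin m → ℝ, (∫ t : ℝ,
        Set.indicator {q : ℝ × (Fin m → ℝ) | q.1 ≤ r}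
          (fun q => q.1 * fderiv ℝ f (E q) v + f (E q)) (t, y)) = r * f (E (r, y)) := by
      filter_upwards [hs1, hs2] with y h1 h2
      have heqind : (fun t : ℝ => Set.indicator {q : ℝ × (Fin m → ℝ) | q.1 ≤ r}
            (fun q => q.1 * fderiv ℝ f (E q) v + f (E q)) (t, y))
          = Set.indicator (Iic r) (fun t => t * fderiv ℝ f (E (t, y)) v + f (E (t, y))) := by
        funext t
        simp [Set.indicator_apply, Set.mem_setOf_eq, Set.mem_Iic]
      rw [heqind, integral_indicator measurableSet_Iic]
      exact key1d (fun t => f (E (t, y))) (fun t => fderiv ℝ f (E (t, y)) v)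
        (fun t => hder y t) (fun t => hf_nonneg _) h1 h2 r
    rw [integral_congr_ae hae, integral_const_mul]
  -- Claim A
  have claimA : ∫ x in {x : EuclideanSpace ℝ (Fin (m+1)) | x i ≤ s}, f x
      = ∫ t in Iic s, P t := by
    rw [← integral_indicator (hSm s), ← hTeq _]
    have hindE : (fun p : ℝ × (Fin m → ℝ) =>
        Set.indicator {x : EuclideanSpace ℝ (Fin (m+1)) | x i ≤ s} f (E p))
        = fun p => Set.indicator {q : ℝ × (Fin m → ℝ) | q.1 ≤ s} (fun q => f (E q)) p := by
      funext p
      simp only [Set.indicator_apply, Set.mem_setOf_eq, hEi]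
    rw [hindE]
    have hindint : Integrable (fun p : ℝ × (Fin m → ℝ) =>
        Set.indicator {q : ℝ × (Fin m → ℝ) | q.1 ≤ s} (fun q => f (E q)) p) :=
      hfiE.indicator (hQm s)
    rw [Measure.volume_eq_prod] at hindint
    rw [show (volume : Measure (ℝ × (Fin m → ℝ))) = (volume : Measure ℝ).prod volume from
      Measure.volume_eq_prod ℝ (Fin m → ℝ)]
    rw [integral_prod _ hindint]
    have hinner : ∀ t : ℝ, (∫ y : Fin m → ℝ,
        Set.indicator {q : ℝ × (Fin m → ℝ) | q.1 ≤ s} (fun q => f (E q)) (t, y))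
        = Set.indicator (Iic s) P t := by
      intro t
      by_cases ht : t ≤ s
      · rw [Set.indicator_of_mem (Set.mem_Iic.2 ht)]
        apply integral_congr_ae
        filter_upwards with y
        rw [Set.indicator_of_mem (by exact ht : (t, y) ∈ {q : ℝ × (Fin m → ℝ) | q.1 ≤ s})]
      · rw [Set.indicator_of_notMem (by simpa using ht)]
        have : ∀ y : Fin m → ℝ,
            Set.indicator {q : ℝ × (Fin m → ℝ) | q.1 ≤ s} (fun q => f (E q)) (t, y) = 0 := by
          intro y
          exact Set.indicator_of_notMem (by exact ht) _
        simp [this]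
    rw [integral_congr_ae (Filter.Eventually.of_forall hinner),
      integral_indicator measurableSet_Iic]
  -- put everything together
  have hgP : ∀ r : ℝ, r ≠ 0 → g r = P r := by
    intro r hr
    rw [hg r hr]
    rw [show (fun y : EuclideanSpace ℝ (Fin (m+1)) =>
      y i * fderiv ℝ f y (EuclideanSpace.single i 1) + f y)
      = fun y => y i * fderiv ℝ f y v + f y from rfl]
    rw [claimB r]
    field_simp
  have hgae : ∀ᵐ t : ℝ, g t = P t := by
    rw [ae_iff]
    refine measure_mono_null (fun t ht => ?_) (Real.volume_singleton (a := 0))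
    simp only [Set.mem_setOf_eq] at ht
    by_contra h0
    exact ht (hgP t (by simpa using h0))
  have hIic : ∫ t in Iic s, g t = ∫ t in Iic s, P t :=
    integral_congr_ae (ae_restrict_of_ae hgae)
  rw [hμ, withDensity_apply _ (hSm s)]
  rw [← ofReal_integral_eq_lintegral_ofReal hfi.integrableOn
    (ae_restrict_of_ae (Filter.Eventually.of_forall hf_nonneg))]
  rw [hIic, ← claimA]
end

section
/- Fix i ∈ {1,…,n}. Define g̃ᵢ : ℝ → ℝ by g̃ᵢ(s) = −(1/s) ∫_{ℝⁿ} 1{xᵢ > s} (xᵢ · ∂f/∂xᵢ(x) + f(x)) dx for s ≠ 0, and g̃ᵢ(0) = 0. Then g̃ᵢ is a probability density of the i-th marginal: for every s ∈ ℝ, μ({x ∈ ℝⁿ : xᵢ ≤ s}) = ∫_{−∞}^{s} g̃ᵢ(t) dt. -/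
open MeasureTheory

open Set Filter Topology


/-- If `φ` is nonnegative and integrable and `x * φ x` tends to `L` at `+∞`, then `L = 0`. -/
lemma MDSIG_limit_zero (φ : ℝ → ℝ) (hnn : ∀ x, 0 ≤ φ x)
    (hint : Integrable φ) {L : ℝ} (hL : Tendsto (fun x => x * φ x) atTop (𝓝 L)) :
    L = 0 := by
  by_contra hL0
  have h0 : (0:ℝ) ≤ L :=
    ge_of_tendsto hL (eventually_atTop.2 ⟨0, fun x hx => mul_nonneg hx (hnn x)⟩)
  have hLpos : 0 < L := lt_of_le_of_ne h0 (Ne.symm hL0)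
  have hev : ∀ᶠ x in atTop, L / 2 < x * φ x :=
    hL.eventually (eventually_gt_nhds (by linarith))
  obtain ⟨A₀, hA₀⟩ := hev.exists_forall_of_atTop
  set A := max A₀ 1 with hA
  have hA1 : (1:ℝ) ≤ A := le_max_right _ _
  have hbound : ∀ x ∈ Ioi A, L / 2 * x⁻¹ ≤ φ x := by
    intro x hx
    have hxA : A ≤ x := le_of_lt hx
    have hx1 : (1:ℝ) ≤ x := hA1.trans hxA
    have hxpos : 0 < x := by linarith
    have h1 : L / 2 < x * φ x := hA₀ x ((le_max_left _ _).trans hxA)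
    calc L / 2 * x⁻¹ ≤ (x * φ x) * x⁻¹ := by
          apply mul_le_mul_of_nonneg_right h1.le (by positivity)
      _ = φ x := by field_simp
  have hint2 : IntegrableOn (fun x => L / 2 * x⁻¹) (Ioi A) := by
    apply Integrable.mono' (hint.integrableOn)
    · exact (measurable_const.mul measurable_inv).aestronglyMeasurable
    · filter_upwards [ae_restrict_mem measurableSet_Ioi] with x hx
      rw [Real.norm_eq_abs, abs_of_nonneg (by
        have : (0:ℝ) < x := lt_of_lt_of_le (by linarith) (le_of_lt hx)
        positivity)]
      exact hbound x hx
  have hinv : IntegrableOn (fun x : ℝ => x⁻¹) (Ioi A) := by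
    have h2 := hint2.const_mul (2 / L)
    have h3 : (fun x : ℝ => 2 / L * (L / 2 * x⁻¹)) = fun x : ℝ => x⁻¹ := by
      funext x; field_simp
    rwa [h3] at h2
  have : IntegrableOn (fun x : ℝ => x ^ (-1 : ℝ)) (Ioi A) := by
    apply hinv.congr_fun ?_ measurableSet_Ioi
    intro x hx
    exact (Real.rpow_neg_one x).symm
  rw [integrableOn_Ioi_rpow_iff (by linarith : (0:ℝ) < A)] at this
  linarith

/-- One-dimensional integration by parts identity. -/
lemma MDSIG_key1d (φ dφ : ℝ → ℝ) (hφ : ∀ x, HasDerivAt φ (dφ x) x)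
    (hnn : ∀ x, 0 ≤ φ x) (hint : Integrable φ)
    (hint2 : Integrable (fun x => x * dφ x + φ x)) (t : ℝ) :
    ∫ x in Set.Ioi t, (x * dφ x + φ x) = -(t * φ t) := by
  set ψ := fun x : ℝ => x * φ x with hψdef
  have hψ : ∀ x, HasDerivAt ψ (x * dφ x + φ x) x := by
    intro x
    have := (hasDerivAt_id x).mul (hφ x)
    exact this.congr_deriv (by simp only [id]; ring)
  have h1 : Tendsto (fun x => ∫ u in (0:ℝ)..x, (u * dφ u + φ u)) atTop
      (𝓝 (∫ u in Set.Ioi 0, (u * dφ u + φ u))) :=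
    intervalIntegral_tendsto_integral_Ioi 0 hint2.integrableOn tendsto_id
  have h2 : ∀ x : ℝ, ∫ u in (0:ℝ)..x, (u * dφ u + φ u) = ψ x - ψ 0 := fun x =>
    intervalIntegral.integral_eq_sub_of_hasDerivAt (fun u _ => hψ u)
      hint2.intervalIntegrable
  have h3 : Tendsto ψ atTop (𝓝 ((∫ u in Set.Ioi 0, (u * dφ u + φ u)) + ψ 0)) := by
    have h4 := h1.add (tendsto_const_nhds (x := ψ 0))
    simpa [h2, sub_add_cancel] using h4
  have hL0 : (∫ u in Set.Ioi 0, (u * dφ u + φ u)) + ψ 0 = 0 :=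
    MDSIG_limit_zero φ hnn hint h3
  rw [hL0] at h3
  have h5 := integral_Ioi_of_hasDerivAt_of_tendsto' (a := t) (fun x _ => hψ x)
    hint2.integrableOn h3
  rw [h5]; simp [hψdef]

/-- The measurable equivalence splitting off the `i`-th coordinate of `ℝ^(m+1)`. -/
noncomputable def MDSIG_T (m : ℕ) (i : Fin (m+1)) :
    (ℝ × (Fin m → ℝ)) ≃ᵐ EuclideanSpace ℝ (Fin (m+1)) :=
  ((MeasurableEquiv.piFinSuccAbove (fun _ : Fin (m+1) => ℝ) i).symm.trans
    (MeasurableEquiv.toLp 2 (Fin (m+1) → ℝ)))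

lemma MDSIG_T_mp (m : ℕ) (i : Fin (m+1)) : MeasurePreserving (MDSIG_T m i) :=
  ((EuclideanSpace.volume_preserving_symm_measurableEquiv_toLp (Fin (m+1))).symm).comp
    ((volume_preserving_piFinSuccAbove (fun _ : Fin (m+1) => ℝ) i).symm _)

lemma MDSIG_T_apply (m : ℕ) (i : Fin (m+1)) (p : ℝ × (Fin m → ℝ)) (j : Fin (m+1)) :
    (MDSIG_T m i p) j = Fin.insertNth (α := fun _ => ℝ) i p.1 p.2 j := rfl

lemma MDSIG_T_coord (m : ℕ) (i : Fin (m+1)) (p : ℝ × (Fin m → ℝ)) :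
    (MDSIG_T m i p) i = p.1 := by
  rw [MDSIG_T_apply, Fin.insertNth_apply_same]

lemma MDSIG_T_affine (m : ℕ) (i : Fin (m+1)) (y : Fin m → ℝ) (u : ℝ) :
    MDSIG_T m i (u, y) = MDSIG_T m i (0, y) + u • EuclideanSpace.single i 1 := by
  apply PiLp.ext
  intro j
  rw [PiLp.add_apply, PiLp.smul_apply, EuclideanSpace.single_apply, MDSIG_T_apply,
    MDSIG_T_apply]
  rcases eq_or_ne j i with rfl | hne
  · simp [Fin.insertNth_apply_same]
  · rcases Fin.exists_succAbove_eq hne with ⟨k, rfl⟩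
    have hne' : i.succAbove k ≠ i := Fin.succAbove_ne i k
    simp [Fin.insertNth_apply_succAbove, hne']

lemma MDSIG_coord_measurable (m : ℕ) (i : Fin (m+1)) :
    Measurable (fun x : EuclideanSpace ℝ (Fin (m+1)) => x i) :=
  (measurable_pi_apply i).comp (MeasurableEquiv.toLp 2 (Fin (m+1) → ℝ)).symm.measurable

/-- Let `f` be a continuously differentiable probability density on `ℝⁿ`
(`n ≥ 1`) with `∫ |xᵢ ∂f/∂xᵢ(x)| dx < ∞` for a fixed `i`, and let `μ` be the law of
`X ∼ f`.  Define `g̃ᵢ(s) = -(1/s) ∫ 1{xᵢ > s} (xᵢ ∂f/∂xᵢ(x) + f(x)) dx` for `s ≠ 0` and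
`g̃ᵢ(0) = 0`.  Then `g̃ᵢ` is a probability density of the `i`-th marginal. -/
theorem marginal_density_sensitivity_indicator_gt
    (n : ℕ) (hn : 1 ≤ n) (i : Fin n)
    (f : EuclideanSpace ℝ (Fin n) → ℝ)
    (hf_nonneg : ∀ x, 0 ≤ f x)
    (hf_diff : ContDiff ℝ 1 f)
    (hf_prob : ∫ x, f x = 1)
    (hf_int : Integrable (fun x : EuclideanSpace ℝ (Fin n) =>
      x i * fderiv ℝ f x (EuclideanSpace.single i 1)))
    (μ : Measure (EuclideanSpace ℝ (Fin n)))
    (hμ : μ = volume.withDensity (fun x => ENNReal.ofReal (f x)))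
    (g : ℝ → ℝ)
    (hg : ∀ s : ℝ, s ≠ 0 → g s =
      -((1 / s) * ∫ x : EuclideanSpace ℝ (Fin n),
        Set.indicator {y : EuclideanSpace ℝ (Fin n) | s < y i}
          (fun y => y i * fderiv ℝ f y (EuclideanSpace.single i 1) + f y) x))
    (hg0 : g 0 = 0) :
    ∀ s : ℝ, μ {x | x i ≤ s} = ENNReal.ofReal (∫ t in Set.Iic s, g t) := by
  obtain ⟨m, rfl⟩ : ∃ m, n = m + 1 := ⟨n - 1, (Nat.succ_pred_eq_of_pos hn).symm⟩
  have hIntf : Integrable f := by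
    by_contra hc
    rw [integral_undef hc] at hf_prob; norm_num at hf_prob
  set D : EuclideanSpace ℝ (Fin (m+1)) → ℝ :=
    fun x => fderiv ℝ f x (EuclideanSpace.single i 1) with hD
  set h : EuclideanSpace ℝ (Fin (m+1)) → ℝ := fun x => x i * D x + f x with hh
  have hInth : Integrable h := hf_int.add hIntf
  have hT : MeasurePreserving (MDSIG_T m i) := MDSIG_T_mp m i
  set T := MDSIG_T m i with hTdef
  set H : ℝ × (Fin m → ℝ) → ℝ := h ∘ T with hH
  set F : ℝ × (Fin m → ℝ) → ℝ := f ∘ T with hF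
  have hHint : Integrable H := (hT.integrable_comp_emb T.measurableEmbedding).2 hInth
  have hFint : Integrable F := (hT.integrable_comp_emb T.measurableEmbedding).2 hIntf
  -- the derivative of the slice map
  have hderiv : ∀ (y : Fin m → ℝ) (u : ℝ),
      HasDerivAt (fun v => F (v, y)) (D (T (u, y))) u := by
    intro y u
    have h1 : HasDerivAt (fun v : ℝ => T (v, y)) (EuclideanSpace.single i 1) u := by
      have heq : (fun v : ℝ => T (v, y))
          = fun v => T (0, y) + v • EuclideanSpace.single i 1 :=
        funext (MDSIG_T_affine m i y)
      rw [heq]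
      simpa using ((hasDerivAt_id u).smul_const (EuclideanSpace.single i (1:ℝ))).const_add
        (T (0, y))
    have h2 := (hf_diff.differentiable one_ne_zero (T (u, y))).hasFDerivAt.comp_hasDerivAt u h1
    simpa [hF, hD, Function.comp_def] using h2
  -- pointwise identity for the integrand
  have hHval : ∀ (y : Fin m → ℝ) (u : ℝ),
      H (u, y) = u * D (T (u, y)) + F (u, y) := by
    intro y u
    simp only [hH, hh, Function.comp_apply, hF]
    rw [MDSIG_T_coord]
  -- marginal density
  set M : ℝ → ℝ := fun t => ∫ y, F (t, y) with hM
  -- Step A : Fubini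
  have stepA : ∀ t : ℝ,
      ∫ x in {x : EuclideanSpace ℝ (Fin (m+1)) | t < x i}, h x
        = ∫ y, ∫ u in Ioi t, H (u, y) := by
    intro t
    have hpre : T ⁻¹' {x : EuclideanSpace ℝ (Fin (m+1)) | t < x i} = Ioi t ×ˢ univ := by
      ext p
      simp [hTdef, MDSIG_T_coord m i p]
    rw [← hT.setIntegral_preimage_emb T.measurableEmbedding, hpre]
    have hrw : (volume : Measure (ℝ × (Fin m → ℝ))).restrict (Ioi t ×ˢ univ)
        = (volume.restrict (Ioi t)).prod volume := by
      rw [Measure.volume_eq_prod, ← Measure.prod_restrict, Measure.restrict_univ]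
    have hHre : Integrable H ((volume.restrict (Ioi t)).prod volume) := by
      rw [← hrw]; exact hHint.integrableOn
    calc ∫ p in Ioi t ×ˢ univ, h (T p) = ∫ p, H p ∂((volume.restrict (Ioi t)).prod volume) := by
          rw [← hrw]; rfl
      _ = ∫ y, ∫ u in Ioi t, H (u, y) := integral_prod_symm H hHre
  -- Step B : the 1-d computation, a.e. in y
  have stepB : ∀ t : ℝ, ∀ᵐ y : Fin m → ℝ, (∫ u in Ioi t, H (u, y)) = -(t * F (t, y)) := by
    intro t
    have h1 : ∀ᵐ y : Fin m → ℝ, Integrable (fun u => H (u, y)) := by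
      have := hHint
      rw [Measure.volume_eq_prod] at this
      exact this.prod_left_ae
    have h2 : ∀ᵐ y : Fin m → ℝ, Integrable (fun u => F (u, y)) := by
      have := hFint
      rw [Measure.volume_eq_prod] at this
      exact this.prod_left_ae
    filter_upwards [h1, h2] with y hy1 hy2
    have heq : (fun u => H (u, y)) = fun u => u * D (T (u, y)) + F (u, y) :=
      funext (hHval y)
    have hkey := MDSIG_key1d (fun u => F (u, y)) (fun u => D (T (u, y)))
      (hderiv y) (fun u => hf_nonneg _) hy2 (by rw [← heq]; exact hy1) t
    rw [heq, hkey]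
  -- Step C : the value of `g` away from zero
  have stepC : ∀ t : ℝ, t ≠ 0 → g t = M t := by
    intro t ht
    have hmeas : MeasurableSet {x : EuclideanSpace ℝ (Fin (m+1)) | t < x i} :=
      measurableSet_lt measurable_const (MDSIG_coord_measurable m i)
    rw [hg t ht, integral_indicator hmeas]
    have : ∫ x in {x : EuclideanSpace ℝ (Fin (m+1)) | t < x i}, h x
        = -(t * M t) := by
      rw [stepA t]
      rw [integral_congr_ae (stepB t)]
      rw [integral_neg, integral_const_mul]
    rw [hh] at this
    rw [this]
    field_simp
  -- a.e. equality of g and M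
  have hgM : ∀ᵐ t : ℝ, g t = M t := by
    have hsub : {t : ℝ | ¬ g t = M t} ⊆ {(0:ℝ)} := by
      intro t ht
      by_contra ht0
      exact ht (stepC t ht0)
    exact (ae_iff).2 (measure_mono_null hsub (measure_singleton 0))
  intro s
  have h1 : ∫ t in Iic s, g t = ∫ t in Iic s, M t :=
    integral_congr_ae (ae_restrict_of_ae hgM)
  have hpre' : T ⁻¹' {x : EuclideanSpace ℝ (Fin (m+1)) | x i ≤ s} = Iic s ×ˢ univ := by
    ext p
    simp [hTdef, MDSIG_T_coord m i p]
  have h2 : ∫ t in Iic s, M t = ∫ x in {x : EuclideanSpace ℝ (Fin (m+1)) | x i ≤ s}, f x := by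
    rw [← hT.setIntegral_preimage_emb T.measurableEmbedding, hpre']
    have : ∫ p in Iic s ×ˢ univ, f (T p)
        = ∫ p in Iic s ×ˢ univ, F p ∂((volume : Measure ℝ).prod volume) := by
      rw [← Measure.volume_eq_prod]; rfl
    rw [this, setIntegral_prod F (by rw [← Measure.volume_eq_prod]; exact hFint.integrableOn)]
    simp only [Measure.restrict_univ]
    rfl
  have hAmeas : MeasurableSet {x : EuclideanSpace ℝ (Fin (m+1)) | x i ≤ s} :=
    measurableSet_le (MDSIG_coord_measurable m i) measurable_const
  rw [hμ, withDensity_apply _ hAmeas,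
    ← ofReal_integral_eq_lintegral_ofReal hIntf.integrableOn
      (ae_restrict_of_ae (ae_of_all _ hf_nonneg))]
  rw [h1, h2]
end

section
/- For every u = (u₁,…,uₙ) ∈ (0,1]ⁿ, P(U₁ ≤ u₁, …, Uₙ ≤ uₙ) = φ(ψ(u₁) + ⋯ + ψ(uₙ)). That is, the Marshall–Olkin construction produces a random vector whose joint distribution function of the uniforms is the Archimedean copula with generator ψ. -/
open MeasureTheory ProbabilityTheory

theorem MO.expMeasure_Ici (t : ℝ) (ht : 0 ≤ t) :
    expMeasure 1 (Set.Ici t) = ENNReal.ofReal (Real.exp (-t)) := by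
  haveI : IsProbabilityMeasure (expMeasure 1) := isProbabilityMeasure_expMeasure one_pos
  have hIic : expMeasure 1 (Set.Iic t) = ENNReal.ofReal (1 - Real.exp (-(1*t))) := by
    rw [expMeasure, gammaMeasure, withDensity_apply _ measurableSet_Iic]
    have := lintegral_exponentialPDF_eq_antiDeriv (r := 1) one_pos t
    rw [show gammaPDF 1 1 = exponentialPDF 1 from rfl, this, if_pos ht]
  have hsing : expMeasure 1 {t} = 0 := by
    rw [expMeasure, gammaMeasure, withDensity_apply _ (measurableSet_singleton t)]
    simp [Measure.restrict_singleton]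
  have hIio : expMeasure 1 (Set.Iio t) = ENNReal.ofReal (1 - Real.exp (-(1*t))) := by
    have h1 : Set.Iic t = Set.Iio t ∪ {t} := by
      ext x; simp [le_iff_lt_or_eq]
    rw [← hIic, h1]
    refine le_antisymm (measure_mono Set.subset_union_left) ?_
    calc expMeasure 1 (Set.Iio t ∪ {t}) ≤ expMeasure 1 (Set.Iio t) + expMeasure 1 {t} :=
          measure_union_le _ _
      _ = expMeasure 1 (Set.Iio t) := by rw [hsing, add_zero]
  have hc : expMeasure 1 (Set.Ici t) = 1 - expMeasure 1 (Set.Iio t) := by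
    have := measure_compl (μ := expMeasure 1) (measurableSet_Iio (a := t)) (measure_ne_top _ _)
    rw [Set.compl_Iio] at this
    simpa using this
  have hle : Real.exp (-(1*t)) ≤ 1 := Real.exp_le_one_iff.mpr (by nlinarith)
  rw [hc, hIio, ← ENNReal.ofReal_one, ← ENNReal.ofReal_sub _ (by nlinarith)]
  congr 1
  rw [one_mul]
  ring

theorem MO.expMeasure_Iio_zero : expMeasure 1 (Set.Iio 0) = 0 := by
  rw [expMeasure, gammaMeasure, withDensity_apply _ measurableSet_Iio]
  exact lintegral_gammaPDF_of_nonpos le_rfl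

/-- Let `Z > 0` be a random variable, `φ(s) = E[e^{-sZ}]` its
Laplace transform with inverse `ψ : (0,1] → [0,∞)`, and let `E₁, …, Eₙ` be i.i.d.
standard exponentials independent of `Z`.  Setting `Uᵢ = φ(Eᵢ/Z)`, for every
`u ∈ (0,1]ⁿ` we have `P(U₁ ≤ u₁, …, Uₙ ≤ uₙ) = φ(ψ(u₁) + ⋯ + ψ(uₙ))`:
the Marshall–Olkin construction yields the Archimedean copula with generator `ψ`. -/
theorem marshallOlkin_archimedean_copula
    {Ω : Type*} [MeasurableSpace Ω] (P : Measure Ω) [IsProbabilityMeasure P]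
    (n : ℕ)
    (Z : Ω → ℝ) (hZmeas : Measurable Z) (hZpos : ∀ ω, 0 < Z ω)
    (φ ψ : ℝ → ℝ)
    (hφ : ∀ s : ℝ, 0 ≤ s → φ s = ∫ ω, Real.exp (-s * Z ω) ∂P)
    (hφψ : ∀ u ∈ Set.Ioc (0 : ℝ) 1, φ (ψ u) = u)
    (hψφ : ∀ s : ℝ, 0 ≤ s → ψ (φ s) = s)
    (hψ_nonneg : ∀ u ∈ Set.Ioc (0 : ℝ) 1, 0 ≤ ψ u)
    (E : Fin n → Ω → ℝ) (hEmeas : ∀ i, Measurable (E i))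
    (hEexp : ∀ i, Measure.map (E i) P = expMeasure 1)
    (hindep : iIndepFun (m := fun _ : Option (Fin n) => (inferInstance : MeasurableSpace ℝ))
      (fun o : Option (Fin n) => o.elim Z E) P) :
    ∀ u : Fin n → ℝ, (∀ i, u i ∈ Set.Ioc (0 : ℝ) 1) →
      P {ω | ∀ i, φ (E i ω / Z ω) ≤ u i} = ENNReal.ofReal (φ (∑ i, ψ (u i))) := by
  intro u hu
  -- integrability of exp(-s Z)
  have hint : ∀ s : ℝ, 0 ≤ s → Integrable (fun ω => Real.exp (-s * Z ω)) P := by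
    intro s hs
    refine Integrable.mono' (integrable_const 1)
      ((Real.measurable_exp.comp (hZmeas.const_mul (-s))).aestronglyMeasurable)
      (Filter.Eventually.of_forall fun ω => ?_)
    rw [Real.norm_eq_abs, abs_of_pos (Real.exp_pos _)]
    exact Real.exp_le_one_iff.mpr (by nlinarith [(hZpos ω).le])
  -- φ is antitone on [0, ∞), strictly
  have hmono : ∀ s t : ℝ, 0 ≤ s → s ≤ t → φ t ≤ φ s := by
    intro s t hs hst
    rw [hφ s hs, hφ t (hs.trans hst)]
    refine integral_mono (hint t (hs.trans hst)) (hint s hs) fun ω => ?_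
    exact Real.exp_le_exp.mpr (by nlinarith [(hZpos ω).le])
  have hstrict : ∀ s t : ℝ, 0 ≤ s → s < t → φ t < φ s := by
    intro s t hs hst
    rw [hφ s hs, hφ t (hs.trans hst.le)]
    have hi1 := hint s hs
    have hi2 := hint t (hs.trans hst.le)
    rw [← sub_pos, ← integral_sub hi1 hi2]
    refine (integral_pos_iff_support_of_nonneg ?_ (hi1.sub hi2)).mpr ?_
    · intro ω
      simp only [Pi.zero_apply, Pi.sub_apply, sub_nonneg]
      exact Real.exp_le_exp.mpr (by nlinarith [hZpos ω])
    · have hsupp : Function.support ((fun ω => Real.exp (-s * Z ω)) - fun ω => Real.exp (-t * Z ω))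
          = Set.univ := by
        ext ω
        simp only [Function.mem_support, Pi.sub_apply, Set.mem_univ, iff_true]
        have : Real.exp (-t * Z ω) < Real.exp (-s * Z ω) :=
          Real.exp_lt_exp.mpr (by nlinarith [hZpos ω])
        exact sub_ne_zero_of_ne this.ne'
      calc (0 : ENNReal) < 1 := zero_lt_one
        _ = P (Function.support ((fun ω => Real.exp (-s * Z ω)) - fun ω => Real.exp (-t * Z ω))) := by
            rw [hsupp, measure_univ]
  set a : Fin n → ℝ := fun i => ψ (u i) with ha
  have hanneg : ∀ i, 0 ≤ a i := fun i => hψ_nonneg _ (hu i)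
  set s₀ : ℝ := ∑ i, a i with hs₀
  have hs₀nn : 0 ≤ s₀ := Finset.sum_nonneg fun i _ => hanneg i
  -- reduce to the set S
  set S : Set Ω := {ω | ∀ i, a i * Z ω ≤ E i ω} with hS
  have hstep1 : P {ω | ∀ i, φ (E i ω / Z ω) ≤ u i} = P S := by
    have hnull : ∀ i, P {ω | E i ω < 0} = 0 := by
      intro i
      have : {ω | E i ω < 0} = E i ⁻¹' (Set.Iio 0) := rfl
      rw [this, ← Measure.map_apply (hEmeas i) measurableSet_Iio, hEexp i,
        MO.expMeasure_Iio_zero]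
    have hae : ∀ᵐ ω ∂P, ∀ i, 0 ≤ E i ω := by
      rw [MeasureTheory.ae_all_iff]
      intro i
      refine MeasureTheory.ae_iff.mpr ?_
      simpa [not_le] using hnull i
    refine measure_congr ?_
    filter_upwards [hae] with ω hω
    have hiff : ∀ i, (φ (E i ω / Z ω) ≤ u i ↔ a i * Z ω ≤ E i ω) := by
      intro i
      have hx : 0 ≤ E i ω / Z ω := div_nonneg (hω i) (hZpos ω).le
      have key : φ (E i ω / Z ω) ≤ u i ↔ a i ≤ E i ω / Z ω := by
        constructor
        · intro h
          by_contra hlt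
          push_neg at hlt
          have := hstrict _ _ hx hlt
          rw [show φ (a i) = u i from hφψ _ (hu i)] at this
          exact absurd h (not_le.mpr this)
        · intro h
          have := hmono _ _ (hanneg i) h
          rwa [show φ (a i) = u i from hφψ _ (hu i)] at this
      rw [key, le_div_iff₀ (hZpos ω)]
    simp only [Set.mem_setOf_eq, eq_iff_iff]
    exact ⟨fun h i => (hiff i).mp (h i), fun h i => (hiff i).mpr (h i)⟩
  rw [hstep1]
  -- the joint law is the product measure
  set T : Ω → (Option (Fin n) → ℝ) := fun ω o => (o.elim Z E) ω with hT
  have hTmeas : Measurable T := by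
    apply measurable_pi_lambda
    intro o
    cases o with
    | none => exact hZmeas
    | some i => exact hEmeas i
  set μ : Option (Fin n) → Measure ℝ :=
    fun o => o.elim (Measure.map Z P) (fun _ => expMeasure 1) with hμ
  haveI : ∀ o, IsProbabilityMeasure (μ o) := by
    intro o
    cases o with
    | none => exact Measure.isProbabilityMeasure_map hZmeas.aemeasurable
    | some i => exact isProbabilityMeasure_expMeasure one_pos
  have hmarg : ∀ (o : Option (Fin n)) (t : Set ℝ), MeasurableSet t →
      P ((o.elim Z E) ⁻¹' t) = μ o t := by
    intro o t ht
    cases o with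
    | none => exact (Measure.map_apply hZmeas ht).symm
    | some i =>
        rw [show μ (some i) = expMeasure 1 from rfl, ← hEexp i,
          Measure.map_apply (hEmeas i) ht]
        rfl
  have hmap : Measure.map T P = Measure.pi μ := by
    refine (Measure.pi_eq fun t ht => ?_).symm
    rw [Measure.map_apply hTmeas (MeasurableSet.univ_pi ht)]
    have hpre : T ⁻¹' Set.pi Set.univ t = ⋂ o, (o.elim Z E) ⁻¹' t o := by
      ext ω; simp [hT, Set.mem_pi]
    rw [hpre]
    have := hindep.measure_inter_preimage_eq_mul Finset.univ (sets := t)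
      (fun o _ => ht o)
    simp only [Finset.mem_univ, Set.iInter_true, ← Set.iInter_subtype] at this
    rw [this]
    exact Finset.prod_congr rfl fun o _ => hmarg o (t o) (ht o)
  set A : Set (Option (Fin n) → ℝ) := {g | ∀ i, a i * g none ≤ g (some i)} with hA
  have hAmeas : MeasurableSet A := by
    have : A = ⋂ i, {g : Option (Fin n) → ℝ | a i * g none ≤ g (some i)} := by
      ext g; simp [hA]
    rw [this]
    exact MeasurableSet.iInter fun i =>
      measurableSet_le ((measurable_pi_apply none).const_mul _) (measurable_pi_apply (some i))
  have hSA : S = T ⁻¹' A := rfl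
  rw [hSA, ← Measure.map_apply hTmeas hAmeas, hmap]
  -- split off the Z coordinate
  rw [← Measure.pi_map_piOptionEquivProd μ]
  set e := MeasurableEquiv.piOptionEquivProd (fun _ : Option (Fin n) => ℝ) with he
  rw [(MeasurableEquiv.measurableEmbedding e.symm).map_apply]
  have hpre2 : e.symm ⁻¹' A = {p : (Fin n → ℝ) × ℝ | ∀ i, a i * p.2 ≤ p.1 i} := by
    ext p
    simp only [Set.mem_preimage, hA, Set.mem_setOf_eq]
    have h1 : ∀ i, e.symm p (some i) = p.1 i := fun i => rfl
    have h2 : e.symm p none = p.2 := rfl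
    simp [h1, h2]
  rw [hpre2]
  have hBmeas : MeasurableSet {p : (Fin n → ℝ) × ℝ | ∀ i, a i * p.2 ≤ p.1 i} := by
    have : {p : (Fin n → ℝ) × ℝ | ∀ i, a i * p.2 ≤ p.1 i}
        = ⋂ i, {p : (Fin n → ℝ) × ℝ | a i * p.2 ≤ p.1 i} := by ext p; simp
    rw [this]
    exact MeasurableSet.iInter fun i =>
      measurableSet_le (measurable_snd.const_mul _) ((measurable_pi_apply i).comp measurable_fst)
  rw [Measure.prod_apply_symm hBmeas]
  -- compute the inner measure for a.e. z
  have hμnone : (μ none) {z : ℝ | z ≤ 0} = 0 := by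
    show (Measure.map Z P) (Set.Iic 0) = 0
    rw [Measure.map_apply hZmeas measurableSet_Iic]
    have : Z ⁻¹' Set.Iic 0 = ∅ := by
      ext ω; simp only [Set.mem_preimage, Set.mem_Iic, Set.mem_empty_iff_false, iff_false, not_le]
      exact hZpos ω
    rw [this, measure_empty]
  have haez : ∀ᵐ z ∂(μ none), 0 < z := by
    rw [ae_iff]
    simpa [not_lt] using hμnone
  haveI : IsProbabilityMeasure (expMeasure 1) := isProbabilityMeasure_expMeasure one_pos
  have hinner : ∀ᵐ z ∂(μ none),
      (Measure.pi fun i : Fin n => μ (some i)) ((fun x => (x, z)) ⁻¹' {p : (Fin n → ℝ) × ℝ | ∀ i, a i * p.2 ≤ p.1 i})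
        = ENNReal.ofReal (Real.exp (-s₀ * z)) := by
    filter_upwards [haez] with z hz
    have : ((fun x => (x, z)) ⁻¹' {p : (Fin n → ℝ) × ℝ | ∀ i, a i * p.2 ≤ p.1 i})
        = Set.pi Set.univ (fun i => Set.Ici (a i * z)) := by
      ext x; simp [Set.mem_pi, Pi.le_def]
    rw [this, Measure.pi_pi]
    have hval : ∀ i : Fin n, μ (some i) (Set.Ici (a i * z)) = ENNReal.ofReal (Real.exp (-(a i * z))) :=
      fun i => MO.expMeasure_Ici _ (mul_nonneg (hanneg i) hz.le)
    rw [Finset.prod_congr rfl fun i _ => hval i,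
      ← ENNReal.ofReal_prod_of_nonneg fun i _ => (Real.exp_pos _).le,
      ← Real.exp_sum]
    congr 1
    rw [hs₀, Finset.sum_neg_distrib, ← Finset.sum_mul]
    ring
  rw [lintegral_congr_ae hinner]
  show ∫⁻ z, ENNReal.ofReal (Real.exp (-s₀ * z)) ∂(Measure.map Z P) = _
  have hfm : Measurable fun z : ℝ => ENNReal.ofReal (Real.exp (-s₀ * z)) := by fun_prop
  rw [lintegral_map hfm hZmeas]
  rw [← MeasureTheory.ofReal_integral_eq_lintegral_ofReal (hint s₀ hs₀nn)
    (Filter.Eventually.of_forall fun ω => (Real.exp_pos _).le)]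
  rw [hφ s₀ hs₀nn]
end

section
/- The random vector U = (U₁,…,Uₙ) has joint probability density c(u) = φ^{(n)}(ψ(u₁) + ⋯ + ψ(uₙ)) · ∏_{i=1}^{n} ψ'(uᵢ) on (0,1)ⁿ, where φ^{(n)} denotes the n-th derivative of φ (which satisfies φ^{(k)}(s) = E[(−Z)^k e^{−sZ}] for s > 0); that is, for every Borel set B ⊆ (0,1)ⁿ, P(U ∈ B) = ∫_B c(u) du. -/
open MeasureTheory ProbabilityTheory Set

set_option maxHeartbeats 1000000


lemma myLintegralPiProd : ∀ {m : ℕ} (μ : Measure ℝ), SigmaFinite μ →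
    ∀ (f : Fin m → ℝ → ENNReal), (∀ i, Measurable (f i)) →
    ∫⁻ x : Fin m → ℝ, ∏ i, f i (x i) ∂(Measure.pi fun _ => μ) = ∏ i, ∫⁻ y, f i y ∂μ := by
  intro m
  induction m with
  | zero =>
      intro μ hσ f hf
      simp [lintegral_const, Measure.pi_univ]
  | succ m ih =>
      intro μ hσ f hf
      have hmp := (measurePreserving_piFinSuccAbove (fun _ : Fin (m+1) => μ) 0).symm
      have hmeas : Measurable fun x : Fin (m+1) → ℝ => ∏ i, f i (x i) :=
        Finset.measurable_prod _ (fun i _ => (hf i).comp (measurable_pi_apply i))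
      rw [← hmp.lintegral_comp hmeas]
      have : ∀ p : ℝ × (Fin m → ℝ),
          (∏ i, f i (((MeasurableEquiv.piFinSuccAbove (fun _ : Fin (m+1) => ℝ) 0).symm p) i))
            = f 0 p.1 * ∏ i : Fin m, f i.succ (p.2 i) := by
        intro p
        simp_rw [MeasurableEquiv.piFinSuccAbove_symm_apply, Fin.insertNthEquiv,
          Fin.prod_univ_succ, Fin.insertNth_zero]
        simp [Fin.zero_succAbove, Fin.cons_zero, Fin.cons_succ]
      simp_rw [this]
      rw [lintegral_prod_mul (f := f 0) (g := fun w : Fin m → ℝ => ∏ i, f i.succ (w i))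
        (hf 0).aemeasurable
        (Finset.measurable_prod _ (fun i _ => (hf i.succ).comp (measurable_pi_apply i))).aemeasurable]
      rw [ih μ hσ (fun i => f i.succ) (fun i => hf i.succ), Fin.prod_univ_succ]

lemma myPiWithDensity {m : ℕ} (μ : Measure ℝ) [SigmaFinite μ] (f : ℝ → ENNReal)
    (hf : Measurable f) [SigmaFinite (μ.withDensity f)] :
    Measure.pi (fun _ : Fin m => μ.withDensity f)
      = (Measure.pi fun _ : Fin m => μ).withDensity (fun x => ∏ i, f (x i)) := by
  refine Measure.pi_eq fun s hs => ?_
  rw [withDensity_apply _ (MeasurableSet.univ_pi hs), ← lintegral_indicator (MeasurableSet.univ_pi hs)]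
  have : (Set.univ.pi s).indicator (fun x : Fin m → ℝ => ∏ i, f (x i))
      = fun x => ∏ i, (s i).indicator f (x i) := by
    ext x
    by_cases hx : x ∈ Set.univ.pi s
    · rw [Set.indicator_of_mem hx]
      exact Finset.prod_congr rfl fun i _ => (Set.indicator_of_mem (hx i trivial) f).symm
    · rw [Set.indicator_of_notMem hx]
      have : ∃ i, x i ∉ s i := by simpa [Set.mem_univ_pi] using hx
      obtain ⟨i, hi⟩ := this
      exact (Finset.prod_eq_zero (Finset.mem_univ i) (Set.indicator_of_notMem hi f)).symm
  rw [this, myLintegralPiProd μ inferInstance _ (fun i => hf.indicator (hs i))]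
  exact Finset.prod_congr rfl fun i _ => by
    rw [lintegral_indicator (hs i), ← withDensity_apply _ (hs i)]

lemma myDet {m : ℕ} (d : Fin m → ℝ) :
    (ContinuousLinearMap.pi fun i => d i •
      (ContinuousLinearMap.proj (R := ℝ) (φ := fun _ : Fin m => ℝ) i)).det = ∏ i, d i := by
  have : (ContinuousLinearMap.pi fun i => d i •
      (ContinuousLinearMap.proj (R := ℝ) (φ := fun _ : Fin m => ℝ) i) : (Fin m → ℝ) →L[ℝ] (Fin m → ℝ))
      = (Matrix.toLin' (Matrix.diagonal d) : (Fin m → ℝ) →ₗ[ℝ] (Fin m → ℝ)) := by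
    apply LinearMap.ext
    intro v
    ext i
    simp [Matrix.toLin'_apply, Matrix.mulVec_diagonal]
  rw [ContinuousLinearMap.det, this, LinearMap.det_toLin', Matrix.det_diagonal]


/-- Let `Z > 0` with `E[Zⁿ] < ∞` have Laplace transform
`φ(s) = E[e^{-sZ}]` with inverse generator `ψ : (0,1] → [0,∞)`, continuously
differentiable on `(0,1)` with derivative `ψ'`.  Let `E₁, …, Eₙ` be i.i.d. standard
exponentials independent of `Z` and set `Uᵢ = φ(Eᵢ/Z)`.  Then `U = (U₁,…,Uₙ)` has joint
density `c(u) = φ⁽ⁿ⁾(ψ(u₁)+⋯+ψ(uₙ)) ∏ᵢ ψ'(uᵢ)` on `(0,1)ⁿ`, where `φ⁽ⁿ⁾` is the `n`-th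
derivative of `φ` (which satisfies `φ⁽ᵏ⁾(s) = E[(-Z)ᵏ e^{-sZ}]` for `s > 0`): for every
Borel `B ⊆ (0,1)ⁿ`, `P(U ∈ B) = ∫_B c(u) du`. -/
theorem marshallOlkin_joint_density
    {Ω : Type*} [MeasurableSpace Ω] (P : Measure Ω) [IsProbabilityMeasure P]
    (n : ℕ)
    (Z : Ω → ℝ) (hZmeas : Measurable Z) (hZpos : ∀ ω, 0 < Z ω)
    (hZmom : Integrable (fun ω => Z ω ^ n) P)
    (φ ψ ψ' : ℝ → ℝ)
    (hφ : ∀ s : ℝ, 0 ≤ s → φ s = ∫ ω, Real.exp (-s * Z ω) ∂P)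
    (hφderiv : ∀ k ≤ n, ∀ s : ℝ, 0 < s →
      iteratedDeriv k φ s = ∫ ω, (-Z ω) ^ k * Real.exp (-s * Z ω) ∂P)
    (hφψ : ∀ u ∈ Set.Ioc (0 : ℝ) 1, φ (ψ u) = u)
    (hψφ : ∀ s : ℝ, 0 ≤ s → ψ (φ s) = s)
    (hψ_nonneg : ∀ u ∈ Set.Ioc (0 : ℝ) 1, 0 ≤ ψ u)
    (hψ_deriv : ∀ u ∈ Set.Ioo (0 : ℝ) 1, HasDerivAt ψ (ψ' u) u)
    (hψ'_cont : ContinuousOn ψ' (Set.Ioo (0 : ℝ) 1))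
    (E : Fin n → Ω → ℝ) (hEmeas : ∀ i, Measurable (E i))
    (hEexp : ∀ i, Measure.map (E i) P = expMeasure 1)
    (hindep : iIndepFun
      (fun o : Option (Fin n) => o.elim Z E) P) :
    ∀ B : Set (Fin n → ℝ), MeasurableSet B →
      B ⊆ Set.univ.pi (fun _ => Set.Ioo (0 : ℝ) 1) →
      P {ω | (fun i => φ (E i ω / Z ω)) ∈ B} =
        ENNReal.ofReal (∫ u in B,
          iteratedDeriv n φ (∑ i, ψ (u i)) * ∏ i, ψ' (u i)) := by
  intro B hB hBsub
  classical
  -- ## Basic facts about φ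
  have hexpint : ∀ s : ℝ, 0 ≤ s → Integrable (fun ω => Real.exp (-s * Z ω)) P := by
    intro s hs
    refine Integrable.mono' (integrable_const 1)
      ((hZmeas.const_mul (-s)).exp.aestronglyMeasurable) ?_
    filter_upwards with ω
    rw [Real.norm_eq_abs, abs_of_pos (Real.exp_pos _)]
    exact Real.exp_le_one_iff.mpr (by nlinarith [(hZpos ω).le])
  have hφ0 : φ 0 = 1 := by rw [hφ 0 le_rfl]; simp
  have hφ_anti : ∀ s t : ℝ, 0 ≤ s → s ≤ t → φ t ≤ φ s := by
    intro s t hs hst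
    rw [hφ s hs, hφ t (hs.trans hst)]
    refine integral_mono (hexpint t (hs.trans hst)) (hexpint s hs) fun ω => ?_
    exact Real.exp_le_exp.mpr (by nlinarith [(hZpos ω).le])
  set φt : ℝ → ℝ := fun s => if 0 ≤ s then φ s else 1 with hφt_def
  have hφt_eq : ∀ s : ℝ, 0 ≤ s → φt s = φ s := fun s hs => if_pos hs
  have hφt_anti : Antitone φt := by
    intro a b hab
    by_cases hbpos : 0 ≤ b
    · rw [hφt_eq b hbpos]
      by_cases hapos : 0 ≤ a
      · rw [hφt_eq a hapos]; exact hφ_anti a b hapos hab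
      · have : φt a = 1 := if_neg hapos
        rw [this]
        calc φ b ≤ φ 0 := hφ_anti 0 b le_rfl hbpos
        _ = 1 := hφ0
    · have hapos : ¬ (0 ≤ a) := fun h => hbpos (h.trans hab)
      simp only [φt, if_neg hapos, if_neg hbpos, le_refl]
  have hφt_meas : Measurable φt := hφt_anti.measurable
  -- ## Basic facts about ψ
  have hψ1 : ψ 1 = 0 := by have := hψφ 0 le_rfl; rwa [hφ0] at this
  have hψ_strict : ∀ u v : ℝ, u ∈ Set.Ioc (0:ℝ) 1 → v ∈ Set.Ioc (0:ℝ) 1 → u < v →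
      ψ v < ψ u := by
    intro u v hu hv huv
    by_contra hcon
    push_neg at hcon
    have := hφ_anti (ψ u) (ψ v) (hψ_nonneg u hu) hcon
    rw [hφψ u hu, hφψ v hv] at this
    exact absurd this (not_le.mpr huv)
  have hψ_pos : ∀ u ∈ Set.Ioo (0:ℝ) 1, 0 < ψ u := by
    intro u hu
    have := hψ_strict u 1 ⟨hu.1, hu.2.le⟩ ⟨one_pos, le_rfl⟩ hu.2
    rwa [hψ1] at this
  have hψ'_nonpos : ∀ u ∈ Set.Ioo (0:ℝ) 1, ψ' u ≤ 0 := by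
    intro u hu
    have hd := hψ_deriv u hu
    have hslope : Filter.Tendsto (slope ψ u) (nhdsWithin u (Set.Ioi u)) (nhds (ψ' u)) :=
      (hasDerivAt_iff_tendsto_slope.mp hd).mono_left
        (nhdsWithin_mono u fun x hx => ne_of_gt hx)
    refine le_of_tendsto hslope ?_
    filter_upwards [Ioo_mem_nhdsGT_of_mem (⟨le_rfl, hu.2⟩ : u ∈ Set.Ico u 1)] with v hv
    have hψv : ψ v < ψ u :=
      hψ_strict u v ⟨hu.1, hu.2.le⟩ ⟨hu.1.trans hv.1, hv.2.le⟩ hv.1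
    have : v - u > 0 := sub_pos.mpr hv.1
    rw [slope_def_field]
    exact div_nonpos_of_nonpos_of_nonneg (by linarith) (by linarith)
  -- measurable versions of ψ, ψ'
  set ψt : ℝ → ℝ := (Set.Ioo (0:ℝ) 1).piecewise ψ (fun _ => 0) with hψt_def
  set ψt' : ℝ → ℝ := (Set.Ioo (0:ℝ) 1).piecewise ψ' (fun _ => 0) with hψt'_def
  have hψcont : ContinuousOn ψ (Set.Ioo (0:ℝ) 1) :=
    fun u hu => ((hψ_deriv u hu).continuousAt).continuousWithinAt
  have hψt_meas : Measurable ψt :=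
    ContinuousOn.measurable_piecewise hψcont continuous_const.continuousOn measurableSet_Ioo
  have hψt'_meas : Measurable ψt' :=
    ContinuousOn.measurable_piecewise hψ'_cont continuous_const.continuousOn measurableSet_Ioo
  have hψt_eq : ∀ u ∈ Set.Ioo (0:ℝ) 1, ψt u = ψ u :=
    fun u hu => Set.piecewise_eq_of_mem _ _ _ hu
  have hψt'_eq : ∀ u ∈ Set.Ioo (0:ℝ) 1, ψt' u = ψ' u :=
    fun u hu => Set.piecewise_eq_of_mem _ _ _ hu

  -- ## Joint law
  set ν : Measure ℝ := expMeasure 1 with hν_def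
  set μZ : Measure ℝ := Measure.map Z P with hμZ_def
  haveI hνprob : IsProbabilityMeasure ν := isProbabilityMeasure_expMeasure one_pos
  haveI hμZprob : IsProbabilityMeasure μZ := Measure.isProbabilityMeasure_map hZmeas.aemeasurable
  set W : Ω → (Option (Fin n) → ℝ) := fun ω o => o.elim (Z ω) (fun i => E i ω) with hW_def
  have hWo : ∀ (o : Option (Fin n)) (ω : Ω), W ω o = (o.elim Z E) ω := by
    intro o ω; cases o <;> rfl
  have hWmeas : Measurable W := by
    apply measurable_pi_lambda
    intro o
    cases o with
    | none => exact hZmeas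
    | some i => exact hEmeas i
  have hoelim_meas : ∀ o : Option (Fin n), Measurable (o.elim Z E) := by
    intro o; cases o with
    | none => exact hZmeas
    | some i => exact hEmeas i
  haveI hprob : ∀ o : Option (Fin n), IsProbabilityMeasure (Measure.map (o.elim Z E) P) :=
    fun o => Measure.isProbabilityMeasure_map (hoelim_meas o).aemeasurable
  have hmapW : Measure.map W P = Measure.pi (fun o => Measure.map (o.elim Z E) P) := by
    refine (Measure.pi_eq fun s hs => ?_).symm
    rw [Measure.map_apply hWmeas (MeasurableSet.univ_pi hs)]
    have hpre : W ⁻¹' (Set.univ.pi s) = ⋂ o ∈ Finset.univ, (o.elim Z E) ⁻¹' (s o) := by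
      ext ω
      simp only [Set.mem_preimage, Set.mem_univ_pi, Set.mem_iInter, Finset.mem_univ,
        forall_const]
      refine forall_congr' fun o => ?_
      rw [hWo]
    rw [hpre, hindep.measure_inter_preimage_eq_mul Finset.univ (fun o _ => hs o)]
    exact Finset.prod_congr rfl fun o _ => (Measure.map_apply (hoelim_meas o) (hs o)).symm
  set e : (Option (Fin n) → ℝ) ≃ᵐ (Fin n → ℝ) × ℝ :=
    MeasurableEquiv.piOptionEquivProd (fun _ : Option (Fin n) => ℝ) with he_def
  have hpi_eq : Measure.pi (fun o : Option (Fin n) => Measure.map (o.elim Z E) P)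
      = Measure.map e.symm ((Measure.pi fun _ : Fin n => ν).prod μZ) := by
    rw [← Measure.pi_map_piOptionEquivProd (fun o : Option (Fin n) => Measure.map (o.elim Z E) P)]
    have h1 : (Measure.pi fun i : Fin n => Measure.map ((some i).elim Z E) P)
        = Measure.pi fun _ : Fin n => ν := by
      exact congrArg Measure.pi (funext fun i => hEexp i)
    rw [h1]
    rfl
  -- ## Reduction to an honest measurable set
  set A : Set (Option (Fin n) → ℝ) :=
    {f | (∀ i, 0 ≤ f (some i)) ∧ (fun i => φt (f (some i) / f none)) ∈ B} with hA_def
  have hA : MeasurableSet A := by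
    have h1 : MeasurableSet {f : Option (Fin n) → ℝ | ∀ i, 0 ≤ f (some i)} := by
      rw [Set.setOf_forall]
      exact MeasurableSet.iInter fun i =>
        measurableSet_le measurable_const (measurable_pi_apply (some i))
    have h2 : Measurable (fun f : Option (Fin n) → ℝ => fun i => φt (f (some i) / f none)) :=
      measurable_pi_lambda _ fun i =>
        hφt_meas.comp ((measurable_pi_apply (some i)).div (measurable_pi_apply none))
    exact h1.inter (h2 hB)
  have hsetP : P {ω | (fun i => φ (E i ω / Z ω)) ∈ B} = P (W ⁻¹' A) := by
    apply measure_congr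
    have hae : ∀ᵐ ω ∂P, ∀ i, 0 ≤ E i ω := by
      rw [MeasureTheory.ae_all_iff]
      intro i
      rw [ae_iff]
      have hset : {ω | ¬ 0 ≤ E i ω} = E i ⁻¹' (Set.Iio 0) := by
        ext ω; simp [not_le]
      rw [hset, ← Measure.map_apply (hEmeas i) measurableSet_Iio, hEexp i]
      show gammaMeasure 1 1 (Set.Iio 0) = 0
      rw [gammaMeasure, withDensity_apply _ measurableSet_Iio]
      exact lintegral_gammaPDF_of_nonpos le_rfl
    rw [Filter.eventuallyEq_set]
    filter_upwards [hae] with ω hω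
    have hfuneq : (fun i => φt (E i ω / Z ω)) = (fun i => φ (E i ω / Z ω)) :=
      funext fun i => hφt_eq _ (div_nonneg (hω i) (hZpos ω).le)
    simp only [Set.mem_setOf_eq, Set.mem_preimage, hA_def]
    constructor
    · intro h
      refine ⟨fun i => hω i, ?_⟩
      show (fun i => φt (E i ω / Z ω)) ∈ B
      rw [hfuneq]; exact h
    · intro h
      have h2 : (fun i => φt (E i ω / Z ω)) ∈ B := h.2
      rwa [hfuneq] at h2
  set S : Set ((Fin n → ℝ) × ℝ) :=
    {p | (∀ i, 0 ≤ p.1 i) ∧ (fun i => φt (p.1 i / p.2)) ∈ B} with hS_def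
  have hSmeas : MeasurableSet S := by
    have h1 : MeasurableSet {p : (Fin n → ℝ) × ℝ | ∀ i, 0 ≤ p.1 i} := by
      rw [Set.setOf_forall]
      exact MeasurableSet.iInter fun i =>
        measurableSet_le measurable_const measurable_fst.eval
    have h2 : Measurable (fun p : (Fin n → ℝ) × ℝ => fun i => φt (p.1 i / p.2)) :=
      measurable_pi_lambda _ fun i =>
        hφt_meas.comp (measurable_fst.eval.div measurable_snd)
    exact h1.inter (h2 hB)
  have hpreA : e.symm ⁻¹' A = S := by
    ext p
    obtain ⟨g, z⟩ := p
    have hes : e.symm (g, z) = fun o => Option.elim o z g := by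
      have : e (fun o => Option.elim o z g) = (g, z) := rfl
      rw [← this, MeasurableEquiv.symm_apply_apply]
    simp only [Set.mem_preimage, hes, hA_def, Set.mem_setOf_eq, hS_def, Option.elim]
  have hP1 : P {ω | (fun i => φ (E i ω / Z ω)) ∈ B}
      = ∫⁻ z, (Measure.pi fun _ : Fin n => ν) ((fun x => (x, z)) ⁻¹' S) ∂μZ := by
    rw [hsetP, ← Measure.map_apply hWmeas hA, hmapW, hpi_eq,
      Measure.map_apply e.symm.measurable hA, hpreA, Measure.prod_apply_symm hSmeas]
  -- ## Slice computation via change of variables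
  set G : ℝ → (Fin n → ℝ) → ENNReal := fun z u =>
    ENNReal.ofReal ((∏ i, |z * ψt' (u i)|) * Real.exp (-z * ∑ i, ψt (u i))) with hG_def
  have hgamma_meas : Measurable (gammaPDF 1 1) :=
    (measurable_gammaPDFReal 1 1).ennreal_ofReal
  haveI hwdprob : IsProbabilityMeasure (volume.withDensity (gammaPDF 1 1)) :=
    isProbabilityMeasure_gammaMeasure one_pos one_pos
  have hpiν : (Measure.pi fun _ : Fin n => ν)
      = (volume : Measure (Fin n → ℝ)).withDensity (fun x => ∏ i, gammaPDF 1 1 (x i)) := by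
    rw [volume_pi]
    exact myPiWithDensity _ _ hgamma_meas
  have hgamma_eq : ∀ x : ℝ, 0 ≤ x → gammaPDF 1 1 x = ENNReal.ofReal (Real.exp (-x)) := by
    intro x hx
    rw [gammaPDF_of_nonneg hx]
    norm_num [Real.Gamma_one, Real.rpow_zero]
  have hslice : ∀ z : ℝ, 0 < z →
      (Measure.pi fun _ : Fin n => ν) ((fun x => (x, z)) ⁻¹' S)
        = ∫⁻ u in B, G z u ∂(volume : Measure (Fin n → ℝ)) := by
    intro z hz
    set Tz : (Fin n → ℝ) → (Fin n → ℝ) := fun u i => z * ψt (u i) with hTz_def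
    have himage : (fun x => (x, z)) ⁻¹' S = Tz '' B := by
      ext g
      simp only [Set.mem_preimage, hS_def, Set.mem_setOf_eq, Set.mem_image]
      constructor
      · rintro ⟨hge, hgB⟩
        refine ⟨fun i => φt (g i / z), hgB, ?_⟩
        funext i
        have hui : φt (g i / z) ∈ Set.Ioo (0:ℝ) 1 := hBsub hgB i trivial
        have hdiv : 0 ≤ g i / z := div_nonneg (hge i) hz.le
        rw [hTz_def]
        show z * ψt (φt (g i / z)) = g i
        rw [hψt_eq _ hui, hφt_eq _ hdiv, hψφ _ hdiv, mul_div_cancel₀ _ hz.ne']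
      · rintro ⟨u, huB, rfl⟩
        have hui : ∀ i, u i ∈ Set.Ioo (0:ℝ) 1 := fun i => hBsub huB i trivial
        have hTzi : ∀ i, Tz u i = z * ψ (u i) := fun i => by
          rw [hTz_def]; show z * ψt (u i) = z * ψ (u i); rw [hψt_eq _ (hui i)]
        constructor
        · intro i
          rw [hTzi i]
          exact mul_nonneg hz.le (hψ_nonneg _ ⟨(hui i).1, (hui i).2.le⟩)
        · have : (fun i => φt (Tz u i / z)) = u := by
            funext i
            rw [hTzi i, mul_div_cancel_left₀ _ hz.ne',
              hφt_eq _ (hψ_nonneg _ ⟨(hui i).1, (hui i).2.le⟩),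
              hφψ _ ⟨(hui i).1, (hui i).2.le⟩]
          rw [this]
          exact huB
    -- derivative of Tz on B
    set L : (Fin n → ℝ) → ((Fin n → ℝ) →L[ℝ] (Fin n → ℝ)) := fun u =>
      ContinuousLinearMap.pi fun i => (z * ψt' (u i)) •
        (ContinuousLinearMap.proj (R := ℝ) (φ := fun _ : Fin n => ℝ) i) with hL_def
    have hder : ∀ u ∈ B, HasFDerivWithinAt Tz (L u) B u := by
      intro u hu
      apply HasFDerivAt.hasFDerivWithinAt
      apply hasFDerivAt_pi.mpr
      intro i
      have hui : u i ∈ Set.Ioo (0:ℝ) 1 := hBsub hu i trivial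
      have hψt_event : ψt =ᶠ[nhds (u i)] ψ := by
        filter_upwards [isOpen_Ioo.mem_nhds hui] with x hx
        exact Set.piecewise_eq_of_mem _ _ _ hx
      have hdψt : HasDerivAt ψt (ψt' (u i)) (u i) := by
        rw [hψt'_eq _ hui]
        exact (hψ_deriv (u i) hui).congr_of_eventuallyEq hψt_event
      have hproj : HasFDerivAt (fun x : Fin n → ℝ => x i)
          (ContinuousLinearMap.proj (R := ℝ) (φ := fun _ : Fin n => ℝ) i) u :=
        hasFDerivAt_apply i u
      have hcomp := hdψt.comp_hasFDerivAt u hproj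
      have := hcomp.const_mul z
      rwa [smul_smul] at this
    have hinj : Set.InjOn Tz B := by
      intro u hu v hv huv
      funext i
      have hui : u i ∈ Set.Ioo (0:ℝ) 1 := hBsub hu i trivial
      have hvi : v i ∈ Set.Ioo (0:ℝ) 1 := hBsub hv i trivial
      have h1 : z * ψt (u i) = z * ψt (v i) := congrFun huv i
      have h2 : ψ (u i) = ψ (v i) := by
        rw [← hψt_eq _ hui, ← hψt_eq _ hvi]
        exact mul_left_cancel₀ hz.ne' h1
      calc u i = φ (ψ (u i)) := (hφψ _ ⟨hui.1, hui.2.le⟩).symm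
      _ = φ (ψ (v i)) := by rw [h2]
      _ = v i := hφψ _ ⟨hvi.1, hvi.2.le⟩
    rw [himage, hpiν, withDensity_apply' _ (Tz '' B),
      lintegral_image_eq_lintegral_abs_det_fderiv_mul volume hB hder hinj]
    apply setLIntegral_congr_fun hB
    intro u hu
    have hui : ∀ i, u i ∈ Set.Ioo (0:ℝ) 1 := fun i => hBsub hu i trivial
    have hdet : (L u).det = ∏ i, (z * ψt' (u i)) := myDet _
    have hTznn : ∀ i, 0 ≤ z * ψt (u i) := by
      intro i
      rw [hψt_eq _ (hui i)]
      exact mul_nonneg hz.le (hψ_nonneg _ ⟨(hui i).1, (hui i).2.le⟩)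
    have hprodpdf : ∏ i, gammaPDF 1 1 (Tz u i)
        = ENNReal.ofReal (Real.exp (-z * ∑ i, ψt (u i))) := by
      have : ∀ i, gammaPDF 1 1 (Tz u i) = ENNReal.ofReal (Real.exp (-(z * ψt (u i)))) :=
        fun i => hgamma_eq _ (hTznn i)
      rw [Finset.prod_congr rfl (fun i _ => this i),
        ← ENNReal.ofReal_prod_of_nonneg (fun i _ => (Real.exp_pos _).le),
        ← Real.exp_sum]
      congr 2
      rw [Finset.sum_neg_distrib, ← Finset.mul_sum, neg_mul]
    beta_reduce
    rw [hdet, hprodpdf, Finset.abs_prod,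
      ← ENNReal.ofReal_mul (Finset.prod_nonneg (fun i _ => abs_nonneg _))]
  
  -- ## Put the pieces together via Tonelli
  have hμZae : ∀ᵐ z ∂μZ, 0 < z := by
    rw [hμZ_def]
    refine (ae_map_iff hZmeas.aemeasurable measurableSet_Ioi).mpr ?_
    exact Filter.Eventually.of_forall fun ω => hZpos ω
  have hP2 : P {ω | (fun i => φ (E i ω / Z ω)) ∈ B}
      = ∫⁻ z, (∫⁻ u in B, G z u ∂(volume : Measure (Fin n → ℝ))) ∂μZ := by
    rw [hP1]
    refine lintegral_congr_ae ?_
    filter_upwards [hμZae] with z hz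
    exact hslice z hz
  have hGuncurry : Measurable (fun p : ℝ × (Fin n → ℝ) => G p.1 p.2) := by
    apply Measurable.ennreal_ofReal
    apply Measurable.mul
    · exact Finset.measurable_prod _ fun i _ =>
        (measurable_fst.mul (hψt'_meas.comp measurable_snd.eval)).abs
    · exact (measurable_fst.neg.mul
        (Finset.measurable_sum _ fun i _ => hψt_meas.comp measurable_snd.eval)).exp
  have hswap : ∫⁻ z, (∫⁻ u in B, G z u ∂(volume : Measure (Fin n → ℝ))) ∂μZ
      = ∫⁻ u in B, (∫⁻ z, G z u ∂μZ) ∂(volume : Measure (Fin n → ℝ)) :=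
    lintegral_lintegral_swap hGuncurry.aemeasurable
  -- ## Inner integral in z
  have hiterkey : ∀ u ∈ B, iteratedDeriv n φ (∑ i, ψ (u i))
      = ∫ ω, (-Z ω)^n * Real.exp (-(∑ i, ψ (u i)) * Z ω) ∂P := by
    intro u hu
    have hui : ∀ i, u i ∈ Set.Ioo (0:ℝ) 1 := fun i => hBsub hu i trivial
    rcases Nat.eq_zero_or_pos n with hn | hn
    · subst hn
      simp only [iteratedDeriv_zero, pow_zero, one_mul]
      have h0 : (∑ i : Fin 0, ψ (u i)) = 0 := by simp
      rw [h0]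
      exact hφ 0 le_rfl
    · haveI : Nonempty (Fin n) := Fin.pos_iff_nonempty.mp hn
      exact hφderiv n le_rfl _
        (Finset.sum_pos (fun i _ => hψ_pos _ (hui i)) Finset.univ_nonempty)
  have hsign : ∀ u ∈ B, (∏ i, ψ' (u i)) = (-1:ℝ)^n * ∏ i, |ψt' (u i)| := by
    intro u hu
    have hui : ∀ i, u i ∈ Set.Ioo (0:ℝ) 1 := fun i => hBsub hu i trivial
    have hterm : ∀ i, ψ' (u i) = (-1) * |ψt' (u i)| := by
      intro i
      rw [hψt'_eq _ (hui i), abs_of_nonpos (hψ'_nonpos _ (hui i))]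
      ring
    rw [Finset.prod_congr rfl (fun i _ => hterm i), Finset.prod_mul_distrib,
      Finset.prod_const, Finset.card_univ, Fintype.card_fin]
  have hreal : ∀ u ∈ B, iteratedDeriv n φ (∑ i, ψ (u i)) * ∏ i, ψ' (u i)
      = ∫ ω, Z ω ^ n * Real.exp (-(∑ i, ψ (u i)) * Z ω) * (∏ i, |ψt' (u i)|) ∂P := by
    intro u hu
    rw [hiterkey u hu, hsign u hu, ← integral_mul_const]
    refine integral_congr_ae (Filter.Eventually.of_forall fun ω => ?_)
    have hpow : (-Z ω)^n * (-1:ℝ)^n = Z ω ^ n := by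
      rw [← mul_pow]; ring_nf
    calc (-Z ω)^n * Real.exp (-(∑ i, ψ (u i)) * Z ω) * ((-1:ℝ)^n * ∏ i, |ψt' (u i)|)
        = ((-Z ω)^n * (-1:ℝ)^n) * Real.exp (-(∑ i, ψ (u i)) * Z ω) * ∏ i, |ψt' (u i)| := by
          ring
      _ = Z ω ^ n * Real.exp (-(∑ i, ψ (u i)) * Z ω) * ∏ i, |ψt' (u i)| := by rw [hpow]
  have hinner : ∀ u ∈ B, (∫⁻ z, G z u ∂μZ)
      = ENNReal.ofReal (iteratedDeriv n φ (∑ i, ψ (u i)) * ∏ i, ψ' (u i)) := by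
    intro u hu
    have hui : ∀ i, u i ∈ Set.Ioo (0:ℝ) 1 := fun i => hBsub hu i trivial
    have hSψ_eq : (∑ i, ψt (u i)) = ∑ i, ψ (u i) :=
      Finset.sum_congr rfl fun i _ => hψt_eq _ (hui i)
    have hSψ_nonneg : 0 ≤ ∑ i, ψt (u i) := by
      rw [hSψ_eq]
      exact Finset.sum_nonneg fun i _ => hψ_nonneg _ ⟨(hui i).1, (hui i).2.le⟩
    have hPr_nonneg : (0:ℝ) ≤ ∏ i, |ψt' (u i)| :=
      Finset.prod_nonneg fun i _ => abs_nonneg _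
    have hGu_meas : Measurable (fun z => G z u) :=
      hGuncurry.comp (measurable_id.prodMk measurable_const)
    rw [hμZ_def, lintegral_map hGu_meas hZmeas]
    have hpt : ∀ ω, G (Z ω) u
        = ENNReal.ofReal (Z ω ^ n * Real.exp (-(∑ i, ψt (u i)) * Z ω) * ∏ i, |ψt' (u i)|) := by
      intro ω
      have habs : ∀ i, |Z ω * ψt' (u i)| = Z ω * |ψt' (u i)| := fun i => by
        rw [abs_mul, abs_of_pos (hZpos ω)]
      show ENNReal.ofReal ((∏ i, |Z ω * ψt' (u i)|) * Real.exp (-Z ω * ∑ i, ψt (u i)))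
        = ENNReal.ofReal (Z ω ^ n * Real.exp (-(∑ i, ψt (u i)) * Z ω) * ∏ i, |ψt' (u i)|)
      congr 1
      rw [Finset.prod_congr rfl (fun i _ => habs i), Finset.prod_mul_distrib,
        Finset.prod_const, Finset.card_univ, Fintype.card_fin]
      have hexparg : -Z ω * (∑ i, ψt (u i)) = -(∑ i, ψt (u i)) * Z ω := by ring
      rw [hexparg]
      ring
    simp_rw [hpt]
    have hint : Integrable
        (fun ω => Z ω ^ n * Real.exp (-(∑ i, ψt (u i)) * Z ω) * ∏ i, |ψt' (u i)|) P := by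
      refine Integrable.mono' (hZmom.mul_const (∏ i, |ψt' (u i)|))
        ((((hZmeas.pow_const n).mul
          ((hZmeas.const_mul (-(∑ i, ψt (u i)))).exp)).mul_const _).aestronglyMeasurable) ?_
      filter_upwards with ω
      have hznn : (0:ℝ) ≤ Z ω ^ n := pow_nonneg (hZpos ω).le n
      have hexple : Real.exp (-(∑ i, ψt (u i)) * Z ω) ≤ 1 :=
        Real.exp_le_one_iff.mpr (by nlinarith [(hZpos ω).le])
      rw [Real.norm_eq_abs, abs_of_nonneg
        (mul_nonneg (mul_nonneg hznn (Real.exp_pos _).le) hPr_nonneg)]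
      nlinarith [mul_nonneg hznn hPr_nonneg, Real.exp_pos (-(∑ i, ψt (u i)) * Z ω)]
    rw [← ofReal_integral_eq_lintegral_ofReal hint
      (Filter.Eventually.of_forall fun ω =>
        mul_nonneg (mul_nonneg (pow_nonneg (hZpos ω).le n) (Real.exp_pos _).le) hPr_nonneg)]
    rw [hreal u hu, hSψ_eq]
  -- ## Final conversion
  set c : (Fin n → ℝ) → ℝ :=
    fun u => iteratedDeriv n φ (∑ i, ψ (u i)) * ∏ i, ψ' (u i) with hc_def
  have hP3 : P {ω | (fun i => φ (E i ω / Z ω)) ∈ B}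
      = ∫⁻ u in B, ENNReal.ofReal (c u) ∂(volume : Measure (Fin n → ℝ)) := by
    rw [hP2, hswap]
    exact setLIntegral_congr_fun hB hinner
  have hcnn : ∀ u ∈ B, 0 ≤ c u := by
    intro u hu
    rw [hc_def]
    show (0:ℝ) ≤ iteratedDeriv n φ (∑ i, ψ (u i)) * ∏ i, ψ' (u i)
    rw [hreal u hu]
    exact integral_nonneg fun ω =>
      mul_nonneg (mul_nonneg (pow_nonneg (hZpos ω).le n) (Real.exp_pos _).le)
        (Finset.prod_nonneg fun i _ => abs_nonneg _)
  set Dfun : ℝ → ℝ := fun s => if n = 0 then φt s else iteratedDeriv n φ s with hDfun_def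
  have hDmeas : Measurable Dfun := by
    rcases Nat.eq_zero_or_pos n with hn | hn
    · simp only [hDfun_def, if_pos hn]
      exact hφt_meas
    · obtain ⟨m, rfl⟩ := Nat.exists_eq_succ_of_ne_zero hn.ne'
      simp only [hDfun_def, Nat.succ_ne_zero, if_false]
      have : (fun s => iteratedDeriv (m + 1) φ s) = deriv (iteratedDeriv m φ) := by
        funext s; rw [iteratedDeriv_succ]
      rw [this]
      exact measurable_deriv _
  have hDeq : ∀ s : ℝ, 0 ≤ s → Dfun s = iteratedDeriv n φ s := by
    intro s hs
    rcases eq_or_ne n 0 with hn | hn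
    · simp only [hDfun_def, if_pos hn, hn, iteratedDeriv_zero]
      exact hφt_eq s hs
    · simp only [hDfun_def, if_neg hn]
  have hcae : AEStronglyMeasurable c ((volume : Measure (Fin n → ℝ)).restrict B) := by
    have hmeasver : Measurable (fun u : Fin n → ℝ => Dfun (∑ i, ψt (u i)) * ∏ i, ψt' (u i)) :=
      (hDmeas.comp (Finset.measurable_sum _ fun i _ =>
          hψt_meas.comp (measurable_pi_apply i))).mul
        (Finset.measurable_prod _ fun i _ => hψt'_meas.comp (measurable_pi_apply i))
    refine hmeasver.aestronglyMeasurable.congr ?_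
    rw [Filter.EventuallyEq, ae_restrict_iff' hB]
    refine Filter.Eventually.of_forall fun u hu => ?_
    have hui : ∀ i, u i ∈ Set.Ioo (0:ℝ) 1 := fun i => hBsub hu i trivial
    have h1 : (∑ i, ψt (u i)) = ∑ i, ψ (u i) :=
      Finset.sum_congr rfl fun i _ => hψt_eq _ (hui i)
    have h2 : (∏ i, ψt' (u i)) = ∏ i, ψ' (u i) :=
      Finset.prod_congr rfl fun i _ => hψt'_eq _ (hui i)
    have hsnn : 0 ≤ ∑ i, ψ (u i) :=
      Finset.sum_nonneg fun i _ => hψ_nonneg _ ⟨(hui i).1, (hui i).2.le⟩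
    rw [h1, h2, hDeq _ hsnn]
  have hne : (∫⁻ u in B, ENNReal.ofReal (c u) ∂(volume : Measure (Fin n → ℝ))) ≠ ⊤ := by
    rw [← hP3]
    exact measure_ne_top P _
  rw [hP3, integral_eq_lintegral_of_nonneg_ae
    ((ae_restrict_iff' hB).mpr (Filter.Eventually.of_forall hcnn)) hcae,
    ENNReal.ofReal_toReal hne]
end

section
/- Define k_AK : ℝ → [0,∞] by k_AK(s) = ∑_{i=1}^{n} ∫_{ℝ^{n−1}} f(y₁, …, y_{i−1}, s − ∑_{j≠i} y_j, y_{i+1}, …, yₙ) · 1{ max_{j≠i} y_j ≤ s − ∑_{j≠i} y_j } dy_{−i}, where dy_{−i} denotes integration over all coordinates except the i-th. Then k_AK is a probability density of the sum S = X₁ + ⋯ + Xₙ: for every s ∈ ℝ, μ({x ∈ ℝⁿ : x₁ + ⋯ + xₙ ≤ s}) = ∫_{−∞}^{s} k_AK(t) dt. (This shows the Asmussen–Kroese density estimator is unbiased.) -/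
open MeasureTheory

private lemma AK_sum_split {n : ℕ} (i : Fin n) (x : Fin n → ℝ) :
    ∑ j, x j = x i + ∑ j : {j : Fin n // j ≠ i}, x j := by
  classical
  rw [← Finset.sum_subtype (Finset.univ.erase i)
      (fun j => by simp [Finset.mem_erase]) x,
    Finset.add_sum_erase _ x (Finset.mem_univ i)]

private noncomputable def AKeqv (n : ℕ) (i : Fin n) :
    (Fin n → ℝ) ≃ᵐ ℝ × ({j : Fin n // j ≠ i} → ℝ) :=
  (MeasurableEquiv.piEquivPiSubtypeProd (fun _ : Fin n => ℝ) (fun j => j = i)).trans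
    ((MeasurableEquiv.funUnique {j : Fin n // j = i} ℝ).prodCongr (.refl _))

private lemma AKeqv_symm {n : ℕ} (i : Fin n) (u : ℝ) (y : {j : Fin n // j ≠ i} → ℝ) :
    (AKeqv n i).symm (u, y) = fun j => if hj : j = i then u else y ⟨j, hj⟩ := rfl

private lemma AKeqv_mp (n : ℕ) (i : Fin n) : MeasurePreserving (AKeqv n i) volume volume := by
  have h1 := volume_preserving_piEquivPiSubtypeProd (fun _ : Fin n => ℝ) (fun j => j = i)
  have h2 := (volume_preserving_funUnique {j : Fin n // j = i} ℝ).prod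
      (MeasurePreserving.id (volume : Measure ({j : Fin n // j ≠ i} → ℝ)))
  rw [← Measure.volume_eq_prod] at h2
  have hF : (Subtype.fintype fun j : Fin n => j = i)
      = (Unique.fintype : Fintype {j : Fin n // j = i}) := Subsingleton.elim _ _
  rw [hF] at h1
  exact h2.comp h1

private lemma AK_sum_meas {n : ℕ} (i : Fin n) :
    Measurable fun y : {j : Fin n // j ≠ i} → ℝ => ∑ j', y j' :=
  Finset.measurable_sum _ fun j _ => measurable_pi_apply j

private lemma AK_cond_meas {n : ℕ} (i : Fin n) (t : ℝ) :
    MeasurableSet {y : {j : Fin n // j ≠ i} → ℝ | ∀ j, y j ≤ t - ∑ j', y j'} := by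
  rw [Set.setOf_forall]
  exact MeasurableSet.iInter fun j =>
    measurableSet_le (measurable_pi_apply j) (measurable_const.sub (AK_sum_meas i))

private lemma AK_slice {n : ℕ} {f : (Fin n → ℝ) → ℝ} (hf : Measurable f) (i : Fin n) (s : ℝ) :
    ∫⁻ x in {x : Fin n → ℝ | (∀ j, x j ≤ x i) ∧ ∑ j, x j ≤ s}, ENNReal.ofReal (f x)
      = ∫⁻ t in Set.Iic s,
          ∫⁻ y in {y : {j : Fin n // j ≠ i} → ℝ | ∀ j, y j ≤ t - ∑ j', y j'},
            ENNReal.ofReal (f (fun j : Fin n =>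
              if hj : j = i then t - ∑ j', y j' else y ⟨j, hj⟩)) := by
  classical
  set D : (Fin n → ℝ) → ENNReal := fun x => ENNReal.ofReal (f x) with hD
  have hDm : Measurable D := hf.ennreal_ofReal
  set A : Set (Fin n → ℝ) := {x | (∀ j, x j ≤ x i) ∧ ∑ j, x j ≤ s} with hA
  have hAm : MeasurableSet A := by
    rw [hA, Set.setOf_and]
    refine MeasurableSet.inter ?_
      (measurableSet_le (Finset.measurable_sum _ fun j _ => measurable_pi_apply j)
        measurable_const)
    rw [Set.setOf_forall]
    exact MeasurableSet.iInter fun j =>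
      measurableSet_le (measurable_pi_apply j) (measurable_pi_apply i)
  set F : ℝ × ({j : Fin n // j ≠ i} → ℝ) → ENNReal :=
    fun p => A.indicator D ((AKeqv n i).symm p) with hF
  have hFm : Measurable F := (hDm.indicator hAm).comp (AKeqv n i).symm.measurable
  have hFeq : ∀ (u : ℝ) (y : {j : Fin n // j ≠ i} → ℝ),
      F (u, y) = if (∀ j : {j : Fin n // j ≠ i}, y j ≤ u) ∧ u + ∑ j', y j' ≤ s
        then D (fun j => if hj : j = i then u else y ⟨j, hj⟩) else 0 := by
    intro u y
    have hsum : (∑ j, if hj : j = i then u else y ⟨j, hj⟩) = u + ∑ j', y j' := by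
      rw [AK_sum_split i (fun j => if hj : j = i then u else y ⟨j, hj⟩)]
      congr 1
      · exact dif_pos rfl
      · exact Finset.sum_congr rfl fun j _ => dif_neg j.2
    show A.indicator D ((AKeqv n i).symm (u, y)) = _
    rw [AKeqv_symm, Set.indicator_apply]
    refine if_congr ?_ rfl rfl
    simp only [hA, Set.mem_setOf_eq]
    rw [dif_pos trivial, hsum]
    constructor
    · rintro ⟨h1, h2⟩
      refine ⟨fun j => ?_, h2⟩
      have := h1 j.1
      rwa [dif_neg j.2] at this
    · rintro ⟨h1, h2⟩
      refine ⟨fun j => ?_, h2⟩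
      by_cases hj : j = i
      · rw [dif_pos hj]
      · rw [dif_neg hj]
        exact h1 ⟨j, hj⟩
  calc ∫⁻ x in A, D x
      = ∫⁻ x, A.indicator D x := (lintegral_indicator hAm D).symm
    _ = ∫⁻ p, F p := (((AKeqv_mp n i).symm (AKeqv n i)).lintegral_comp
        (hDm.indicator hAm)).symm
    _ = ∫⁻ u, ∫⁻ y, F (u, y) := by
        rw [Measure.volume_eq_prod]
        exact lintegral_prod F hFm.aemeasurable
    _ = ∫⁻ y, ∫⁻ u, F (u, y) := lintegral_lintegral_swap hFm.aemeasurable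
    _ = ∫⁻ y, ∫⁻ t, F (t - ∑ j', y j', y) := by
        refine lintegral_congr fun y => ?_
        simp_rw [sub_eq_add_neg]
        exact (lintegral_add_right_eq_self (fun u => F (u, y)) (-∑ j', y j')).symm
    _ = ∫⁻ t, ∫⁻ y, F (t - ∑ j', y j', y) := by
        have hGm : Measurable fun q : ({j : Fin n // j ≠ i} → ℝ) × ℝ =>
            F (q.2 - ∑ j', q.1 j', q.1) :=
          hFm.comp ((measurable_snd.sub ((AK_sum_meas i).comp measurable_fst)).prodMk
            measurable_fst)
        exact lintegral_lintegral_swap hGm.aemeasurable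
    _ = ∫⁻ t, Set.indicator (Set.Iic s) (fun t =>
          ∫⁻ y in {y : {j : Fin n // j ≠ i} → ℝ | ∀ j, y j ≤ t - ∑ j', y j'},
            D (fun j : Fin n => if hj : j = i then t - ∑ j', y j' else y ⟨j, hj⟩)) t := by
        refine lintegral_congr fun t => ?_
        by_cases ht : t ≤ s
        · rw [Set.indicator_of_mem (Set.mem_Iic.mpr ht), ← lintegral_indicator (AK_cond_meas i t)]
          refine lintegral_congr fun y => ?_
          rw [hFeq, Set.indicator_apply]
          refine if_congr ?_ rfl rfl
          simp [sub_add_cancel, ht]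
        · rw [Set.indicator_of_notMem (by simpa using ht)]
          have hz : ∀ y : {j : Fin n // j ≠ i} → ℝ, F (t - ∑ j', y j', y) = 0 := by
            intro y
            rw [hFeq, if_neg]
            rintro ⟨-, h2⟩
            rw [sub_add_cancel] at h2
            exact ht h2
          simp [hz]
    _ = ∫⁻ t in Set.Iic s,
          ∫⁻ y in {y : {j : Fin n // j ≠ i} → ℝ | ∀ j, y j ≤ t - ∑ j', y j'},
            D (fun j : Fin n => if hj : j = i then t - ∑ j', y j' else y ⟨j, hj⟩) :=
        lintegral_indicator measurableSet_Iic _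

private lemma AK_g_meas {n : ℕ} {f : (Fin n → ℝ) → ℝ} (hf : Measurable f) (i : Fin n) :
    Measurable fun t : ℝ =>
      ∫⁻ y in {y : {j : Fin n // j ≠ i} → ℝ | ∀ j, y j ≤ t - ∑ j', y j'},
        ENNReal.ofReal (f (fun j : Fin n =>
          if hj : j = i then t - ∑ j', y j' else y ⟨j, hj⟩)) := by
  classical
  have hHm : Measurable (fun q : ℝ × ({j : Fin n // j ≠ i} → ℝ) =>
      Set.indicator {q : ℝ × ({j : Fin n // j ≠ i} → ℝ) | ∀ j, q.2 j ≤ q.1 - ∑ j', q.2 j'}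
        (fun q => ENNReal.ofReal (f ((AKeqv n i).symm (q.1 - ∑ j', q.2 j', q.2)))) q) := by
    refine Measurable.indicator ?_ ?_
    · exact hf.ennreal_ofReal.comp ((AKeqv n i).symm.measurable.comp
        ((measurable_fst.sub ((AK_sum_meas i).comp measurable_snd)).prodMk measurable_snd))
    · rw [Set.setOf_forall]
      exact MeasurableSet.iInter fun j =>
        measurableSet_le (measurable_snd.eval)
          (measurable_fst.sub ((AK_sum_meas i).comp measurable_snd))
  have key : (fun t : ℝ =>
      ∫⁻ y in {y : {j : Fin n // j ≠ i} → ℝ | ∀ j, y j ≤ t - ∑ j', y j'},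
        ENNReal.ofReal (f (fun j : Fin n =>
          if hj : j = i then t - ∑ j', y j' else y ⟨j, hj⟩)))
      = fun t : ℝ => ∫⁻ y,
          Set.indicator {q : ℝ × ({j : Fin n // j ≠ i} → ℝ) | ∀ j, q.2 j ≤ q.1 - ∑ j', q.2 j'}
            (fun q => ENNReal.ofReal (f ((AKeqv n i).symm (q.1 - ∑ j', q.2 j', q.2)))) (t, y) := by
    funext t
    rw [← lintegral_indicator (AK_cond_meas i t)]
    refine lintegral_congr fun y => ?_
    by_cases hy : y ∈ {y : {j : Fin n // j ≠ i} → ℝ | ∀ j, y j ≤ t - ∑ j', y j'}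
    · rw [Set.indicator_of_mem hy, Set.indicator_of_mem (show (t, y) ∈ _ from hy), AKeqv_symm]
    · rw [Set.indicator_of_notMem hy, Set.indicator_of_notMem (show (t, y) ∉ _ from hy)]
  rw [key]
  exact Measurable.lintegral_prod_right hHm

/-- Let `n ≥ 2`, let `f` be a probability density on `ℝⁿ` and `μ` the
law of `X ∼ f`.  Define `k_AK : ℝ → [0,∞]` by
`k_AK(s) = ∑ᵢ ∫_{ℝⁿ⁻¹} f(y with value s - ∑_{j≠i} y_j in slot i) · 1{max_{j≠i} y_j ≤ s - ∑_{j≠i} y_j} dy_{-i}`.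
Then `k_AK` is a probability density of `S = X₁ + ⋯ + Xₙ`: for every `s`,
`μ{x : ∑ xᵢ ≤ s} = ∫_{-∞}^s k_AK(t) dt`.  (Unbiasedness of the Asmussen–Kroese
density estimator.) -/
theorem asmussenKroese_density_unbiased
    (n : ℕ) (hn : 2 ≤ n)
    (f : (Fin n → ℝ) → ℝ)
    (hf_nonneg : ∀ x, 0 ≤ f x)
    (hf_meas : Measurable f)
    (hf_prob : ∫ x, f x = 1)
    (μ : Measure (Fin n → ℝ))
    (hμ : μ = volume.withDensity (fun x => ENNReal.ofReal (f x)))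
    (kAK : ℝ → ENNReal)
    (hkAK : ∀ s : ℝ, kAK s = ∑ i : Fin n,
      ∫⁻ y in {y : {j : Fin n // j ≠ i} → ℝ | ∀ j, y j ≤ s - ∑ j', y j'},
        ENNReal.ofReal (f (fun j : Fin n =>
          if hj : j = i then s - ∑ j', y j' else y ⟨j, hj⟩))) :
    ∀ s : ℝ, μ {x | ∑ i, x i ≤ s} = ∫⁻ t in Set.Iic s, kAK t := by
  classical
  subst hμ
  intro s
  have hDm : Measurable fun x : Fin n → ℝ => ENNReal.ofReal (f x) := hf_meas.ennreal_ofReal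
  have hsum : Measurable fun x : Fin n → ℝ => ∑ j, x j :=
    Finset.measurable_sum _ fun j _ => measurable_pi_apply j
  have hB : MeasurableSet {x : Fin n → ℝ | ∑ i, x i ≤ s} :=
    measurableSet_le hsum measurable_const
  have hA : ∀ i : Fin n,
      MeasurableSet {x : Fin n → ℝ | (∀ j, x j ≤ x i) ∧ ∑ j, x j ≤ s} := by
    intro i
    rw [Set.setOf_and]
    refine MeasurableSet.inter ?_ (measurableSet_le hsum measurable_const)
    rw [Set.setOf_forall]
    exact MeasurableSet.iInter fun j =>
      measurableSet_le (measurable_pi_apply j) (measurable_pi_apply i)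
  have hpair : ∀ a b : Fin n, a ≠ b → volume {x : Fin n → ℝ | x a = x b} = 0 := by
    intro a b hab
    have hker : {x : Fin n → ℝ | x a = x b}
        = (LinearMap.ker ((LinearMap.proj a : (Fin n → ℝ) →ₗ[ℝ] ℝ) - LinearMap.proj b) :
            Set (Fin n → ℝ)) := by
      ext x
      simp [LinearMap.mem_ker, sub_eq_zero]
    rw [hker]
    apply Measure.addHaar_submodule
    intro htop
    have h1 : Pi.single a (1 : ℝ) ∈
        LinearMap.ker ((LinearMap.proj a : (Fin n → ℝ) →ₗ[ℝ] ℝ) - LinearMap.proj b) := by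
      rw [htop]; trivial
    simp only [LinearMap.mem_ker, LinearMap.sub_apply, LinearMap.proj_apply] at h1
    rw [Pi.single_eq_same, Pi.single_eq_of_ne (Ne.symm hab)] at h1
    norm_num at h1
  have hT : volume {x : Fin n → ℝ | ∃ a b : Fin n, a ≠ b ∧ x a = x b} = 0 := by
    have hsub : {x : Fin n → ℝ | ∃ a b : Fin n, a ≠ b ∧ x a = x b}
        ⊆ ⋃ (a : Fin n) (b : Fin n), {x : Fin n → ℝ | a ≠ b ∧ x a = x b} := by
      rintro x ⟨a, b, hab, hx⟩
      exact Set.mem_iUnion.2 ⟨a, Set.mem_iUnion.2 ⟨b, ⟨hab, hx⟩⟩⟩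
    refine measure_mono_null hsub
      (measure_iUnion_null fun a => measure_iUnion_null fun b => ?_)
    by_cases hab : a = b
    · have : {x : Fin n → ℝ | a ≠ b ∧ x a = x b} = ∅ := by ext x; simp [hab]
      simp [this]
    · have : {x : Fin n → ℝ | a ≠ b ∧ x a = x b} = {x | x a = x b} := by ext x; simp [hab]
      rw [this]
      exact hpair a b hab
  have hae : ∀ᵐ x : Fin n → ℝ,
      Set.indicator {x : Fin n → ℝ | ∑ i, x i ≤ s} (fun x => ENNReal.ofReal (f x)) x
      = ∑ i : Fin n, Set.indicator {x : Fin n → ℝ | (∀ j, x j ≤ x i) ∧ ∑ j, x j ≤ s}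
          (fun x => ENNReal.ofReal (f x)) x := by
    filter_upwards [measure_eq_zero_iff_ae_notMem.1 hT] with x hx
    by_cases hxB : x ∈ {x : Fin n → ℝ | ∑ i, x i ≤ s}
    · rw [Set.indicator_of_mem hxB]
      have hne : (Finset.univ : Finset (Fin n)).Nonempty :=
        ⟨⟨0, by omega⟩, Finset.mem_univ _⟩
      obtain ⟨i₀, -, hmax⟩ := Finset.exists_max_image Finset.univ x hne
      rw [Finset.sum_eq_single_of_mem i₀ (Finset.mem_univ i₀)]
      · rw [Set.indicator_of_mem]
        exact ⟨fun j => hmax j (Finset.mem_univ j), hxB⟩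
      · intro j _ hj
        refine Set.indicator_of_notMem (fun hmem => ?_) _
        exact hx ⟨j, i₀, hj, le_antisymm (hmax j (Finset.mem_univ j)) (hmem.1 i₀)⟩
    · rw [Set.indicator_of_notMem hxB]
      exact (Finset.sum_eq_zero fun j _ =>
        Set.indicator_of_notMem (fun hmem => hxB hmem.2) _).symm
  rw [withDensity_apply _ hB]
  calc ∫⁻ x in {x : Fin n → ℝ | ∑ i, x i ≤ s}, ENNReal.ofReal (f x)
      = ∫⁻ x, Set.indicator {x : Fin n → ℝ | ∑ i, x i ≤ s}
          (fun x => ENNReal.ofReal (f x)) x := (lintegral_indicator hB _).symm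
    _ = ∫⁻ x, ∑ i : Fin n, Set.indicator {x : Fin n → ℝ | (∀ j, x j ≤ x i) ∧ ∑ j, x j ≤ s}
          (fun x => ENNReal.ofReal (f x)) x := lintegral_congr_ae hae
    _ = ∑ i : Fin n, ∫⁻ x, Set.indicator {x : Fin n → ℝ | (∀ j, x j ≤ x i) ∧ ∑ j, x j ≤ s}
          (fun x => ENNReal.ofReal (f x)) x :=
        lintegral_finset_sum _ fun i _ => hDm.indicator (hA i)
    _ = ∑ i : Fin n, ∫⁻ x in {x : Fin n → ℝ | (∀ j, x j ≤ x i) ∧ ∑ j, x j ≤ s},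
          ENNReal.ofReal (f x) :=
        Finset.sum_congr rfl fun i _ => lintegral_indicator (hA i) _
    _ = ∑ i : Fin n, ∫⁻ t in Set.Iic s,
          ∫⁻ y in {y : {j : Fin n // j ≠ i} → ℝ | ∀ j, y j ≤ t - ∑ j', y j'},
            ENNReal.ofReal (f (fun j : Fin n =>
              if hj : j = i then t - ∑ j', y j' else y ⟨j, hj⟩)) :=
        Finset.sum_congr rfl fun i _ => AK_slice hf_meas i s
    _ = ∫⁻ t in Set.Iic s, ∑ i : Fin n,
          ∫⁻ y in {y : {j : Fin n // j ≠ i} → ℝ | ∀ j, y j ≤ t - ∑ j', y j'},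
            ENNReal.ofReal (f (fun j : Fin n =>
              if hj : j = i then t - ∑ j', y j' else y ⟨j, hj⟩)) :=
        (lintegral_finset_sum _ fun i _ => AK_g_meas hf_meas i).symm
    _ = ∫⁻ t in Set.Iic s, kAK t := lintegral_congr fun t => (hkAK t).symm
end
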